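/- arXiv:1510.02075 — 7 statements merged into one kernel-verified Lean document; each statement's English description precedes it below -/
import Mathlib

section
/- Let G be a cubic graph and L its colored line graph. A cyclic sequence of edges C = (e_1, e_2, ..., e_k) of G forms a rainbow cycle in L if and only if C is a cycle in G (i.e., the e_i are the consecutive edges of a cycle of G). -/
open scoped Classical

noncomputable section

/-- The degree of a vertex: the number of its neighbors. -/
noncomputable def vdeg {V : Type*} (G : SimpleGraph V) (x : V) : ℕ :=
  (G.neighborSet x).ncard

/-- The line graph of `G`, with vertex set the edges of `G` (realized inside `Sym2 V`;
non-edges of `G` are isolated vertices): two edges of `G` are adjacent iff they are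
distinct and share an endpoint in `G`. -/
def lineG {V : Type*} (G : SimpleGraph V) : SimpleGraph (Sym2 V) where
  Adj e f := e ≠ f ∧ e ∈ G.edgeSet ∧ f ∈ G.edgeSet ∧ ∃ v : V, v ∈ e ∧ v ∈ f
  symm := by
    constructor
    rintro e f ⟨hne, he, hf, v, hv1, hv2⟩
    exact ⟨hne.symm, hf, he, v, hv2, hv1⟩
  loopless := by
    constructor
    rintro e ⟨hne, -⟩
    exact hne rfl

/-- Two edges of the line graph have the same color iff there is a vertex of `G`
(the color) belonging to all the `G`-edges involved: the color of the line-graph edge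
`{e, f}` is the common endpoint of `e` and `f` in `G`. -/
def sameLColor {V : Type*} (d d' : Sym2 (Sym2 V)) : Prop :=
  ∃ v : V, (∀ e ∈ d, v ∈ e) ∧ ∀ e ∈ d', v ∈ e

open Fin.NatCast

section Aux
open SimpleGraph
variable {V : Type*} {G : SimpleGraph V}

private lemma aux_walk_edges_getElem {u v : V} (p : G.Walk u v) (i : ℕ)
    (hi : i < p.edges.length) :
    p.edges[i] = s(p.getVert i, p.getVert (i+1)) := by
  induction p generalizing i with
  | nil => simp at hi
  | cons h q ih =>
    match i with
    | 0 => simp [Walk.getVert_cons_succ, Walk.getVert_zero]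
    | i+1 =>
      simp only [Walk.edges_cons, List.getElem_cons_succ, Walk.getVert_cons_succ]
      exact ih i (by simpa using hi)

private lemma aux_walk_support_getElem {u v : V} (p : G.Walk u v) (i : ℕ)
    (hi : i < p.support.length) :
    p.support[i] = p.getVert i := by
  induction p generalizing i with
  | nil =>
    simp only [Walk.support_nil, List.length_singleton] at hi
    interval_cases i
    rfl
  | cons h q ih =>
    match i with
    | 0 => rfl
    | i+1 =>
      simp only [Walk.support_cons, List.getElem_cons_succ, Walk.getVert_cons_succ]
      exact ih i (by simpa using hi)

private lemma aux_ofFn_eq_range_map {α : Type*} {n : ℕ} [NeZero n] (g : Fin n → α) :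
    List.ofFn g = (List.range n).map (fun j : ℕ => g (↑j : Fin n)) := by
  apply List.ext_getElem (by simp)
  intro i h1 h2
  simp only [List.getElem_ofFn, List.getElem_map, List.getElem_range]
  congr 1
  ext
  simp [Fin.val_natCast, Nat.mod_eq_of_lt (by simpa using h1)]

private def auxMkWalk (f : ℕ → V) (h : ∀ i, G.Adj (f i) (f (i+1))) :
    (a n : ℕ) → G.Walk (f a) (f (a + n))
  | _, 0 => Walk.nil
  | a, n+1 => Walk.cons (h a) ((auxMkWalk f h (a+1) n).copy rfl (congrArg f (by omega)))

private lemma auxMkWalk_edges (f : ℕ → V) (h : ∀ i, G.Adj (f i) (f (i+1))) (a n : ℕ) :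
    (auxMkWalk (G := G) f h a n).edges
      = (List.range n).map (fun j => s(f (a+j), f (a+j+1))) := by
  induction n generalizing a with
  | zero => rfl
  | succ n ih =>
    rw [List.range_succ_eq_map]
    simp only [auxMkWalk, Walk.edges_cons, Walk.edges_copy, ih, List.map_cons, List.map_map]
    refine congrArg₂ _ (by norm_num) ?_
    apply List.map_congr_left
    intro j _
    have h1 : a + 1 + j = a + Nat.succ j := by omega
    simp [Function.comp_apply, h1]

private lemma auxMkWalk_support (f : ℕ → V) (h : ∀ i, G.Adj (f i) (f (i+1))) (a n : ℕ) :
    (auxMkWalk (G := G) f h a n).support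
      = (List.range (n+1)).map (fun j => f (a+j)) := by
  induction n generalizing a with
  | zero => simp [auxMkWalk, List.range_succ]
  | succ n ih =>
    rw [List.range_succ_eq_map (n := n+1)]
    simp only [auxMkWalk, Walk.support_cons, Walk.support_copy, ih, List.map_cons, List.map_map]
    refine congrArg₂ _ (by norm_num) ?_
    apply List.map_congr_left
    intro j _
    have h1 : a + 1 + j = a + Nat.succ j := by omega
    simp [Function.comp_apply, h1]

end Aux

/-- A cyclic sequence of edges `e₀, …, e_{k+2}` of a cubic graph `G` forms a rainbow
cycle in the colored line graph `L(G)` (the `e i` are pairwise distinct, consecutive ones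
are adjacent in `L(G)`, and no two edges of the resulting cycle of `L(G)` have the same
color) if and only if the `e i` are the consecutive edges of a cycle of `G`. -/
theorem rainbow_cycle_in_lineGraph_iff_cycle {V : Type*} [Fintype V] [DecidableEq V]
    (G : SimpleGraph V) (hcubic : ∀ v, vdeg G v = 3)
    (k : ℕ) (e : Fin (k + 3) → Sym2 V) (he : ∀ i, e i ∈ G.edgeSet) :
    (Function.Injective e ∧ (∀ i, (lineG G).Adj (e i) (e (i + 1))) ∧
        ∀ i j : Fin (k + 3), i ≠ j →
          ¬ sameLColor s(e i, e (i + 1)) s(e j, e (j + 1))) ↔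
      ∃ (u : V) (w : G.Walk u u), w.IsCycle ∧ w.edges = List.ofFn e := by
  haveI : NeZero (k+3) := ⟨by omega⟩
  have hiv : ∀ i : Fin (k+3),
      ((i+1 : Fin (k+3)).val = 0 ∧ i.val = k+2) ∨
      ((i+1 : Fin (k+3)).val = i.val + 1 ∧ i.val < k+2) := by
    intro i
    have hlt := i.isLt
    have h0 : (i+1 : Fin (k+3)).val = (i.val + 1) % (k+3) := by
      rw [Fin.add_def, Fin.val_one', Nat.mod_eq_of_lt (show 1 < k+3 by omega)]
    rcases Nat.lt_or_ge (i.val+1) (k+3) with h | h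
    · right
      rw [h0, Nat.mod_eq_of_lt h]
      omega
    · left
      have h1 : i.val + 1 = k+3 := by omega
      rw [h0, h1, Nat.mod_self]
      omega
  have hne1 : ∀ i : Fin (k+3), i ≠ i + 1 := by
    intro i h
    have := congrArg Fin.val h
    rcases hiv i with ⟨h0, hk⟩ | ⟨h0, hk⟩ <;> omega
  constructor
  · rintro ⟨hinj, hadj, hrb⟩
    have hcom : ∀ i : Fin (k+3), ∃ x : V, x ∈ e (i-1) ∧ x ∈ e i := by
      intro i
      obtain ⟨-, -, -, x, hx1, hx2⟩ := hadj (i-1)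
      exact ⟨x, hx1, by rwa [sub_add_cancel] at hx2⟩
    choose v hv1 hv2 using hcom
    have hvinj : Function.Injective v := by
      intro i j hij
      by_contra hne
      have hne' : i - 1 ≠ j - 1 := fun h => hne (by
        have h2 := congrArg (· + 1) h
        simpa [sub_add_cancel] using h2)
      refine hrb (i-1) (j-1) hne' ⟨v i, ?_, ?_⟩
      · intro f hf
        rcases Sym2.mem_iff.mp hf with rfl | rfl
        · exact hv1 i
        · rw [sub_add_cancel]; exact hv2 i
      · intro f hf
        rcases Sym2.mem_iff.mp hf with rfl | rfl
        · rw [hij]; exact hv1 j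
        · rw [sub_add_cancel, hij]; exact hv2 j
    have hee : ∀ i : Fin (k+3), e i = s(v i, v (i+1)) := by
      intro i
      have hne : v i ≠ v (i+1) := fun h => hne1 i (hvinj h)
      refine (Sym2.mem_and_mem_iff hne).mp ⟨hv2 i, ?_⟩
      have h2 := hv1 (i+1)
      rwa [add_sub_cancel_right] at h2
    have hadjv : ∀ i : Fin (k+3), G.Adj (v i) (v (i+1)) := by
      intro i
      have h1 := he i
      rw [hee i, SimpleGraph.mem_edgeSet] at h1
      exact h1
    set f : ℕ → V := fun n => v (↑n : Fin (k+3)) with hfdef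
    have hcast : ∀ n : ℕ, ((n+1 : ℕ) : Fin (k+3)) = (↑n : Fin (k+3)) + 1 := by
      intro n; push_cast; ring
    have hadjf : ∀ n : ℕ, G.Adj (f n) (f (n+1)) := by
      intro n
      simpa [hfdef, hcast n] using hadjv (↑n : Fin (k+3))
    have hend : f (0 + (k+3)) = f 0 := by
      simp [hfdef, Fin.natCast_self]
    set w : G.Walk (f 0) (f 0) := (auxMkWalk f hadjf 0 (k+3)).copy rfl hend with hwdef
    have hedges : w.edges = List.ofFn e := by
      rw [hwdef, SimpleGraph.Walk.edges_copy, auxMkWalk_edges, aux_ofFn_eq_range_map]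
      apply List.map_congr_left
      intro j hj
      rw [List.mem_range] at hj
      have h1 : e (↑j : Fin (k+3)) = s(v ↑j, v (↑j + 1)) := hee _
      rw [h1]
      simp [hfdef, hcast j]
    have hsupp : w.support = (List.range (k+3+1)).map (fun j => f j) := by
      rw [hwdef, SimpleGraph.Walk.support_copy, auxMkWalk_support]
      simp
    refine ⟨f 0, w, ⟨⟨⟨?_⟩, ?_⟩, ?_⟩, hedges⟩
    · rw [hedges]
      exact List.nodup_ofFn.mpr hinj
    · intro h
      rw [h] at hedges
      have h2 := congrArg List.length hedges
      simp at h2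
    · rw [hsupp, List.range_succ_eq_map, List.map_cons, List.map_map, List.tail_cons]
      refine List.Nodup.map_on ?_ List.nodup_range
      intro a ha b hb hab
      rw [List.mem_range] at ha hb
      simp only [Function.comp_apply, Nat.succ_eq_add_one, hfdef] at hab
      have h2 := hvinj hab
      have hval := congrArg Fin.val h2
      rw [Fin.val_natCast, Fin.val_natCast] at hval
      have hmq : ∀ m : ℕ, m < k+3 → (m+1) % (k+3) = if m+1 = k+3 then 0 else m+1 := by
        intro m hm
        split
        · next h => rw [h, Nat.mod_self]
        · next h => exact Nat.mod_eq_of_lt (by omega)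
      rw [hmq a ha, hmq b hb] at hval
      split_ifs at hval <;> omega
  · rintro ⟨u, w, hc, hedges⟩
    have hlen : w.length = k + 3 := by
      have h1 := congrArg List.length hedges
      rwa [SimpleGraph.Walk.length_edges, List.length_ofFn] at h1
    set p : ℕ → V := w.getVert with hpdef
    have hp0 : p (k+3) = p 0 := by
      rw [hpdef]
      rw [SimpleGraph.Walk.getVert_zero, ← hlen, SimpleGraph.Walk.getVert_length]
    have hei : ∀ i : Fin (k+3), e i = s(p i.val, p (i.val + 1)) := by
      intro i
      have hh : (i.val : ℕ) < w.edges.length := by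
        rw [SimpleGraph.Walk.length_edges, hlen]; exact i.isLt
      have h2 := aux_walk_edges_getElem w i.val hh
      simp only [hedges, List.getElem_ofFn, Fin.eta] at h2
      exact h2
    have hsupplen : w.support.length = k + 3 + 1 := by
      rw [SimpleGraph.Walk.length_support, hlen]
    have hgv : ∀ a b : ℕ, 1 ≤ a → a ≤ k+3 → 1 ≤ b → b ≤ k+3 → p a = p b → a = b := by
      intro a b ha1 ha2 hb1 hb2 hab
      have htl : w.support.tail.Nodup := hc.support_nodup
      have htl_len : w.support.tail.length = k + 3 := by
        rw [List.length_tail, hsupplen]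
        omega
      have hga : w.support.tail[a-1]'(by omega) = p a := by
        rw [List.getElem_tail, aux_walk_support_getElem w _ (by omega)]
        congr 1
        omega
      have hgb : w.support.tail[b-1]'(by omega) = p b := by
        rw [List.getElem_tail, aux_walk_support_getElem w _ (by omega)]
        congr 1
        omega
      have h2 := (htl.getElem_inj_iff).mp (hga.trans (hab.trans hgb.symm))
      omega
    have hpval : ∀ i : Fin (k+3), p ((i+1 : Fin (k+3)).val) = p (i.val + 1) := by
      intro i
      rcases hiv i with ⟨h0, hk⟩ | ⟨h0, hk⟩
      · rw [h0, show i.val + 1 = k+3 by omega, hp0]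
      · rw [h0]
    have hdiff : ∀ i : Fin (k+3), p i.val ≠ p ((i+1 : Fin (k+3)).val + 1) := by
      intro i h
      have hlt := i.isLt
      rcases hiv i with ⟨h0, hk⟩ | ⟨h0, hk⟩
      · rw [h0] at h
        have h2 := hgv i.val 1 (by omega) (by omega) (by omega) (by omega) h
        omega
      · rw [h0] at h
        rcases Nat.eq_zero_or_pos i.val with hz | hz
        · rw [hz] at h
          rw [← hp0] at h
          have h2 := hgv (k+3) (0+1+1) (by omega) (by omega) (by omega) (by omega) h
          omega
        · have h2 := hgv i.val (i.val+1+1) (by omega) (by omega) (by omega) (by omega) h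
          omega
    have hkey : ∀ (i : Fin (k+3)) (x : V), x ∈ e i → x ∈ e (i+1) → x = p (i.val + 1) := by
      intro i x hx1 hx2
      rw [hei i, Sym2.mem_iff] at hx1
      rw [hei (i+1), Sym2.mem_iff] at hx2
      rcases hx1 with rfl | rfl
      · rcases hx2 with h | h
        · rw [h, hpval i]
        · exact absurd h (hdiff i)
      · rfl
    have hinjE : Function.Injective e := by
      have h1 := hc.edges_nodup
      rw [hedges] at h1
      exact List.nodup_ofFn.mp h1
    refine ⟨hinjE, ?_, ?_⟩
    · intro i
      refine ⟨fun h => hne1 i (hinjE h), he i, he (i+1), p (i.val+1), ?_, ?_⟩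
      · rw [hei i]
        exact Sym2.mem_mk_right _ _
      · rw [hei (i+1), ← hpval i]
        exact Sym2.mem_mk_left _ _
    · rintro i j hne ⟨x, h1, h2⟩
      have hxi : x = p (i.val+1) :=
        hkey i x (h1 _ (Sym2.mem_mk_left _ _)) (h1 _ (Sym2.mem_mk_right _ _))
      have hxj : x = p (j.val+1) :=
        hkey j x (h2 _ (Sym2.mem_mk_left _ _)) (h2 _ (Sym2.mem_mk_right _ _))
      have hilt := i.isLt
      have hjlt := j.isLt
      have h3 := hgv (i.val+1) (j.val+1) (by omega) (by omega) (by omega) (by omega)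
        (hxi.symm.trans hxj)
      exact hne (Fin.ext (by omega))
end
end

section
/- Suppose G is a connected graph and H is obtained from G by contracting a triangle of G, where this triangle is not itself a block of G. If x is a cut vertex of G, then the image [x] of x under the contraction is a cut vertex of H. -/
open scoped Classical

noncomputable section

/-- `v` is a cut vertex of `G`: there are vertices `a, b ≠ v` that are connected in `G`
but every walk from `a` to `b` passes through `v` (so removing `v` disconnects them). -/
def IsCutVertex {V : Type*} (G : SimpleGraph V) (v : V) : Prop :=
  ∃ a b : V, a ≠ v ∧ b ≠ v ∧ G.Reachable a b ∧ ∀ p : G.Walk a b, v ∈ p.support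

/-- Let `H` be obtained from a connected graph `G` by contracting a triangle
`t₁ t₂ t₃` of `G` (via a surjection `f` identifying exactly the three triangle vertices,
adjacency in `H` being induced by adjacency in `G`), where the triangle is not itself a
block of `G` (there is a strictly larger 2-connected induced subgraph containing it).
If `x` is a cut vertex of `G`, then its image `f x` is a cut vertex of `H`. -/
theorem contract_triangle_cut_vertex {V W : Type*} [Fintype V] [Fintype W]
    (G : SimpleGraph V) (hG : G.Connected)
    (t₁ t₂ t₃ : V) (h12 : G.Adj t₁ t₂) (h23 : G.Adj t₂ t₃) (h13 : G.Adj t₁ t₃)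
    (H : SimpleGraph W) (f : V → W) (hsurj : Function.Surjective f)
    (hf12 : f t₁ = f t₂) (hf13 : f t₁ = f t₃)
    (hinj : ∀ x y : V, f x = f y →
      x = y ∨ (x ∈ ({t₁, t₂, t₃} : Set V) ∧ y ∈ ({t₁, t₂, t₃} : Set V)))
    (hH : ∀ a b : W, H.Adj a b ↔ a ≠ b ∧ ∃ x y : V, f x = a ∧ f y = b ∧ G.Adj x y)
    (hnotblock : ∃ S : Set V, {t₁, t₂, t₃} ⊆ S ∧ ({t₁, t₂, t₃} : Set V) ≠ S ∧
      (G.induce S).Connected ∧ ∀ w ∈ S, (G.induce (S \ {w})).Connected)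
    (x : V) (hx : IsCutVertex G x) : IsCutVertex H (f x) := by
  classical
  obtain ⟨a, b, hax, hbx, hab, hall⟩ := hx
  set T : Set V := {t₁, t₂, t₃} with hT
  -- triangle is a clique
  have hadj : ∀ u v : V, u ∈ T → v ∈ T → u ≠ v → G.Adj u v := by
    intro u v hu hv huv
    simp only [hT, Set.mem_insert_iff, Set.mem_singleton_iff] at hu hv
    rcases hu with rfl|rfl|rfl <;> rcases hv with rfl|rfl|rfl <;>
      first
      | exact absurd rfl huv
      | assumption
      | exact h12.symm
      | exact h23.symm
      | exact h13.symm
  -- short walks between fibers of f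
  have hshort : ∀ u v : V, f u = f v → ∃ q : G.Walk u v, ∀ z ∈ q.support, z = u ∨ z = v := by
    intro u v huv
    rcases hinj u v huv with rfl | ⟨hu, hv⟩
    · exact ⟨.nil, by simp⟩
    by_cases h : u = v
    · subst h; exact ⟨.nil, by simp⟩
    · refine ⟨.cons (hadj u v hu hv h) .nil, ?_⟩
      intro z hz
      simpa using hz
  -- pushforward of walks to reachability in H
  have hpush : ∀ {u v : V}, G.Walk u v → H.Reachable (f u) (f v) := by
    intro u v p
    induction p with
    | nil => exact .refl _
    | @cons u c v h p ih =>
      by_cases he : f u = f c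
      · rw [he]; exact ih
      · exact (((hH (f u) (f c)).2 ⟨he, u, c, rfl, rfl, h⟩).reachable).trans ih
  -- lift walks of H to walks of G
  have hlift : ∀ {w₁ w₂ : W} (p : H.Walk w₁ w₂) (u v : V), f u = w₁ → f v = w₂ →
      ∃ q : G.Walk u v, ∀ z ∈ q.support, f z ∈ p.support := by
    intro w₁ w₂ p
    induction p with
    | nil =>
      intro u v hu hv
      obtain ⟨q, hq⟩ := hshort u v (hu.trans hv.symm)
      refine ⟨q, fun z hz => ?_⟩
      rcases hq z hz with rfl | rfl <;> simp [hu, hv]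
    | @cons w₁ w' w₂ h p ih =>
      intro u v hu hv
      obtain ⟨hne, x', y', hx', hy', hxy⟩ := (hH _ _).1 h
      obtain ⟨q₁, hq₁⟩ := hshort u x' (by rw [hu, hx'])
      obtain ⟨q₂, hq₂⟩ := ih y' v hy' hv
      refine ⟨q₁.append (SimpleGraph.Walk.cons hxy q₂), ?_⟩
      intro z hz
      rw [SimpleGraph.Walk.mem_support_append_iff] at hz
      simp only [SimpleGraph.Walk.support_cons, List.mem_cons]
      rcases hz with hz | hz
      · rcases hq₁ z hz with rfl | rfl
        · left; exact hu
        · left; exact hx'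
      · rcases (by simpa using hz : z = x' ∨ z ∈ q₂.support) with rfl | hz'
        · left; exact hx'
        · right; exact hq₂ z hz'
  -- final assembly
  have hfinal : ∀ a' b' : V, f a' ≠ f x → f b' ≠ f x →
      (∀ p : G.Walk a' b', x ∈ p.support) → IsCutVertex H (f x) := by
    intro a' b' ha hb hall'
    refine ⟨f a', f b', ha, hb, ?_, ?_⟩
    · obtain ⟨p⟩ := hG.preconnected a' b'
      exact hpush p
    · intro p
      obtain ⟨q, hq⟩ := hlift p a' b' rfl rfl
      exact hq x (hall' q)
  by_cases hxT : x ∈ T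
  · -- x in the triangle: replace endpoints lying in the triangle using S
    obtain ⟨S, hTS, hTne, hScon, hSdel⟩ := hnotblock
    obtain ⟨s, hsS, hsT⟩ := Set.exists_of_ssubset (hTS.ssubset_of_ne hTne)
    have havoid : ∀ u v : V, u ∈ S \ {x} → v ∈ S \ {x} → ∃ q : G.Walk u v, x ∉ q.support := by
      intro u v hu hv
      obtain ⟨p⟩ := (hSdel x (hTS hxT)).preconnected ⟨u, hu⟩ ⟨v, hv⟩
      refine ⟨p.map (SimpleGraph.Embedding.induce (S \ {x})).toHom, ?_⟩
      intro hmem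
      change x ∈ (p.map (SimpleGraph.Embedding.induce (S \ {x})).toHom).support at hmem
      rw [SimpleGraph.Walk.support_map] at hmem
      obtain ⟨z, hz, hzx⟩ := List.mem_map.1 hmem
      exact z.2.2 hzx
    have hrep : ∀ u : V, u ≠ x → ∃ u' : V, u' ∉ T ∧ ∃ q : G.Walk u u', x ∉ q.support := by
      intro u hu
      by_cases huT : u ∈ T
      · refine ⟨s, hsT, havoid u s ⟨hTS huT, by simpa using hu⟩
          ⟨hsS, by simp; rintro rfl; exact hsT hxT⟩⟩
      · refine ⟨u, huT, .nil, ?_⟩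
        simp [Ne.symm hu]
    obtain ⟨a', ha'T, q₁, hq₁⟩ := hrep a hax
    obtain ⟨b', hb'T, q₂, hq₂⟩ := hrep b hbx
    refine hfinal a' b' ?_ ?_ ?_
    · intro h
      rcases hinj a' x h with rfl | ⟨h1, _⟩
      · exact ha'T hxT
      · exact ha'T h1
    · intro h
      rcases hinj b' x h with rfl | ⟨h1, _⟩
      · exact hb'T hxT
      · exact hb'T h1
    · intro p
      by_contra hxp
      have := hall (q₁.append (p.append q₂.reverse))
      rw [SimpleGraph.Walk.mem_support_append_iff,
        SimpleGraph.Walk.mem_support_append_iff,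
        SimpleGraph.Walk.support_reverse, List.mem_reverse] at this
      tauto
  · -- x not in the triangle
    refine hfinal a b ?_ ?_ hall
    · intro h
      rcases hinj a x h with rfl | ⟨_, h2⟩
      · exact hax rfl
      · exact hxT h2
    · intro h
      rcases hinj b x h with rfl | ⟨_, h2⟩
      · exact hbx rfl
      · exact hxT h2
end
end

section
/- If G is a good colored graph and R is a rainbow cycle in G, then the graph G \ R obtained by deleting the edges of R satisfies: every vertex has even degree, maximum degree at most 4, every triangle is rainbow or monochromatic, every nonisolated vertex has color degree exactly 2, and each color class spans at most three vertices. -/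
open scoped Classical

noncomputable section

/-- The color degree of a vertex: the number of distinct colors on its incident edges. -/
noncomputable def colorDeg {V C : Type*} (G : SimpleGraph V) (c : Sym2 V → C) (x : V) : ℕ :=
  {α : C | ∃ y, G.Adj x y ∧ c s(x, y) = α}.ncard

/-- Every triangle of `G` is monochromatic or rainbow. -/
def TriCond {V C : Type*} (G : SimpleGraph V) (c : Sym2 V → C) : Prop :=
  ∀ x y z : V, G.Adj x y → G.Adj y z → G.Adj x z →
    (c s(x, y) = c s(y, z) ∧ c s(y, z) = c s(x, z)) ∨
    (c s(x, y) ≠ c s(y, z) ∧ c s(y, z) ≠ c s(x, z) ∧ c s(x, y) ≠ c s(x, z))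

/-- `v` is a cut vertex of Type X: it has degree 4, and there are pseudoblocks at `v`
(vertex sets `A`, `B` covering `V` with `A ∩ B = {v}` and every edge lying within `A` or
within `B`) such that `v` has two edges into each pseudoblock, the two edges into each
pseudoblock having the same color. (Such a vertex is automatically a cut vertex, since
any path between the two sides must pass through `v`.) -/
def IsTypeX {V C : Type*} (G : SimpleGraph V) (c : Sym2 V → C) (v : V) : Prop :=
  vdeg G v = 4 ∧
  ∃ A B : Set V, A ∪ B = Set.univ ∧ A ∩ B = {v} ∧
    (∀ e ∈ G.edgeSet, (∀ x ∈ e, x ∈ A) ∨ (∀ x ∈ e, x ∈ B)) ∧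
    (∃ a₁ a₂ : V, a₁ ≠ a₂ ∧ a₁ ∈ A ∧ a₂ ∈ A ∧ G.Adj v a₁ ∧ G.Adj v a₂ ∧
      c s(v, a₁) = c s(v, a₂)) ∧
    (∃ b₁ b₂ : V, b₁ ≠ b₂ ∧ b₁ ∈ B ∧ b₂ ∈ B ∧ G.Adj v b₁ ∧ G.Adj v b₂ ∧
      c s(v, b₁) = c s(v, b₂))

/-- Properties (1)-(5) of a good colored graph: every vertex has even degree, maximum
degree at most 4, every triangle is rainbow or monochromatic, every nonisolated vertex
has color degree exactly 2, and each color class spans at most three vertices. -/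
def IsGoodCore {V C : Type*} (G : SimpleGraph V) (c : Sym2 V → C) : Prop :=
  (∀ x, Even (vdeg G x)) ∧ (∀ x, vdeg G x ≤ 4) ∧ TriCond G c ∧
  (∀ x, vdeg G x ≠ 0 → colorDeg G c x = 2) ∧
  (∀ α : C, {x : V | ∃ y, G.Adj x y ∧ c s(x, y) = α}.ncard ≤ 3)

/-- A good colored graph: properties (1)-(5) together with (6): no cut vertex of Type X. -/
def IsGood {V C : Type*} (G : SimpleGraph V) (c : Sym2 V → C) : Prop :=
  IsGoodCore G c ∧ ∀ v, ¬ IsTypeX G c v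

section Helpers
open SimpleGraph

private lemma edge_getVert_mem {V : Type*} {G : SimpleGraph V} {a b : V}
    (p : G.Walk a b) {i : ℕ} (hi : i < p.length) :
    s(p.getVert i, p.getVert (i + 1)) ∈ p.edges := by
  induction p generalizing i with
  | nil => simp at hi
  | cons h q ih =>
    cases i with
    | zero =>
      simp [Walk.edges_cons, Walk.getVert_zero, Walk.getVert_cons_succ]
    | succ n =>
      rw [Walk.edges_cons, Walk.getVert_cons_succ, Walk.getVert_cons_succ]
      exact List.mem_cons_of_mem _ (ih (by
        rw [Walk.length_cons] at hi; omega))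

private lemma path_first_nbr_unique {V : Type*} {G : SimpleGraph V} {a b : V}
    (p : G.Walk a b) (hnd : p.support.Nodup)
    {y z : V} (hy : s(a, y) ∈ p.edges) (hz : s(a, z) ∈ p.edges) : y = z := by
  cases p with
  | nil => simp at hy
  | cons h q =>
    rename_i v
    rw [Walk.support_cons, List.nodup_cons] at hnd
    rw [Walk.edges_cons, List.mem_cons] at hy hz
    have key : ∀ w, s(a, w) = s(a, v) ∨ s(a, w) ∈ q.edges → w = v := by
      intro w hw
      rcases hw with hw | hw
      · rcases Sym2.eq_iff.mp hw with ⟨-, rfl⟩ | ⟨h1, -⟩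
        · rfl
        · exact absurd h1 h.ne
      · exact absurd (q.fst_mem_support_of_mem_edges hw) hnd.1
    rw [key y hy, key z hz]

private lemma cycle_nbrs_start {V : Type*} {G : SimpleGraph V} {x : V}
    (R' : G.Walk x x) (hR' : R'.IsCycle) :
    ∃ y₁ y₂ : V, y₁ ≠ y₂ ∧ {y | s(x, y) ∈ R'.edges} = {y₁, y₂} := by
  have hlen := hR'.three_le_length
  cases R' with
  | nil => exact absurd hR' Walk.IsCycle.not_of_nil
  | cons h p =>
    rename_i v
    have hnd : p.support.Nodup := by
      have h2 := hR'.support_nodup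
      rwa [Walk.support_cons, List.tail_cons] at h2
    have hplen : 2 ≤ p.length := by rw [Walk.length_cons] at hlen; omega
    obtain ⟨y₂, hy₂def⟩ : ∃ y₂, y₂ = p.getVert (p.length - 1) := ⟨_, rfl⟩
    have he₂ : s(x, y₂) ∈ p.edges := by
      have := edge_getVert_mem p (i := p.length - 1) (by omega)
      rw [← hy₂def] at this
      rw [show p.length - 1 + 1 = p.length by omega, Walk.getVert_length] at this
      rwa [Sym2.eq_swap]
    have hxv : s(x, v) ∉ p.edges := by
      have hnde := hR'.isCircuit.isTrail.edges_nodup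
      rw [Walk.edges_cons, List.nodup_cons] at hnde
      exact hnde.1
    have hne : v ≠ y₂ := by
      intro hEq
      exact hxv (hEq ▸ he₂)
    refine ⟨v, y₂, hne, ?_⟩
    ext y
    simp only [Set.mem_setOf_eq, Set.mem_insert_iff, Set.mem_singleton_iff]
    constructor
    · intro hy
      rw [Walk.edges_cons, List.mem_cons] at hy
      rcases hy with hy | hy
      · rcases Sym2.eq_iff.mp hy with ⟨-, rfl⟩ | ⟨h1, -⟩
        · exact Or.inl rfl
        · exact absurd h1 h.ne
      · refine Or.inr (path_first_nbr_unique p.reverse ?_ ?_ ?_)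
        · rw [Walk.support_reverse]; exact List.nodup_reverse.mpr hnd
        · rw [Walk.edges_reverse, List.mem_reverse]; exact hy
        · rw [Walk.edges_reverse, List.mem_reverse]; exact he₂
    · rintro (rfl | rfl)
      · rw [Walk.edges_cons]; exact List.mem_cons_self
      · rw [Walk.edges_cons]; exact List.mem_cons_of_mem _ he₂

private lemma cycle_nbrs {V : Type*} [DecidableEq V] {G : SimpleGraph V} {u : V}
    (R : G.Walk u u) (hR : R.IsCycle) {x : V} (hx : x ∈ R.support) :
    ∃ y₁ y₂ : V, y₁ ≠ y₂ ∧ {y | s(x, y) ∈ R.edges} = {y₁, y₂} := by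
  obtain ⟨y₁, y₂, hne, hset⟩ := cycle_nbrs_start (R.rotate x hx) (hR.rotate hx)
  refine ⟨y₁, y₂, hne, ?_⟩
  rw [← hset]
  ext y
  simp only [Set.mem_setOf_eq]
  exact ((R.rotate_edges x hx).mem_iff).symm

end Helpers

/-- If `G` is a good colored graph and `R` is a rainbow cycle in `G`, then the graph
obtained by deleting the edges of `R` satisfies properties (1)-(5) of a good colored
graph: every vertex has even degree, maximum degree at most 4, every triangle is rainbow
or monochromatic, every nonisolated vertex has color degree exactly 2, and each color
class spans at most three vertices. -/
theorem deleteRainbowCycle_isGoodCore {V C : Type*} [Fintype V] [DecidableEq V]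
    (G : SimpleGraph V) (c : Sym2 V → C) (hG : IsGood G c)
    (u : V) (R : G.Walk u u) (hR : R.IsCycle) (hrb : (R.edges.map c).Nodup) :
    IsGoodCore (G.deleteEdges {e | e ∈ R.edges}) c := by
  classical
  obtain ⟨⟨h1, h2, h3, h4, h5⟩, -⟩ := hG
  set G' := G.deleteEdges {e | e ∈ R.edges} with hG'def
  have hadj : ∀ x y : V, G'.Adj x y ↔ G.Adj x y ∧ s(x, y) ∉ R.edges := by
    intro x y
    rw [hG'def, SimpleGraph.deleteEdges_adj]
    exact Iff.rfl
  have hRadj : ∀ {x y : V}, s(x, y) ∈ R.edges → G.Adj x y :=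
    fun h => (SimpleGraph.mem_edgeSet G).mp (R.edges_subset_edgeSet h)
  have hNsub : ∀ x : V, G'.neighborSet x = G.neighborSet x \ {y | s(x, y) ∈ R.edges} := by
    intro x; ext y
    simp only [SimpleGraph.mem_neighborSet, Set.mem_diff, Set.mem_setOf_eq, hadj]
  have mult2 : ∀ x y z w : V, G.Adj x y → G.Adj x z → G.Adj x w → y ≠ z → y ≠ w → z ≠ w →
      c s(x, y) = c s(x, z) → c s(x, y) = c s(x, w) → False := by
    intro x y z w hxy hxz hxw hyz hyw hzw e1 e2
    have hsub : ({x, y, z, w} : Set V) ⊆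
        {v : V | ∃ y', G.Adj v y' ∧ c s(v, y') = c s(x, y)} := by
      intro v hv
      simp only [Set.mem_insert_iff, Set.mem_singleton_iff] at hv
      rcases hv with rfl | rfl | rfl | rfl
      · exact ⟨y, hxy, rfl⟩
      · exact ⟨x, hxy.symm, by rw [Sym2.eq_swap]⟩
      · exact ⟨x, hxz.symm, by rw [Sym2.eq_swap]; exact e1.symm⟩
      · exact ⟨x, hxw.symm, by rw [Sym2.eq_swap]; exact e2.symm⟩
    have hcard : ({x, y, z, w} : Set V).ncard = 4 := by
      rw [Set.ncard_insert_of_notMem (by simp [hxy.ne, hxz.ne, hxw.ne]) (Set.toFinite _),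
          Set.ncard_insert_of_notMem (by simp [hyz, hyw]) (Set.toFinite _),
          Set.ncard_pair hzw]
    have hle := Set.ncard_le_ncard hsub (Set.toFinite _)
    have := h5 (c s(x, y))
    omega
  have main : ∀ x : V, G'.neighborSet x = G.neighborSet x ∨
      ∃ y₁ y₂ : V, y₁ ≠ y₂ ∧ c s(x, y₁) ≠ c s(x, y₂) ∧ s(x, y₁) ∈ R.edges ∧
        s(x, y₂) ∈ R.edges ∧ {y | s(x, y) ∈ R.edges} = {y₁, y₂} ∧
        G'.neighborSet x = G.neighborSet x \ {y₁, y₂} := by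
    intro x
    by_cases hx : x ∈ R.support
    · right
      obtain ⟨y₁, y₂, hne, hRx⟩ := cycle_nbrs R hR hx
      have he₁ : s(x, y₁) ∈ R.edges := by
        have h' : y₁ ∈ ({y₁, y₂} : Set V) := Set.mem_insert _ _
        rw [← hRx] at h'; exact h'
      have he₂ : s(x, y₂) ∈ R.edges := by
        have h' : y₂ ∈ ({y₁, y₂} : Set V) := Set.mem_insert_of_mem _ rfl
        rw [← hRx] at h'; exact h'
      have hcne : c s(x, y₁) ≠ c s(x, y₂) := by
        intro hcc
        have heq := List.inj_on_of_nodup_map hrb he₁ he₂ hcc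
        rcases Sym2.eq_iff.mp heq with ⟨-, h'⟩ | ⟨-, h'⟩
        · exact hne h'
        · exact (hRadj he₁).ne h'.symm
      exact ⟨y₁, y₂, hne, hcne, he₁, he₂, hRx, by rw [hNsub x, hRx]⟩
    · left
      rw [hNsub x]
      ext y
      simp only [Set.mem_diff, Set.mem_setOf_eq]
      exact ⟨And.left, fun hy => ⟨hy, fun he => hx (R.fst_mem_support_of_mem_edges he)⟩⟩
  refine ⟨?_, ?_, ?_, ?_, ?_⟩
  · -- (1) even degrees
    intro x
    rcases main x with heq | ⟨y₁, y₂, hne, -, he₁, he₂, -, hN'⟩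
    · unfold vdeg; rw [heq]; exact h1 x
    · have hpairsub : ({y₁, y₂} : Set V) ⊆ G.neighborSet x := by
        intro y hy
        simp only [Set.mem_insert_iff, Set.mem_singleton_iff] at hy
        rcases hy with rfl | rfl
        · exact hRadj he₁
        · exact hRadj he₂
      have h2le : 2 ≤ vdeg G x := by
        unfold vdeg
        calc 2 = ({y₁, y₂} : Set V).ncard := (Set.ncard_pair hne).symm
          _ ≤ _ := Set.ncard_le_ncard hpairsub (Set.toFinite _)
      have hd : vdeg G' x = vdeg G x - 2 := by
        unfold vdeg
        rw [hN', Set.ncard_diff hpairsub (Set.toFinite _), Set.ncard_pair hne]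
      obtain ⟨r, hr⟩ := h1 x
      exact ⟨r - 1, by omega⟩
  · -- (2) max degree ≤ 4
    intro x
    rcases main x with heq | ⟨y₁, y₂, -, -, -, -, -, hN'⟩
    · unfold vdeg; rw [heq]; exact h2 x
    · unfold vdeg
      rw [hN']
      calc (G.neighborSet x \ {y₁, y₂}).ncard ≤ (G.neighborSet x).ncard :=
            Set.ncard_le_ncard Set.diff_subset (Set.toFinite _)
        _ ≤ 4 := h2 x
  · -- (3) triangle condition
    intro x y z hxy hyz hxz
    exact h3 x y z ((hadj x y).mp hxy).1 ((hadj y z).mp hyz).1 ((hadj x z).mp hxz).1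
  · -- (4) color degree
    intro x hx0
    rcases main x with heq | ⟨y₁, y₂, hne, hcne, he₁, he₂, hRx, hN'⟩
    · have hdeq : vdeg G x = vdeg G' x := by unfold vdeg; rw [heq]
      have hadj2 : ∀ y, G'.Adj x y ↔ G.Adj x y := by
        intro y
        constructor
        · exact fun h => ((hadj x y).mp h).1
        · intro h
          have h' : y ∈ G.neighborSet x := h
          rw [← heq] at h'
          exact h'
      have hcs : {α : C | ∃ y, G'.Adj x y ∧ c s(x, y) = α}
          = {α : C | ∃ y, G.Adj x y ∧ c s(x, y) = α} := by
        ext α; simp only [Set.mem_setOf_eq, hadj2]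
      unfold colorDeg
      rw [hcs]
      exact h4 x (by rw [hdeq]; exact hx0)
    · have hy₁ : G.Adj x y₁ := hRadj he₁
      have hy₂ : G.Adj x y₂ := hRadj he₂
      have hpairsub : ({y₁, y₂} : Set V) ⊆ G.neighborSet x := by
        intro y hy
        simp only [Set.mem_insert_iff, Set.mem_singleton_iff] at hy
        rcases hy with rfl | rfl
        · exact hy₁
        · exact hy₂
      have h2le : 2 ≤ (G.neighborSet x).ncard := by
        calc 2 = ({y₁, y₂} : Set V).ncard := (Set.ncard_pair hne).symm
          _ ≤ _ := Set.ncard_le_ncard hpairsub (Set.toFinite _)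
      have hd : (G'.neighborSet x).ncard = (G.neighborSet x).ncard - 2 := by
        rw [hN', Set.ncard_diff hpairsub (Set.toFinite _), Set.ncard_pair hne]
      have h44 : (G.neighborSet x).ncard = 4 := by
        obtain ⟨r, hr⟩ := h1 x
        have h2x := h2 x
        unfold vdeg at hr h2x
        have hx0' : (G'.neighborSet x).ncard ≠ 0 := hx0
        omega
      have hdne : vdeg G x ≠ 0 := by unfold vdeg; omega
      have hfin : {α : C | ∃ y, G.Adj x y ∧ c s(x, y) = α}.Finite := by
        have himg : {α : C | ∃ y, G.Adj x y ∧ c s(x, y) = α}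
            = (fun y => c s(x, y)) '' (G.neighborSet x) := by
          ext α
          simp only [Set.mem_setOf_eq, Set.mem_image, SimpleGraph.mem_neighborSet]
        rw [himg]
        exact (Set.toFinite _).image _
      have hcseq : {α : C | ∃ y, G.Adj x y ∧ c s(x, y) = α}
          = {c s(x, y₁), c s(x, y₂)} := by
        refine (Set.eq_of_subset_of_ncard_le ?_ ?_ hfin).symm
        · intro α hα
          simp only [Set.mem_insert_iff, Set.mem_singleton_iff] at hα
          rcases hα with rfl | rfl
          · exact ⟨y₁, hy₁, rfl⟩
          · exact ⟨y₂, hy₂, rfl⟩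
        · have h42 := h4 x hdne
          unfold colorDeg at h42
          rw [h42, Set.ncard_pair hcne]
      have hdiff2 : (G.neighborSet x \ {y₁, y₂}).ncard = 2 := by
        rw [Set.ncard_diff hpairsub (Set.toFinite _), Set.ncard_pair hne, h44]
      obtain ⟨z₁, z₂, hzne, hzeq⟩ := Set.ncard_eq_two.mp hdiff2
      have hz₁ : z₁ ∈ G.neighborSet x \ ({y₁, y₂} : Set V) := by
        rw [hzeq]; exact Set.mem_insert _ _
      have hz₂ : z₂ ∈ G.neighborSet x \ ({y₁, y₂} : Set V) := by
        rw [hzeq]; exact Set.mem_insert_of_mem _ rfl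
      have hadj' : ∀ z, z ∈ G.neighborSet x \ ({y₁, y₂} : Set V) → G'.Adj x z := by
        intro z hz
        rw [hadj]
        refine ⟨hz.1, fun hmem => ?_⟩
        have h' : z ∈ {y | s(x, y) ∈ R.edges} := hmem
        rw [hRx] at h'
        exact hz.2 h'
      have hcz : ∀ z, z ∈ G.neighborSet x →
          c s(x, z) = c s(x, y₁) ∨ c s(x, z) = c s(x, y₂) := by
        intro z hz
        have h' : c s(x, z) ∈ {α : C | ∃ y, G.Adj x y ∧ c s(x, y) = α} := ⟨z, hz, rfl⟩
        rw [hcseq] at h'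
        simpa using h'
      have hz₁y₁ : z₁ ≠ y₁ := fun h => hz₁.2 (by rw [h]; exact Set.mem_insert _ _)
      have hz₁y₂ : z₁ ≠ y₂ := fun h => hz₁.2 (by rw [h]; exact Set.mem_insert_of_mem _ rfl)
      have hz₂y₁ : z₂ ≠ y₁ := fun h => hz₂.2 (by rw [h]; exact Set.mem_insert _ _)
      have hz₂y₂ : z₂ ≠ y₂ := fun h => hz₂.2 (by rw [h]; exact Set.mem_insert_of_mem _ rfl)
      have hata : ∃ y, G'.Adj x y ∧ c s(x, y) = c s(x, y₁) := by
        rcases hcz z₁ hz₁.1 with h | h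
        · exact ⟨z₁, hadj' z₁ hz₁, h⟩
        · rcases hcz z₂ hz₂.1 with h' | h'
          · exact ⟨z₂, hadj' z₂ hz₂, h'⟩
          · exact absurd h (fun _ =>
              mult2 x y₂ z₁ z₂ hy₂ hz₁.1 hz₂.1 hz₁y₂.symm hz₂y₂.symm hzne h.symm h'.symm)
      have hatb : ∃ y, G'.Adj x y ∧ c s(x, y) = c s(x, y₂) := by
        rcases hcz z₁ hz₁.1 with h | h
        · rcases hcz z₂ hz₂.1 with h' | h'
          · exact absurd h (fun _ =>
              mult2 x y₁ z₁ z₂ hy₁ hz₁.1 hz₂.1 hz₁y₁.symm hz₂y₁.symm hzne h.symm h'.symm)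
          · exact ⟨z₂, hadj' z₂ hz₂, h'⟩
        · exact ⟨z₁, hadj' z₁ hz₁, h⟩
      have hcseq' : {α : C | ∃ y, G'.Adj x y ∧ c s(x, y) = α}
          = {c s(x, y₁), c s(x, y₂)} := by
        apply Set.Subset.antisymm
        · rintro α ⟨y, hy, hc⟩
          have h' : α ∈ {α : C | ∃ y, G.Adj x y ∧ c s(x, y) = α} :=
            ⟨y, ((hadj x y).mp hy).1, hc⟩
          rw [hcseq] at h'
          exact h'
        · intro α hα
          simp only [Set.mem_insert_iff, Set.mem_singleton_iff] at hα
          rcases hα with rfl | rfl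
          · exact hata
          · exact hatb
      unfold colorDeg
      rw [hcseq']
      exact Set.ncard_pair hcne
  · -- (5) color classes span at most 3 vertices
    intro α
    have hsub : {x : V | ∃ y, G'.Adj x y ∧ c s(x, y) = α}
        ⊆ {x : V | ∃ y, G.Adj x y ∧ c s(x, y) = α} := by
      rintro x ⟨y, hy, hc⟩
      exact ⟨y, ((hadj x y).mp hy).1, hc⟩
    exact le_trans (Set.ncard_le_ncard hsub (Set.toFinite _)) (h5 α)
end
end

section
/- If G is a connected good colored graph in which every vertex is of Type II (degree 4, with two edges each of two distinct colors), and R is a rainbow cycle in G, then the graph G \ R obtained by deleting the edges of R is connected. -/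
open scoped Classical

noncomputable section

/-- A vertex of Type II: degree 4, with exactly two incident edges of each of two
distinct colors. -/
def IsTypeII {V C : Type*} (G : SimpleGraph V) (c : Sym2 V → C) (x : V) : Prop :=
  vdeg G x = 4 ∧ ∃ α β : C, α ≠ β ∧
    {y : V | G.Adj x y ∧ c s(x, y) = α}.ncard = 2 ∧
    {y : V | G.Adj x y ∧ c s(x, y) = β}.ncard = 2

/-- `G` is connected up to isolated vertices. -/
def ConnUpToIso {V : Type*} (G : SimpleGraph V) : Prop :=
  ∀ a b : V, vdeg G a ≠ 0 → vdeg G b ≠ 0 → G.Reachable a b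

/-- At a Type II vertex, the set of neighbors joined by the color of a fixed incident
edge has exactly two elements. -/
lemma color_set_card {V C : Type*} [Fintype V] (G : SimpleGraph V) (c : Sym2 V → C)
    (hII : ∀ x, IsTypeII G c x) {a b : V} (hab : G.Adj a b) :
    {y : V | G.Adj a y ∧ c s(a, y) = c s(a, b)}.ncard = 2 := by
  obtain ⟨hdeg, α, β, hne, hα, hβ⟩ := hII a
  set Sα := {y : V | G.Adj a y ∧ c s(a, y) = α} with hSα
  set Sβ := {y : V | G.Adj a y ∧ c s(a, y) = β} with hSβ
  have hdisj : Disjoint Sα Sβ := by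
    rw [Set.disjoint_left]
    rintro y ⟨_, h1⟩ ⟨_, h2⟩
    exact hne (h1 ▸ h2)
  have hsub : Sα ∪ Sβ ⊆ G.neighborSet a := by
    rintro y (⟨h, _⟩ | ⟨h, _⟩) <;> exact h
  have hunion : (Sα ∪ Sβ).ncard = 4 := by
    rw [Set.ncard_union_eq hdisj (Set.toFinite _) (Set.toFinite _), hα, hβ]
  have hdeg' : (G.neighborSet a).ncard = 4 := hdeg
  have heq : Sα ∪ Sβ = G.neighborSet a :=
    Set.eq_of_subset_of_ncard_le hsub (by rw [hunion, hdeg']) (Set.toFinite _)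
  have hbmem : b ∈ Sα ∪ Sβ := heq ▸ hab
  rcases hbmem with ⟨_, h⟩ | ⟨_, h⟩
  · rw [h]; exact hα
  · rw [h]; exact hβ

/-- Every edge of a good graph with all vertices of Type II lies in a monochromatic
triangle. -/
lemma triangle_of_adj {V C : Type*} [Fintype V] (G : SimpleGraph V) (c : Sym2 V → C)
    (hgood : IsGoodCore G c) (hII : ∀ x, IsTypeII G c x) {a b : V} (hab : G.Adj a b) :
    ∃ z, z ≠ a ∧ z ≠ b ∧ G.Adj a z ∧ G.Adj b z ∧
      c s(a, z) = c s(a, b) ∧ c s(b, z) = c s(a, b) := by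
  have hswap : (s(b, a) : Sym2 V) = s(a, b) := Sym2.eq_swap
  have hSa : {y : V | G.Adj a y ∧ c s(a, y) = c s(a, b)}.ncard = 2 :=
    color_set_card G c hII hab
  have hSb : {y : V | G.Adj b y ∧ c s(b, y) = c s(a, b)}.ncard = 2 := by
    have := color_set_card G c hII hab.symm
    rwa [hswap] at this
  obtain ⟨z, hz, hzb⟩ :=
    Set.exists_ne_of_one_lt_ncard (by rw [hSa]; norm_num) b
  obtain ⟨w, hw, hwa⟩ :=
    Set.exists_ne_of_one_lt_ncard (by rw [hSb]; norm_num) a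
  obtain ⟨hzadj, hzc⟩ := hz
  obtain ⟨hwadj, hwc⟩ := hw
  have hza : z ≠ a := fun h => G.loopless.irrefl a (h ▸ hzadj)
  have hwb : w ≠ b := fun h => G.loopless.irrefl b (h ▸ hwadj)
  have hT : {x : V | ∃ y, G.Adj x y ∧ c s(x, y) = c s(a, b)}.ncard ≤ 3 :=
    hgood.2.2.2.2 (c s(a, b))
  set T := {x : V | ∃ y, G.Adj x y ∧ c s(x, y) = c s(a, b)} with hTdef
  have haT : a ∈ T := ⟨b, hab, rfl⟩
  have hbT : b ∈ T := ⟨a, hab.symm, by rw [hswap]⟩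
  have hzT : z ∈ T := ⟨a, hzadj.symm, by rw [Sym2.eq_swap]; exact hzc⟩
  have hwT : w ∈ T := ⟨b, hwadj.symm, by rw [Sym2.eq_swap]; exact hwc⟩
  have hwz : w = z := by
    by_contra hne
    have hsub : ({a, b, z, w} : Set V) ⊆ T := by
      rintro x (rfl | rfl | rfl | rfl) <;> assumption
    have h4 : ({a, b, z, w} : Set V).ncard = 4 := by
      rw [Set.ncard_insert_of_notMem (by simp [hab.ne, Ne.symm hza, Ne.symm hwa]),
        Set.ncard_insert_of_notMem (by simp [Ne.symm hzb, Ne.symm hwb]),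
        Set.ncard_insert_of_notMem (by simp [Ne.symm hne]),
        Set.ncard_singleton]
    have := Set.ncard_le_ncard hsub (Set.toFinite _)
    omega
  exact ⟨z, hza, hzb, hzadj, hwz ▸ hwadj, hzc, hwz ▸ hwc⟩

/-- Any walk of `G` can be lifted to a reachability statement in `G` minus the edges of a
rainbow cycle, by detouring around each deleted edge through its monochromatic triangle. -/
lemma walk_lift {V C : Type*} [Fintype V] (G : SimpleGraph V) (c : Sym2 V → C)
    (hgood : IsGoodCore G c) (hII : ∀ x, IsTypeII G c x) {u : V} (R : G.Walk u u)
    (hrb : (R.edges.map c).Nodup) {a b : V} (p : G.Walk a b) :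
    (G.deleteEdges {e | e ∈ R.edges}).Reachable a b := by
  induction p with
  | nil => rfl
  | cons h p ih =>
    rename_i x y z
    refine SimpleGraph.Reachable.trans ?_ ih
    by_cases hmem : s(x, y) ∈ R.edges
    · obtain ⟨w, hwx, hwy, hxw, hyw, hcxw, hcyw⟩ := triangle_of_adj G c hgood hII h
      have h1 : s(x, w) ∉ R.edges := by
        intro hz
        have heq : (s(x, w) : Sym2 V) = s(x, y) :=
          List.inj_on_of_nodup_map hrb hz hmem hcxw
        rw [Sym2.eq_iff] at heq
        rcases heq with ⟨_, h'⟩ | ⟨h', _⟩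
        · exact hwy h'
        · exact h.ne h'
      have h2 : s(y, w) ∉ R.edges := by
        intro hz
        have hcyw' : c s(y, w) = c s(x, y) := hcyw
        have heq : (s(y, w) : Sym2 V) = s(x, y) :=
          List.inj_on_of_nodup_map hrb hz hmem hcyw'
        rw [Sym2.eq_iff] at heq
        rcases heq with ⟨h', _⟩ | ⟨_, h'⟩
        · exact h.ne h'.symm
        · exact hwx h'
      have adj1 : (G.deleteEdges {e | e ∈ R.edges}).Adj x w :=
        SimpleGraph.deleteEdges_adj.mpr ⟨hxw, h1⟩
      have adj2 : (G.deleteEdges {e | e ∈ R.edges}).Adj w y := by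
        refine SimpleGraph.deleteEdges_adj.mpr ⟨hyw.symm, ?_⟩
        rw [show (s(w, y) : Sym2 V) = s(y, w) from Sym2.eq_swap]
        exact h2
      exact adj1.reachable.trans adj2.reachable
    · exact (SimpleGraph.deleteEdges_adj.mpr ⟨h, hmem⟩).reachable

/-- If `G` is a connected good colored graph in which every vertex is of Type II and `R`
is a rainbow cycle in `G`, then the graph obtained by deleting the edges of `R` is
connected (up to isolated vertices). -/
theorem deleteRainbowCycle_connected {V C : Type*} [Fintype V] [DecidableEq V]
    (G : SimpleGraph V) (c : Sym2 V → C) (hG : IsGood G c) (hconn : G.Connected)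
    (hII : ∀ x, IsTypeII G c x)
    (u : V) (R : G.Walk u u) (hR : R.IsCycle) (hrb : (R.edges.map c).Nodup) :
    ConnUpToIso (G.deleteEdges {e | e ∈ R.edges}) := by
  intro a b _ _
  obtain ⟨p⟩ := hconn.preconnected a b
  exact walk_lift G c hG.1 hII R hrb p
end
end

section
/- If G is a good colored graph in which every vertex is of Type II (degree 4, with two edges each of two distinct colors), then G contains a rainbow cycle; moreover, for every rainbow cycle C in G, the graph G \ C obtained by deleting the edges of C is again a good colored graph. -/
open scoped Classical

noncomputable section

section Aux

open SimpleGraph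

set_option linter.unusedSectionVars false

variable {V : Type*} {C : Type*} [Fintype V] [DecidableEq V]

lemma ncard_four {a b d e : V} (hab : a ≠ b) (had : a ≠ d) (hae : a ≠ e)
    (hbd : b ≠ d) (hbe : b ≠ e) (hde : d ≠ e) : ({a, b, d, e} : Set V).ncard = 4 := by
  rw [Set.ncard_insert_of_notMem (by simp [hab, had, hae]),
      Set.ncard_insert_of_notMem (by simp [hbd, hbe]), Set.ncard_pair hde]

variable {G : SimpleGraph V} {c : Sym2 V → C}

structure ClassesAt (G : SimpleGraph V) (c : Sym2 V → C) (x : V) where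
  α : C
  β : C
  p : V
  q : V
  r : V
  s : V
  hαβ : α ≠ β
  hpq : p ≠ q
  hrs : r ≠ s
  hpr : p ≠ r
  hps : p ≠ s
  hqr : q ≠ r
  hqs : q ≠ s
  hA : {y : V | G.Adj x y ∧ c s(x, y) = α} = {p, q}
  hB : {y : V | G.Adj x y ∧ c s(x, y) = β} = {r, s}
  hN : G.neighborSet x = {p, q, r, s}

namespace ClassesAt

variable {x : V} (T : ClassesAt G c x)

lemma mem_A : G.Adj x T.p ∧ c s(x, T.p) = T.α := by
  have h : T.p ∈ ({T.p, T.q} : Set V) := by simp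
  rw [← T.hA] at h; exact h

lemma mem_A' : G.Adj x T.q ∧ c s(x, T.q) = T.α := by
  have h : T.q ∈ ({T.p, T.q} : Set V) := by simp
  rw [← T.hA] at h; exact h

lemma mem_B : G.Adj x T.r ∧ c s(x, T.r) = T.β := by
  have h : T.r ∈ ({T.r, T.s} : Set V) := by simp
  rw [← T.hB] at h; exact h

lemma mem_B' : G.Adj x T.s ∧ c s(x, T.s) = T.β := by
  have h : T.s ∈ ({T.r, T.s} : Set V) := by simp
  rw [← T.hB] at h; exact h

lemma color_or {y : V} (hy : G.Adj x y) : c s(x, y) = T.α ∨ c s(x, y) = T.β := by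
  have h : y ∈ G.neighborSet x := hy
  rw [T.hN] at h
  simp only [Set.mem_insert_iff, Set.mem_singleton_iff] at h
  rcases h with rfl | rfl | rfl | rfl
  · exact Or.inl T.mem_A.2
  · exact Or.inl T.mem_A'.2
  · exact Or.inr T.mem_B.2
  · exact Or.inr T.mem_B'.2

end ClassesAt

lemma classesAt (hII : ∀ x, IsTypeII G c x) (x : V) : Nonempty (ClassesAt G c x) := by
  obtain ⟨hdeg, α, β, hab, hA2, hB2⟩ := hII x
  obtain ⟨p, q, hpq, hA⟩ := Set.ncard_eq_two.mp hA2
  obtain ⟨r, s, hrs, hB⟩ := Set.ncard_eq_two.mp hB2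
  have hp : G.Adj x p ∧ c s(x, p) = α := by
    have h : p ∈ ({p, q} : Set V) := by simp
    rw [← hA] at h; exact h
  have hq : G.Adj x q ∧ c s(x, q) = α := by
    have h : q ∈ ({p, q} : Set V) := by simp
    rw [← hA] at h; exact h
  have hr : G.Adj x r ∧ c s(x, r) = β := by
    have h : r ∈ ({r, s} : Set V) := by simp
    rw [← hB] at h; exact h
  have hs : G.Adj x s ∧ c s(x, s) = β := by
    have h : s ∈ ({r, s} : Set V) := by simp
    rw [← hB] at h; exact h
  have hdisj : ∀ y : V, y ∈ ({p, q} : Set V) → y ∈ ({r, s} : Set V) → False := by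
    intro y h1 h2
    rw [← hA] at h1; rw [← hB] at h2
    exact hab (h1.2.symm.trans h2.2)
  have hpr : p ≠ r := fun h => hdisj p (by simp) (by simp [h])
  have hps : p ≠ s := fun h => hdisj p (by simp) (by simp [h])
  have hqr : q ≠ r := fun h => hdisj q (by simp) (by simp [h])
  have hqs : q ≠ s := fun h => hdisj q (by simp) (by simp [h])
  have hsub : ({p, q, r, s} : Set V) ⊆ G.neighborSet x := by
    rintro t (rfl | rfl | rfl | rfl)
    · exact hp.1
    · exact hq.1
    · exact hr.1
    · exact hs.1
  have hcard : ({p, q, r, s} : Set V).ncard = 4 := ncard_four hpq hpr hps hqr hqs hrs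
  have hN : G.neighborSet x = {p, q, r, s} := by
    have := Set.eq_of_subset_of_ncard_le hsub
      (by rw [hcard]; exact le_of_eq hdeg) (Set.toFinite _)
    exact this.symm
  exact ⟨⟨α, β, p, q, r, s, hab, hpq, hrs, hpr, hps, hqr, hqs, hA, hB, hN⟩⟩

lemma triangle (hII : ∀ x, IsTypeII G c x)
    (hspan : ∀ α : C, {x : V | ∃ y, G.Adj x y ∧ c s(x, y) = α}.ncard ≤ 3)
    {x y z : V} (hxy : G.Adj x y) (hxz : G.Adj x z) (hyz : y ≠ z)
    (hcc : c s(x, z) = c s(x, y)) : G.Adj y z ∧ c s(y, z) = c s(x, y) := by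
  set γ := c s(x, y) with hγ
  have hsub : ({x, y, z} : Set V) ⊆ {v | ∃ w, G.Adj v w ∧ c s(v, w) = γ} := by
    rintro t (rfl | rfl | rfl)
    · exact ⟨y, hxy, rfl⟩
    · exact ⟨x, hxy.symm, by rw [Sym2.eq_swap]⟩
    · exact ⟨x, hxz.symm, by rw [Sym2.eq_swap]; exact hcc⟩
  have h3 : ({x, y, z} : Set V).ncard = 3 := by
    rw [Set.ncard_insert_of_notMem (by simp [hxy.ne, hxz.ne]), Set.ncard_pair hyz]
  have hspanEq : ({x, y, z} : Set V) = {v | ∃ w, G.Adj v w ∧ c s(v, w) = γ} :=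
    Set.eq_of_subset_of_ncard_le hsub (by rw [h3]; exact hspan γ) (Set.toFinite _)
  obtain ⟨T⟩ := classesAt hII y
  have hγor : γ = T.α ∨ γ = T.β := by
    have := T.color_or hxy.symm
    rwa [Sym2.eq_swap, ← hγ] at this
  have hS2 : {w : V | G.Adj y w ∧ c s(y, w) = γ}.ncard = 2 := by
    rcases hγor with h | h
    · rw [h, T.hA]; exact Set.ncard_pair T.hpq
    · rw [h, T.hB]; exact Set.ncard_pair T.hrs
  have hSsub : {w : V | G.Adj y w ∧ c s(y, w) = γ} ⊆ ({x, z} : Set V) := by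
    rintro w ⟨hadj, hcw⟩
    have hw : w ∈ ({x, y, z} : Set V) := by
      rw [hspanEq]; exact ⟨y, hadj.symm, by rw [Sym2.eq_swap]; exact hcw⟩
    rcases hw with rfl | rfl | rfl
    · simp
    · exact absurd rfl hadj.ne
    · simp
  have hSeq : {w : V | G.Adj y w ∧ c s(y, w) = γ} = {x, z} :=
    Set.eq_of_subset_of_ncard_le hSsub
      (by rw [hS2]; exact le_trans (Set.ncard_insert_le _ _) (by simp)) (Set.toFinite _)
  have hz : z ∈ {w : V | G.Adj y w ∧ c s(y, w) = γ} := by rw [hSeq]; simp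
  exact hz

lemma step (hII : ∀ x, IsTypeII G c x) {x v : V} (h : G.Adj x v) :
    ∃ y, G.Adj v y ∧ c s(v, y) ≠ c s(x, v) := by
  obtain ⟨T⟩ := classesAt hII v
  have hc := T.color_or h.symm
  have hswap : c s(v, x) = c s(x, v) := by rw [Sym2.eq_swap]
  rcases hc with hc | hc
  · exact ⟨T.r, T.mem_B.1, by rw [T.mem_B.2, ← hswap, hc]; exact T.hαβ.symm⟩
  · exact ⟨T.p, T.mem_A.1, by rw [T.mem_A.2, ← hswap, hc]; exact T.hαβ⟩

def Adm (G : SimpleGraph V) (c : Sym2 V → C) (m : ℕ) (v : ℕ → V) : Prop :=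
  0 < m ∧ v m = v 0 ∧ (∀ k, k < m → G.Adj (v k) (v (k + 1))) ∧
    ∀ k, k < m → c s(v k, v (k + 1)) ≠ c s(v ((k + 1) % m), v ((k + 1) % m + 1))

lemma wrap_aux {m : ℕ} {v : ℕ → V} (h0 : 0 < m) (hper : v m = v 0) (j : ℕ) :
    v (j % m + 1) = v ((j + 1) % m) := by
  have key : (j % m + 1) % m = (j + 1) % m := Nat.mod_add_mod j m 1
  have hr : j % m < m := Nat.mod_lt _ h0
  by_cases hl : j % m + 1 < m
  · rw [← key, Nat.mod_eq_of_lt hl]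
  · have he : j % m + 1 = m := by omega
    rw [he, hper, ← key, he, Nat.mod_self]

lemma Adm.rot {m : ℕ} {v : ℕ → V} (h : Adm G c m v) (t : ℕ) :
    Adm G c m fun i => v ((i + t) % m) := by
  obtain ⟨h0, hper, hadj, hcol⟩ := h
  have W := wrap_aux h0 hper
  refine ⟨h0, ?_, ?_, ?_⟩
  · simp only [Nat.add_mod_left, zero_add]
  · intro k hk
    simp only
    have e1 : v ((k + 1 + t) % m) = v ((k + t) % m + 1) := by
      rw [show k + 1 + t = k + t + 1 by omega, ← W (k + t)]
    rw [e1]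
    exact hadj _ (Nat.mod_lt _ h0)
  · intro k hk
    simp only
    have e1 : v ((k + 1 + t) % m) = v ((k + t) % m + 1) := by
      rw [show k + 1 + t = k + t + 1 by omega, ← W (k + t)]
    have e2 : ((k + 1) % m + t) % m = ((k + t) % m + 1) % m := by
      rw [Nat.mod_add_mod, Nat.mod_add_mod, show k + 1 + t = k + t + 1 by omega]
    have e3 : v (((k + 1) % m + 1 + t) % m) = v (((k + t) % m + 1) % m + 1) := by
      have i1 : ((k + 1) % m + 1 + t) % m = (k + t + 2) % m := by
        rw [show (k + 1) % m + 1 + t = (k + 1) % m + (1 + t) by omega, Nat.mod_add_mod,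
          show k + 1 + (1 + t) = k + t + 2 by omega]
      have i2 : ((k + t) % m + 1) % m = (k + t + 1) % m := Nat.mod_add_mod _ _ _
      rw [i1, i2, W (k + t + 1)]
    rw [e1, e2, e3]
    exact hcol _ (Nat.mod_lt _ h0)

lemma Adm.exists_adm [Nonempty V] (hII : ∀ x, IsTypeII G c x) :
    ∃ m, ∃ v : ℕ → V, Adm G c m v := by
  obtain ⟨x0⟩ := (inferInstance : Nonempty V)
  have hdeg := (hII x0).1
  have hne : (G.neighborSet x0).Nonempty := by
    apply Set.nonempty_of_ncard_ne_zero
    have : (G.neighborSet x0).ncard = 4 := hdeg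
    omega
  obtain ⟨y0, hy0⟩ := hne
  let D := {p : V × V // G.Adj p.1 p.2}
  let f : D → D := fun p => ⟨(p.1.2, Classical.choose (step hII p.2)),
    (Classical.choose_spec (step hII p.2)).1⟩
  have hf2 : ∀ p : D, c s(p.1.2, (f p).1.2) ≠ c s(p.1.1, p.1.2) := fun p =>
    (Classical.choose_spec (step hII p.2)).2
  let d : ℕ → D := fun n => f^[n] ⟨(x0, y0), hy0⟩
  have hd : ∀ n, d (n + 1) = f (d n) := fun n => Function.iterate_succ_apply' f n _
  let vs : ℕ → V := fun n => (d n).1.1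
  have hvs : ∀ n, vs (n + 1) = (d n).1.2 := fun n => by
    show (d (n + 1)).1.1 = (d n).1.2
    rw [hd n]
  have hadj : ∀ n, G.Adj (vs n) (vs (n + 1)) := fun n => by
    rw [hvs n]; exact (d n).2
  have hcolv : ∀ n, c s(vs (n + 1), vs (n + 2)) ≠ c s(vs n, vs (n + 1)) := by
    intro n
    have h2 : vs (n + 2) = (f (d n)).1.2 := by rw [hvs (n + 1), hd n]
    rw [hvs n, h2]
    exact hf2 (d n)
  obtain ⟨i, j, hlt, he⟩ : ∃ i j, i < j ∧ d i = d j := by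
    obtain ⟨i, j, hij, he⟩ := Finite.exists_ne_map_eq_of_infinite d
    rcases Nat.lt_or_gt_of_ne hij with h | h
    · exact ⟨i, j, h, he⟩
    · exact ⟨j, i, h, he.symm⟩
  have hvj : vs j = vs i := by show (d j).1.1 = (d i).1.1; rw [he]
  have hvj1 : vs (j + 1) = vs (i + 1) := by rw [hvs, hvs, he]
  refine ⟨j - i, fun k => vs (i + k), by omega, ?_, ?_, ?_⟩
  · simp only
    rw [show i + (j - i) = j by omega, show i + 0 = i from rfl, hvj]
  · intro k hk
    simp only
    exact hadj (i + k)
  · intro k hk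
    simp only
    by_cases hke : k + 1 < j - i
    · rw [Nat.mod_eq_of_lt hke]
      show c s(vs (i + k), vs (i + k + 1)) ≠ c s(vs (i + k + 1), vs (i + k + 2))
      exact fun hcc => hcolv (i + k) hcc.symm
    · have hke' : k + 1 = j - i := by omega
      have h1 : (k + 1) % (j - i) = 0 := by rw [hke', Nat.mod_self]
      rw [h1]
      have h2 : i + k + 1 = j := by omega
      have h3 : i + k + 1 + 1 = j + 1 := by omega
      have hthis := hcolv (i + k)
      rw [h3, h2, hvj, hvj1] at hthis
      show c s(vs (i + k), vs (i + k + 1)) ≠ c s(vs i, vs (i + 1))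
      rw [h2, hvj]
      exact fun hcc => hthis hcc.symm

lemma min_inj (hII : ∀ x, IsTypeII G c x)
    (hspan : ∀ α : C, {x : V | ∃ y, G.Adj x y ∧ c s(x, y) = α}.ncard ≤ 3)
    {m : ℕ} (hmin : ∀ m' (v' : ℕ → V), Adm G c m' v' → m ≤ m') :
    ∀ l, l < m → 0 < l → ∀ v : ℕ → V, Adm G c m v → v l ≠ v 0 := by
  intro l
  induction l using Nat.strong_induction_on with
  | _ l IH =>
  intro hlm hl0 v hAdm heq
  obtain ⟨h0, hper, hadj, hcol⟩ := hAdm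
  rcases Nat.lt_or_ge l 3 with h3 | h3
  · interval_cases l
    · have h := hadj 0 h0
      rw [show (0:ℕ) + 1 = 1 from rfl, heq] at h
      exact G.loopless.irrefl _ h
    · have h := hcol 0 h0
      rw [Nat.mod_eq_of_lt (show 0 + 1 < m by omega)] at h
      rw [show (0:ℕ) + 1 = 1 from rfl, show (1:ℕ) + 1 = 2 from rfl, heq] at h
      exact h (by rw [show s(v 0, v 1) = s(v 1, v 0) from Sym2.eq_swap])
  · by_cases hgood : c s(v (l - 1), v (l - 1 + 1)) = c s(v 0, v (0 + 1))
    · have hl1 : l - 1 + 1 = l := by omega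
      by_cases hv1 : v 1 = v (l - 1)
      · have hrot := Adm.rot ⟨h0, hper, hadj, hcol⟩ 1
        apply IH (l - 2) (by omega) (by omega) (by omega) _ hrot
        show v ((l - 2 + 1) % m) = v ((0 + 1) % m)
        rw [show l - 2 + 1 = l - 1 by omega, Nat.mod_eq_of_lt (show l - 1 < m by omega),
          Nat.mod_eq_of_lt (show 0 + 1 < m by omega)]
        exact hv1.symm
      · have hadj0 : G.Adj (v 0) (v 1) := hadj 0 h0
        have hadjl : G.Adj (v 0) (v (l - 1)) := by
          have h := hadj (l - 1) (by omega)
          rw [hl1, heq] at h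
          exact h.symm
        have hccc : c s(v 0, v (l - 1)) = c s(v 0, v 1) := by
          have h := hgood
          rw [hl1, heq] at h
          rw [show s(v 0, v (l - 1)) = s(v (l - 1), v 0) from Sym2.eq_swap]
          exact h
        have tri := triangle hII hspan hadj0 hadjl hv1 hccc
        set v'' : ℕ → V := fun i => if i < l - 1 then v (i + 1) else v 1 with hv''
        have hAdm'' : Adm G c (l - 1) v'' := by
          refine ⟨by omega, ?_, ?_, ?_⟩
          · show v'' (l - 1) = v'' 0
            rw [hv'']
            simp only
            rw [if_neg (by omega), if_pos (by omega)]
          · intro k hk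
            show G.Adj (v'' k) (v'' (k + 1))
            rw [hv'']; simp only
            by_cases hk2 : k < l - 2
            · rw [if_pos (by omega), if_pos (by omega)]
              exact hadj (k + 1) (by omega)
            · rw [if_pos (by omega), if_neg (by omega), show k = l - 2 by omega,
                show l - 2 + 1 = l - 1 by omega]
              exact tri.1.symm
          · intro k hk
            by_cases hkA : k < l - 2
            · rw [Nat.mod_eq_of_lt (show k + 1 < l - 1 by omega)]
              show c s(v'' k, v'' (k + 1)) ≠ c s(v'' (k + 1), v'' (k + 1 + 1))
              rw [hv'']; simp only
              rw [if_pos (by omega), if_pos (by omega)]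
              by_cases hkB : k + 1 < l - 2
              · rw [if_pos (by omega)]
                have h := hcol (k + 1) (by omega)
                rwa [Nat.mod_eq_of_lt (show k + 1 + 1 < m by omega)] at h
              · have hkC : k + 1 = l - 2 := by omega
                rw [if_neg (by omega), hkC, show l - 2 + 1 = l - 1 by omega]
                have h := hcol (l - 2) (by omega)
                rw [show l - 2 + 1 = l - 1 by omega, Nat.mod_eq_of_lt (show l - 1 < m by omega),
                  hl1, heq] at h
                intro hcc
                have hA : c s(v (l - 1), v 1) = c s(v 0, v 1) := by
                  rw [show s(v (l - 1), v 1) = s(v 1, v (l - 1)) from Sym2.eq_swap]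
                  exact tri.2
                have hB : c s(v (l - 1), v 0) = c s(v 0, v 1) := by
                  rw [show s(v (l - 1), v 0) = s(v 0, v (l - 1)) from Sym2.eq_swap]
                  exact hccc
                exact h ((hcc.trans hA).trans hB.symm)
            · have hkD : k = l - 2 := by omega
              rw [show (k + 1) % (l - 1) = 0 by rw [show k + 1 = l - 1 by omega, Nat.mod_self]]
              show c s(v'' k, v'' (k + 1)) ≠ c s(v'' 0, v'' (0 + 1))
              rw [hv'']; simp only
              rw [if_pos (show k < l - 1 by omega), if_neg (show ¬ k + 1 < l - 1 by omega),
                if_pos (show 0 < l - 1 by omega), if_pos (show 0 + 1 < l - 1 by omega),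
                show k + 1 = l - 1 by omega]
              intro hcc
              have hA : c s(v (l - 1), v 1) = c s(v 0, v 1) := by
                rw [show s(v (l - 1), v 1) = s(v 1, v (l - 1)) from Sym2.eq_swap]
                exact tri.2
              have h := hcol 0 h0
              rw [Nat.mod_eq_of_lt (show 0 + 1 < m by omega)] at h
              exact h (hA.symm.trans hcc)
        exact absurd (hmin (l - 1) v'' hAdm'') (by omega)
    · refine absurd (hmin l v ⟨hl0, heq, fun k hk => hadj k (by omega), ?_⟩) (by omega)
      intro k hk
      by_cases hkl : k + 1 < l
      · rw [Nat.mod_eq_of_lt hkl]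
        have h := hcol k (by omega)
        rwa [Nat.mod_eq_of_lt (show k + 1 < m by omega)] at h
      · rw [show (k + 1) % l = 0 by rw [show k + 1 = l by omega, Nat.mod_self],
          show k = l - 1 by omega]
        exact hgood

lemma min_pairs (hII : ∀ x, IsTypeII G c x)
    (hspan : ∀ α : C, {x : V | ∃ y, G.Adj x y ∧ c s(x, y) = α}.ncard ≤ 3)
    {m : ℕ} (hmin : ∀ m' (v' : ℕ → V), Adm G c m' v' → m ≤ m')
    {v : ℕ → V} (hAdm : Adm G c m v) :
    ∀ k l, k < l → l < m → v k ≠ v l := by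
  intro k l hkl hlm heq
  have hrot := hAdm.rot k
  apply min_inj hII hspan hmin (l - k) (by omega) (by omega) _ hrot
  show v ((l - k + k) % m) = v ((0 + k) % m)
  rw [show l - k + k = l by omega, Nat.zero_add, Nat.mod_eq_of_lt hlm,
    Nat.mod_eq_of_lt (show k < m by omega)]
  exact heq.symm

lemma min_colors (hII : ∀ x, IsTypeII G c x)
    (hspan : ∀ α : C, {x : V | ∃ y, G.Adj x y ∧ c s(x, y) = α}.ncard ≤ 3)
    {m : ℕ} (hmin : ∀ m' (v' : ℕ → V), Adm G c m' v' → m ≤ m')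
    {v : ℕ → V} (hAdm : Adm G c m v) :
    ∀ k l, k < l → l < m → c s(v k, v (k + 1)) ≠ c s(v l, v (l + 1)) := by
  intro k l hkl hlm hcc
  obtain ⟨h0, hper, hadj, hcol⟩ := hAdm
  have hne : ∀ i j, i < m → j < m → i ≠ j → v i ≠ v j := by
    intro i j hi hj hij
    rcases Nat.lt_or_ge i j with h | h
    · exact min_pairs hII hspan hmin ⟨h0, hper, hadj, hcol⟩ i j h hj
    · exact (min_pairs hII hspan hmin ⟨h0, hper, hadj, hcol⟩ j i (by omega) hi).symm
  by_cases hc1 : l = k + 1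
  · have h := hcol k (by omega)
    rw [Nat.mod_eq_of_lt (show k + 1 < m by omega)] at h
    rw [hc1] at hcc
    exact h hcc
  by_cases hc2 : k = 0 ∧ l = m - 1
  · have h := hcol l hlm
    rw [show (l + 1) % m = 0 by rw [show l + 1 = m by omega, Nat.mod_self]] at h
    rw [hc2.1] at hcc
    exact h hcc.symm
  set γ := c s(v k, v (k + 1)) with hγ
  set e' := (l + 1) % m with he'
  have he'm : e' < m := Nat.mod_lt _ h0
  have hm1 : v (l + 1) = v e' := by
    rw [he']
    by_cases h : l + 1 < m
    · rw [Nat.mod_eq_of_lt h]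
    · rw [show l + 1 = m by omega, Nat.mod_self]
      exact hper
  have hdist : e' ≠ k ∧ e' ≠ k + 1 ∧ e' ≠ l := by
    by_cases h : l + 1 < m
    · have hh : e' = l + 1 := by rw [he', Nat.mod_eq_of_lt h]
      omega
    · have hlm1 : l = m - 1 := by omega
      have hh : e' = 0 := by rw [he', show l + 1 = m by omega, Nat.mod_self]
      have hk0 : k ≠ 0 := fun h' => hc2 ⟨h', hlm1⟩
      omega
  have hsub : ({v k, v (k + 1), v l, v e'} : Set V) ⊆
      {x : V | ∃ y, G.Adj x y ∧ c s(x, y) = γ} := by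
    rintro t (rfl | rfl | rfl | rfl)
    · exact ⟨v (k + 1), hadj k (by omega), rfl⟩
    · exact ⟨v k, (hadj k (by omega)).symm,
        by rw [show s(v (k + 1), v k) = s(v k, v (k + 1)) from Sym2.eq_swap]⟩
    · exact ⟨v (l + 1), hadj l hlm, hcc.symm⟩
    · refine ⟨v l, ?_, ?_⟩
      · rw [← hm1]; exact (hadj l hlm).symm
      · rw [← hm1, show s(v (l + 1), v l) = s(v l, v (l + 1)) from Sym2.eq_swap]
        exact hcc.symm
  have h4 : ({v k, v (k + 1), v l, v e'} : Set V).ncard = 4 :=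
    ncard_four (hne k (k + 1) (by omega) (by omega) (by omega))
      (hne k l (by omega) (by omega) (by omega))
      (hne k e' (by omega) (by omega) (fun h => hdist.1 h.symm))
      (hne (k + 1) l (by omega) (by omega) (fun h => hc1 h.symm))
      (hne (k + 1) e' (by omega) (by omega) (fun h => hdist.2.1 h.symm))
      (hne l e' (by omega) (by omega) (fun h => hdist.2.2 h.symm))
  have hle := Set.ncard_le_ncard hsub (Set.toFinite _)
  rw [h4] at hle
  have := hspan γ
  omega

lemma min_three {m : ℕ} {v : ℕ → V} (hAdm : Adm G c m v) : 3 ≤ m := by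
  obtain ⟨h0, hper, hadj, hcol⟩ := hAdm
  by_contra hcon
  push_neg at hcon
  interval_cases m
  · have h := hadj 0 h0
    rw [show (0:ℕ) + 1 = 1 from rfl, hper] at h
    exact G.loopless.irrefl _ h
  · have h := hcol 0 (by omega)
    rw [show (0 + 1) % 2 = 1 from rfl] at h
    apply h
    rw [show (1:ℕ) + 1 = 2 from rfl, hper, show (0:ℕ) + 1 = 1 from rfl,
      show s(v 1, v 0) = s(v 0, v 1) from Sym2.eq_swap]

def mkW (G : SimpleGraph V) : ∀ (n : ℕ) (v : ℕ → V),
    (∀ k, k < n → G.Adj (v k) (v (k + 1))) → G.Walk (v 0) (v n)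
  | 0, _, _ => SimpleGraph.Walk.nil
  | n + 1, v, h => SimpleGraph.Walk.cons (h 0 (Nat.succ_pos n))
      (mkW G n (fun i => v (i + 1)) fun k hk => h (k + 1) (by omega))

lemma mkW_support : ∀ (n : ℕ) (v : ℕ → V) (h : ∀ k, k < n → G.Adj (v k) (v (k + 1))),
    (mkW G n v h).support = (List.range (n + 1)).map v := by
  intro n
  induction n with
  | zero => intro v h; simp [mkW, List.range_succ]
  | succ n IH =>
    intro v h
    show (SimpleGraph.Walk.cons (h 0 (Nat.succ_pos n))
      (mkW G n (fun i => v (i + 1)) fun k hk => h (k + 1) (by omega))).support = _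
    rw [SimpleGraph.Walk.support_cons, IH]
    conv_rhs => rw [List.range_succ_eq_map]
    rw [List.map_cons, List.map_map]
    rfl

lemma mkW_edges : ∀ (n : ℕ) (v : ℕ → V) (h : ∀ k, k < n → G.Adj (v k) (v (k + 1))),
    (mkW G n v h).edges = (List.range n).map (fun k => s(v k, v (k + 1))) := by
  intro n
  induction n with
  | zero => intro v h; simp [mkW]
  | succ n IH =>
    intro v h
    show (SimpleGraph.Walk.cons (h 0 (Nat.succ_pos n))
      (mkW G n (fun i => v (i + 1)) fun k hk => h (k + 1) (by omega))).edges = _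
    rw [SimpleGraph.Walk.edges_cons, IH]
    conv_rhs => rw [List.range_succ_eq_map]
    rw [List.map_cons, List.map_map]
    rfl

lemma mkW_length : ∀ (n : ℕ) (v : ℕ → V) (h : ∀ k, k < n → G.Adj (v k) (v (k + 1))),
    (mkW G n v h).length = n := by
  intro n
  induction n with
  | zero => intro v h; rfl
  | succ n IH =>
    intro v h
    show (SimpleGraph.Walk.cons (h 0 (Nat.succ_pos n))
      (mkW G n (fun i => v (i + 1)) fun k hk => h (k + 1) (by omega))).length = _
    rw [SimpleGraph.Walk.length_cons, IH]

lemma exists_rainbow [Nonempty V] (hII : ∀ x, IsTypeII G c x)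
    (hspan : ∀ α : C, {x : V | ∃ y, G.Adj x y ∧ c s(x, y) = α}.ncard ≤ 3) :
    ∃ (u : V) (w : G.Walk u u), w.IsCycle ∧ (w.edges.map c).Nodup := by
  have hex : ∃ m, ∃ v : ℕ → V, Adm G c m v := Adm.exists_adm hII
  obtain ⟨v, hAdm⟩ : ∃ v, Adm G c (Nat.find hex) v := Nat.find_spec hex
  set m := Nat.find hex with hm
  have hmin : ∀ m' (v' : ℕ → V), Adm G c m' v' → m ≤ m' := fun m' v' h' =>
    Nat.find_min' hex ⟨v', h'⟩
  have h3 := min_three hAdm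
  have hadj := hAdm.2.2.1
  have hper := hAdm.2.1
  refine ⟨v 0, (mkW G m v hadj).copy rfl hper, ?_⟩
  have hedges : ((mkW G m v hadj).copy rfl hper).edges
      = (List.range m).map (fun k => s(v k, v (k + 1))) := by
    rw [SimpleGraph.Walk.edges_copy, mkW_edges]
  have hnodupc : (((mkW G m v hadj).copy rfl hper).edges.map c).Nodup := by
    rw [hedges, List.map_map]
    refine List.Nodup.map_on ?_ List.nodup_range
    intro a ha b hb hcc
    simp only [List.mem_range] at ha hb
    by_contra hne
    rcases Nat.lt_or_ge a b with h | h
    · exact min_colors hII hspan hmin hAdm a b h hb hcc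
    · exact min_colors hII hspan hmin hAdm b a (by omega) ha hcc.symm
  refine ⟨?_, hnodupc⟩
  rw [SimpleGraph.Walk.isCycle_def]
  refine ⟨?_, ?_, ?_⟩
  · rw [SimpleGraph.Walk.isTrail_def]
    exact List.Nodup.of_map c hnodupc
  · intro hnil
    have hl := congrArg SimpleGraph.Walk.length hnil
    rw [SimpleGraph.Walk.length_copy, mkW_length, SimpleGraph.Walk.length_nil] at hl
    omega
  · rw [SimpleGraph.Walk.support_copy, mkW_support, List.range_succ_eq_map, List.map_cons,
      List.tail_cons, List.map_map]
    refine List.Nodup.map_on ?_ List.nodup_range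
    intro a ha b hb he
    simp only [List.mem_range] at ha hb
    by_contra hne
    have hinj := min_pairs hII hspan hmin hAdm
    have key : ∀ i j, i < j → j ≤ m → 0 < i → v i ≠ v j := by
      intro i j hij hjm h0i heq
      by_cases hjm' : j < m
      · exact hinj i j hij hjm' heq
      · have hj : j = m := by omega
        rw [hj, hper] at heq
        exact hinj 0 i (by omega) (by omega) heq.symm
    rcases Nat.lt_or_ge a b with h | h
    · exact key (a + 1) (b + 1) (by omega) (by omega) (by omega) he
    · exact key (b + 1) (a + 1) (by omega) (by omega) (by omega) he.symm

lemma path_end_edges {v u : V} (p : G.Walk v u) (hp : p.IsPath) (hvu : v ≠ u) :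
    ∃ d, ∀ y, (s(u, y) ∈ p.edges ↔ y = d) := by
  induction p with
  | nil => exact absurd rfl hvu
  | cons h q ih =>
    rename_i a b u'
    by_cases hbu : b = u'
    · subst hbu
      have hq : q = SimpleGraph.Walk.nil := SimpleGraph.Walk.isPath_iff_eq_nil.mp hp.of_cons
      subst hq
      refine ⟨a, fun y => ?_⟩
      rw [SimpleGraph.Walk.edges_cons, SimpleGraph.Walk.edges_nil, List.mem_singleton]
      constructor
      · intro he
        rw [Sym2.eq_iff] at he
        rcases he with ⟨h1, h2⟩ | ⟨h1, h2⟩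
        · exact absurd h1.symm hvu
        · exact h2
      · intro hy
        rw [hy]
        exact Sym2.eq_swap
    · obtain ⟨d, hd⟩ := ih hp.of_cons hbu
      refine ⟨d, fun y => ?_⟩
      rw [SimpleGraph.Walk.edges_cons, List.mem_cons]
      constructor
      · rintro (he | he)
        · rw [Sym2.eq_iff] at he
          rcases he with ⟨h1, h2⟩ | ⟨h1, h2⟩
          · exfalso
            have hsup := hp.support_nodup
            rw [SimpleGraph.Walk.support_cons] at hsup
            exact (List.nodup_cons.mp hsup).1 (h1 ▸ q.end_mem_support)
          · exact absurd h1.symm hbu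
        · exact (hd y).mp he
      · intro hy
        exact Or.inr ((hd y).mpr hy)

lemma cyc_at_end {u : V} (w : G.Walk u u) (hcyc : w.IsCycle) :
    ∃ d₁ d₂, d₁ ≠ d₂ ∧ ∀ y, (s(u, y) ∈ w.edges ↔ y = d₁ ∨ y = d₂) := by
  match w, hcyc with
  | .nil, hcyc => exact absurd rfl hcyc.ne_nil
  | .cons h q, hcyc =>
    rename_i b
    rw [SimpleGraph.Walk.cons_isCycle_iff] at hcyc
    obtain ⟨hq_path, hsuv⟩ := hcyc
    obtain ⟨d, hd⟩ := path_end_edges q hq_path h.ne'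
    refine ⟨b, d, ?_, fun y => ?_⟩
    · intro he
      exact hsuv ((hd _).mpr he)
    · rw [SimpleGraph.Walk.edges_cons, List.mem_cons, hd y, Sym2.congr_right]

lemma cyc_at {u x : V} (w : G.Walk u u) (hcyc : w.IsCycle) (hx : x ∈ w.support) :
    ∃ d₁ d₂, d₁ ≠ d₂ ∧ ∀ y, (s(x, y) ∈ w.edges ↔ y = d₁ ∨ y = d₂) := by
  obtain ⟨d₁, d₂, h12, hd⟩ := cyc_at_end (w.rotate x hx) (hcyc.rotate hx)
  refine ⟨d₁, d₂, h12, fun y => ?_⟩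
  rw [← hd y, (SimpleGraph.Walk.rotate_edges w x hx).mem_iff]

lemma main_vertex {G : SimpleGraph V} {c : Sym2 V → C} {u : V} {w : G.Walk u u}
    (hcyc : w.IsCycle) (hrain : (w.edges.map c).Nodup)
    (hII : ∀ x, IsTypeII G c x) (x : V) :
    ((G.deleteEdges {e | e ∈ w.edges}).neighborSet x).ncard = 2 ∨
      (G.deleteEdges {e | e ∈ w.edges}).neighborSet x = G.neighborSet x := by
  set G' := G.deleteEdges {e | e ∈ w.edges} with hG'def
  have hG'adj : ∀ x y : V, G'.Adj x y ↔ (G.Adj x y ∧ s(x, y) ∉ w.edges) := by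
    intro x y
    rw [hG'def, SimpleGraph.deleteEdges_adj]
    simp only [Set.mem_setOf_eq]
  by_cases hx : x ∈ w.support
  · left
    obtain ⟨d₁, d₂, hd12, hiff⟩ := cyc_at w hcyc hx
    have hedge1 : s(x, d₁) ∈ w.edges := (hiff d₁).mpr (Or.inl rfl)
    have hedge2 : s(x, d₂) ∈ w.edges := (hiff d₂).mpr (Or.inr rfl)
    have hadj1 : G.Adj x d₁ := G.mem_edgeSet.mp (w.edges_subset_edgeSet hedge1)
    have hadj2 : G.Adj x d₂ := G.mem_edgeSet.mp (w.edges_subset_edgeSet hedge2)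
    have hnbr : G'.neighborSet x = G.neighborSet x \ {d₁, d₂} := by
      ext y
      simp only [SimpleGraph.mem_neighborSet, hG'adj, Set.mem_diff, Set.mem_insert_iff,
        Set.mem_singleton_iff, hiff y]
      try tauto
    have hsubd : ({d₁, d₂} : Set V) ⊆ G.neighborSet x := by
      rintro t (rfl | rfl)
      · exact hadj1
      · exact hadj2
    rw [hnbr, Set.ncard_diff hsubd (Set.toFinite _)]
    have h4 : (G.neighborSet x).ncard = 4 := (hII x).1
    rw [h4, Set.ncard_pair hd12]
  · right
    have hD : ∀ y, s(x, y) ∉ w.edges := fun y hy =>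
      hx (w.fst_mem_support_of_mem_edges hy)
    ext y
    simp only [SimpleGraph.mem_neighborSet, hG'adj]
    exact ⟨fun h => h.1, fun h => ⟨h, hD y⟩⟩

lemma main_color {G : SimpleGraph V} {c : Sym2 V → C} {u : V} {w : G.Walk u u}
    (hcyc : w.IsCycle) (hrain : (w.edges.map c).Nodup)
    (hII : ∀ x, IsTypeII G c x) (x : V) :
    {α : C | ∃ y, (G.deleteEdges {e | e ∈ w.edges}).Adj x y ∧ c s(x, y) = α}.ncard = 2 := by
  set G' := G.deleteEdges {e | e ∈ w.edges} with hG'def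
  have hG'adj : ∀ x y : V, G'.Adj x y ↔ (G.Adj x y ∧ s(x, y) ∉ w.edges) := by
    intro x y
    rw [hG'def, SimpleGraph.deleteEdges_adj]
    simp only [Set.mem_setOf_eq]
  obtain ⟨T⟩ := classesAt hII x
  have hEq : {α : C | ∃ y, G'.Adj x y ∧ c s(x, y) = α} = {T.α, T.β} := by
    by_cases hx : x ∈ w.support
    · obtain ⟨d₁, d₂, hd12, hiff⟩ := cyc_at w hcyc hx
      have hedge1 : s(x, d₁) ∈ w.edges := (hiff d₁).mpr (Or.inl rfl)
      have hedge2 : s(x, d₂) ∈ w.edges := (hiff d₂).mpr (Or.inr rfl)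
      have hcd : c s(x, d₁) ≠ c s(x, d₂) := fun hcc =>
        hd12 (Sym2.congr_right.mp (List.inj_on_of_nodup_map hrain hedge1 hedge2 hcc))
      have hpick : ∀ (γ : C) (a b : V), a ≠ b →
          ({y : V | G.Adj x y ∧ c s(x, y) = γ} = {a, b}) →
          ∃ t, (G.Adj x t ∧ c s(x, t) = γ) ∧ t ≠ d₁ ∧ t ≠ d₂ := by
        intro γ a b hab hset
        have hmem : ∀ t, t ∈ ({a, b} : Set V) → G.Adj x t ∧ c s(x, t) = γ := fun t ht => by
          rw [← hset] at ht; exact ht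
        have ha := hmem a (by simp)
        have hb := hmem b (by simp)
        by_cases had : a ≠ d₁ ∧ a ≠ d₂
        · exact ⟨a, ha, had.1, had.2⟩
        · have had' : a = d₁ ∨ a = d₂ := by
            by_contra hno
            push_neg at hno
            exact had hno
          rcases had' with had | had
          all_goals refine ⟨b, hb, ?_, ?_⟩
          · intro hb1
            exact hab (had.trans hb1.symm)
          · intro hb2
            apply hcd
            rw [← had, ← hb2]
            exact ha.2.trans hb.2.symm
          · intro hb1
            apply hcd
            rw [← hb1, ← had]
            exact hb.2.trans ha.2.symm
          · intro hb2
            exact hab (had.trans hb2.symm)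
      apply Set.Subset.antisymm
      · rintro γ ⟨y, hy, rfl⟩
        simp only [Set.mem_insert_iff, Set.mem_singleton_iff]
        exact T.color_or ((hG'adj x y).mp hy).1
      · rintro γ (rfl | rfl)
        · obtain ⟨t, ht, ht1, ht2⟩ := hpick T.α T.p T.q T.hpq T.hA
          refine ⟨t, (hG'adj x t).mpr ⟨ht.1, fun hmem => ?_⟩, ht.2⟩
          rcases (hiff t).mp hmem with h | h
          · exact ht1 h
          · exact ht2 h
        · obtain ⟨t, ht, ht1, ht2⟩ := hpick T.β T.r T.s T.hrs T.hB
          refine ⟨t, (hG'adj x t).mpr ⟨ht.1, fun hmem => ?_⟩, ht.2⟩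
          rcases (hiff t).mp hmem with h | h
          · exact ht1 h
          · exact ht2 h
    · have hD : ∀ y, s(x, y) ∉ w.edges := fun y hy =>
        hx (w.fst_mem_support_of_mem_edges hy)
      apply Set.Subset.antisymm
      · rintro γ ⟨y, hy, rfl⟩
        simp only [Set.mem_insert_iff, Set.mem_singleton_iff]
        exact T.color_or ((hG'adj x y).mp hy).1
      · rintro γ (rfl | rfl)
        · exact ⟨T.p, (hG'adj x T.p).mpr ⟨T.mem_A.1, hD T.p⟩, T.mem_A.2⟩
        · exact ⟨T.r, (hG'adj x T.r).mpr ⟨T.mem_B.1, hD T.r⟩, T.mem_B.2⟩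
  rw [hEq, Set.ncard_pair T.hαβ]

lemma no_typeX {G : SimpleGraph V} {c : Sym2 V → C} {u : V} {w : G.Walk u u}
    (hcyc : w.IsCycle) (hrain : (w.edges.map c).Nodup)
    (hII : ∀ x, IsTypeII G c x)
    (hspan : ∀ α : C, {x : V | ∃ y, G.Adj x y ∧ c s(x, y) = α}.ncard ≤ 3)
    (hnoX : ∀ v, ¬ IsTypeX G c v) :
    ∀ v, ¬ IsTypeX (G.deleteEdges {e | e ∈ w.edges}) c v := by
  set G' := G.deleteEdges {e | e ∈ w.edges} with hG'def
  have hG'adj : ∀ x y : V, G'.Adj x y ↔ (G.Adj x y ∧ s(x, y) ∉ w.edges) := by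
    intro x y
    rw [hG'def, SimpleGraph.deleteEdges_adj]
    simp only [Set.mem_setOf_eq]
  intro v hX
  obtain ⟨hdegv, A, B, hU, hI, hE, ⟨a₁, a₂, ha12, ha1A, ha2A, hva1, hva2, hca⟩,
    ⟨b₁, b₂, hb12, hb1B, hb2B, hvb1, hvb2, hcb⟩⟩ := hX
  have hva1' : G.Adj v a₁ := ((hG'adj v a₁).mp hva1).1
  have hva2' : G.Adj v a₂ := ((hG'adj v a₂).mp hva2).1
  have hvb1' : G.Adj v b₁ := ((hG'adj v b₁).mp hvb1).1
  have hvb2' : G.Adj v b₂ := ((hG'adj v b₂).mp hvb2).1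
  have hab : ∀ y, y ∈ A → y ∈ B → y = v := fun y h1 h2 => by
    have h : y ∈ A ∩ B := ⟨h1, h2⟩
    rw [hI] at h
    exact h
  have haB : ∀ y, y ∈ A → G.Adj v y → y ∉ B := fun y h1 hadj h2 =>
    G.loopless.irrefl v (by rw [hab y h1 h2] at hadj; exact hadj)
  have hNv : G.neighborSet v = {a₁, a₂, b₁, b₂} := by
    apply (Set.eq_of_subset_of_ncard_le ?_ ?_ (Set.toFinite _)).symm
    · rintro t (rfl | rfl | rfl | rfl)
      exacts [hva1', hva2', hvb1', hvb2']
    · rw [ncard_four ha12 (fun h => haB a₁ ha1A hva1' (h ▸ hb1B))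
        (fun h => haB a₁ ha1A hva1' (h ▸ hb2B))
        (fun h => haB a₂ ha2A hva2' (h ▸ hb1B))
        (fun h => haB a₂ ha2A hva2' (h ▸ hb2B)) hb12]
      exact le_of_eq (hII v).1
  have hAmem : ∀ t, t ∈ A ∨ t ∈ B := fun t => by
    have h : t ∈ A ∪ B := by rw [hU]; trivial
    exact h
  have hcross : ∀ x y : V, s(x, y) ∈ w.edges → x ∈ A → x ∉ B → y ∈ B → y ∉ A → False := by
    intro x y he hxA hxnB hyB hynA
    have hxy : G.Adj x y := G.mem_edgeSet.mp (w.edges_subset_edgeSet he)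
    obtain ⟨T⟩ := classesAt hII x
    have hz : ∃ z, z ≠ y ∧ G.Adj x z ∧ c s(x, z) = c s(x, y) := by
      rcases T.color_or hxy with h | h
      · have hy' : y ∈ ({T.p, T.q} : Set V) := by rw [← T.hA]; exact ⟨hxy, h⟩
        simp only [Set.mem_insert_iff, Set.mem_singleton_iff] at hy'
        rcases hy' with h' | h'
        · exact ⟨T.q, fun hh => T.hpq (hh.trans h').symm, T.mem_A'.1, T.mem_A'.2.trans h.symm⟩
        · exact ⟨T.p, fun hh => T.hpq (hh.trans h'), T.mem_A.1, T.mem_A.2.trans h.symm⟩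
      · have hy' : y ∈ ({T.r, T.s} : Set V) := by rw [← T.hB]; exact ⟨hxy, h⟩
        simp only [Set.mem_insert_iff, Set.mem_singleton_iff] at hy'
        rcases hy' with h' | h'
        · exact ⟨T.s, fun hh => T.hrs (hh.trans h').symm, T.mem_B'.1, T.mem_B'.2.trans h.symm⟩
        · exact ⟨T.r, fun hh => T.hrs (hh.trans h'), T.mem_B.1, T.mem_B.2.trans h.symm⟩
    obtain ⟨z, hzy, hxz, hcz⟩ := hz
    have tri := triangle hII hspan hxy hxz hzy.symm hcz
    have hinj := List.inj_on_of_nodup_map hrain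
    have hxzw : s(x, z) ∉ w.edges := fun hmem =>
      hzy (Sym2.congr_right.mp (hinj hmem he hcz))
    have hyzw : s(y, z) ∉ w.edges := fun hmem => by
      have h := hinj hmem he tri.2
      rw [Sym2.eq_iff] at h
      rcases h with ⟨h1, h2⟩ | ⟨h1, h2⟩
      · exact hxy.ne h1.symm
      · exact hxz.ne h2.symm
    have hzA : z ∈ A := by
      rcases hE s(x, z) (by rw [SimpleGraph.mem_edgeSet, hG'adj]; exact ⟨hxz, hxzw⟩) with hh | hh
      · exact hh z (by rw [Sym2.mem_iff]; exact Or.inr rfl)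
      · exact absurd (hh x (by rw [Sym2.mem_iff]; exact Or.inl rfl)) hxnB
    have hzB : z ∈ B := by
      rcases hE s(y, z) (by rw [SimpleGraph.mem_edgeSet, hG'adj]; exact ⟨tri.1, hyzw⟩) with hh | hh
      · exact absurd (hh y (by rw [Sym2.mem_iff]; exact Or.inl rfl)) hynA
      · exact hh z (by rw [Sym2.mem_iff]; exact Or.inr rfl)
    have hzv : z = v := hab z hzA hzB
    rw [hzv] at hxz hcz tri
    have hcvx : c s(v, x) = c s(x, y) := by
      rw [show s(v, x) = s(x, v) from Sym2.eq_swap]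
      exact hcz
    have hcvy : c s(v, y) = c s(x, y) := by
      rw [show s(v, y) = s(y, v) from Sym2.eq_swap]
      exact tri.2
    have hxm : x ∈ G.neighborSet v := hxz.symm
    have hym : y ∈ G.neighborSet v := tri.1.symm
    rw [hNv] at hxm hym
    simp only [Set.mem_insert_iff, Set.mem_singleton_iff] at hxm hym
    have hcax : c s(v, a₁) = c s(x, y) ∧ c s(v, a₂) = c s(x, y) := by
      rcases hxm with h | h | h | h
      · exact ⟨by rw [← h]; exact hcvx, by rw [← hca, ← h]; exact hcvx⟩
      · exact ⟨by rw [hca, ← h]; exact hcvx, by rw [← h]; exact hcvx⟩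
      · exact absurd (h ▸ hb1B) hxnB
      · exact absurd (h ▸ hb2B) hxnB
    have hcbx : c s(v, b₁) = c s(x, y) ∧ c s(v, b₂) = c s(x, y) := by
      rcases hym with h | h | h | h
      · exact absurd (h ▸ ha1A) hynA
      · exact absurd (h ▸ ha2A) hynA
      · exact ⟨by rw [← h]; exact hcvy, by rw [← hcb, ← h]; exact hcvy⟩
      · exact ⟨by rw [hcb, ← h]; exact hcvy, by rw [← h]; exact hcvy⟩
    have hall : {y' : V | G.Adj v y' ∧ c s(v, y') = c s(x, y)} = G.neighborSet v := by
      apply Set.Subset.antisymm (fun t ht => ht.1)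
      intro t ht
      refine ⟨ht, ?_⟩
      have hmem := ht
      rw [hNv] at hmem
      simp only [Set.mem_insert_iff, Set.mem_singleton_iff] at hmem
      rcases hmem with rfl | rfl | rfl | rfl
      exacts [hcax.1, hcax.2, hcbx.1, hcbx.2]
    obtain ⟨Tv⟩ := classesAt hII v
    have hγv : c s(x, y) = Tv.α ∨ c s(x, y) = Tv.β := by
      have h := Tv.color_or hxz.symm
      rwa [hcvx] at h
    have h2 : {y' : V | G.Adj v y' ∧ c s(v, y') = c s(x, y)}.ncard = 2 := by
      rcases hγv with h | h
      · rw [h, Tv.hA]; exact Set.ncard_pair Tv.hpq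
      · rw [h, Tv.hB]; exact Set.ncard_pair Tv.hrs
    rw [hall] at h2
    have h4 : (G.neighborSet v).ncard = 4 := (hII v).1
    omega
  apply hnoX v
  refine ⟨(hII v).1, A, B, hU, hI, ?_, ⟨a₁, a₂, ha12, ha1A, ha2A, hva1', hva2', hca⟩,
    ⟨b₁, b₂, hb12, hb1B, hb2B, hvb1', hvb2', hcb⟩⟩
  intro e
  refine Sym2.ind (fun x y => ?_) e
  intro he
  by_cases hew : s(x, y) ∈ w.edges
  · by_contra hcon
    push_neg at hcon
    obtain ⟨⟨t1, ht1e, ht1A⟩, ⟨t2, ht2e, ht2B⟩⟩ := hcon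
    rw [Sym2.mem_iff] at ht1e ht2e
    have hnA : x ∉ A ∨ y ∉ A := by
      rcases ht1e with h | h
      · exact Or.inl (h ▸ ht1A)
      · exact Or.inr (h ▸ ht1A)
    have hnB : x ∉ B ∨ y ∉ B := by
      rcases ht2e with h | h
      · exact Or.inl (h ▸ ht2B)
      · exact Or.inr (h ▸ ht2B)
    rcases hnA with hA' | hA' <;> rcases hnB with hB' | hB'
    · rcases hAmem x with h | h
      · exact hA' h
      · exact hB' h
    · exact hcross y x (by rw [show s(y, x) = s(x, y) from Sym2.eq_swap]; exact hew)
        ((hAmem y).resolve_right hB') hB' ((hAmem x).resolve_left hA') hA'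
    · exact hcross x y hew ((hAmem x).resolve_right hB') hB'
        ((hAmem y).resolve_left hA') hA'
    · rcases hAmem y with h | h
      · exact hA' h
      · exact hB' h
  · exact hE s(x, y) (by rw [SimpleGraph.mem_edgeSet, hG'adj]; exact ⟨G.mem_edgeSet.mp he, hew⟩)

end Aux

/-- If `G` is a good colored graph in which every vertex is of Type II, then `G`
contains a rainbow cycle; moreover, for every rainbow cycle `C` in `G`, the graph
obtained by deleting the edges of `C` is again a good colored graph. -/
theorem typeII_rainbow_cycle_exists_and_delete_good {V C : Type*} [Fintype V]
    [DecidableEq V] [Nonempty V]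
    (G : SimpleGraph V) (c : Sym2 V → C) (hG : IsGood G c) (hII : ∀ x, IsTypeII G c x) :
    (∃ (u : V) (w : G.Walk u u), w.IsCycle ∧ (w.edges.map c).Nodup) ∧
      ∀ (u : V) (w : G.Walk u u), w.IsCycle → (w.edges.map c).Nodup →
        IsGood (G.deleteEdges {e | e ∈ w.edges}) c := by
  obtain ⟨⟨heven, hdeg4, htri, hcdeg, hspan⟩, hnoX⟩ := hG
  constructor
  · exact exists_rainbow hII hspan
  · intro u w hcyc hrain
    refine ⟨⟨?_, ?_, ?_, ?_, ?_⟩, no_typeX hcyc hrain hII hspan hnoX⟩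
    · intro x
      rcases main_vertex hcyc hrain hII x with h | h
      · show Even ((G.deleteEdges {e | e ∈ w.edges}).neighborSet x).ncard
        rw [h]
        exact ⟨1, rfl⟩
      · show Even ((G.deleteEdges {e | e ∈ w.edges}).neighborSet x).ncard
        rw [h]
        have h4 : (G.neighborSet x).ncard = 4 := (hII x).1
        rw [h4]
        exact ⟨2, rfl⟩
    · intro x
      rcases main_vertex hcyc hrain hII x with h | h
      · show ((G.deleteEdges {e | e ∈ w.edges}).neighborSet x).ncard ≤ 4
        omega
      · show ((G.deleteEdges {e | e ∈ w.edges}).neighborSet x).ncard ≤ 4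
        rw [h]
        have h4 : (G.neighborSet x).ncard = 4 := (hII x).1
        omega
    · intro x y z hxy hyz hxz
      have hadj : ∀ a b : V, (G.deleteEdges {e | e ∈ w.edges}).Adj a b → G.Adj a b := by
        intro a b h
        rw [SimpleGraph.deleteEdges_adj] at h
        exact h.1
      exact htri x y z (hadj _ _ hxy) (hadj _ _ hyz) (hadj _ _ hxz)
    · intro x _
      exact main_color hcyc hrain hII x
    · intro γ
      refine le_trans (Set.ncard_le_ncard ?_ (Set.toFinite _)) (hspan γ)
      rintro t ⟨y, hy, hc⟩
      rw [SimpleGraph.deleteEdges_adj] at hy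
      exact ⟨y, hy.1, hc⟩
end
end

section
/- Let G be a good colored graph and let C_1, C_2, ..., C_k be pairwise edge-disjoint rainbow cycles in G such that the graph obtained from G by deleting the edges of all of C_1, ..., C_k is a good colored graph. Then the graph G \ C_1 obtained by deleting only the edges of C_1 is also a good colored graph. -/
open scoped Classical

noncomputable section

section AuxLemmas

open SimpleGraph Walk

variable {V : Type*} {G : SimpleGraph V} {v a : V}

private lemma nbrs_of_path_from (r : G.Walk v a) (hr : r.IsPath) (hva : v ≠ a) :
    ∃ (z : V) (r' : G.Walk z a), {y : V | s(v, y) ∈ r.edges} = {z} ∧ v ∉ r'.support ∧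
      ∀ e ∈ r'.edges, e ∈ r.edges := by
  cases r with
  | nil => exact absurd rfl hva
  | cons h r' =>
    rename_i b
    have hnodup := hr.support_nodup
    rw [Walk.support_cons, List.nodup_cons] at hnodup
    refine ⟨b, r', ?_, hnodup.1, fun e he => by simp [Walk.edges_cons, he]⟩
    ext y
    simp only [Set.mem_setOf_eq, Walk.edges_cons, List.mem_cons, Set.mem_singleton_iff]
    constructor
    · rintro (h1 | h2)
      · exact Sym2.congr_right.mp h1
      · exact absurd (r'.fst_mem_support_of_mem_edges h2) hnodup.1
    · rintro rfl; exact Or.inl rfl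

private lemma cycle_nbrs_s13 (q : G.Walk v v) (hq : q.IsCycle) :
    ∃ (w z : V) (r : G.Walk z w), w ≠ z ∧ {y : V | s(v, y) ∈ q.edges} = {w, z} ∧
      v ∉ r.support ∧ ∀ e ∈ r.edges, e ∈ q.edges := by
  cases q with
  | nil => exact absurd hq Walk.IsCycle.not_of_nil
  | cons h p =>
    rename_i b
    rw [Walk.cons_isCycle_iff] at hq
    obtain ⟨hp, he⟩ := hq
    obtain ⟨z, r', hset, hvr, hsub⟩ := nbrs_of_path_from p.reverse hp.reverse h.ne
    have hpe : {y : V | s(v, y) ∈ p.edges} = {z} := by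
      rw [← hset]; ext y; simp [Walk.edges_reverse, List.mem_reverse]
    have hz : s(v, z) ∈ p.edges := by
      have : z ∈ ({z} : Set V) := rfl
      rw [← hpe] at this; exact this
    have hbz : b ≠ z := by rintro rfl; exact he hz
    refine ⟨b, z, r'.copy rfl (by rfl), hbz, ?_, by simpa using hvr, ?_⟩
    · ext y
      simp only [Set.mem_setOf_eq, Walk.edges_cons, List.mem_cons, Set.mem_insert_iff,
        Set.mem_singleton_iff]
      constructor
      · rintro (h1 | h2)
        · exact Or.inl (Sym2.congr_right.mp h1)
        · right; have : y ∈ {y : V | s(v, y) ∈ p.edges} := h2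
          rwa [hpe] at this
      · rintro (rfl | rfl)
        · exact Or.inl rfl
        · exact Or.inr hz
    · intro e heq
      simp only [Walk.edges_copy] at heq
      have := hsub e heq
      rw [Walk.edges_reverse, List.mem_reverse] at this
      simp [Walk.edges_cons, this]

private lemma walk_same_side {A B : Set V} (hAB : A ∩ B = {v}) :
    ∀ {z w : V} (r : G.Walk z w), v ∉ r.support →
      (∀ e ∈ r.edges, (∀ x ∈ e, x ∈ A) ∨ (∀ x ∈ e, x ∈ B)) → z ∈ A → w ∈ A := by
  intro z w r
  induction r with
  | nil => exact fun _ _ h => h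
  | cons h r ih =>
    rename_i u b w'
    intro hv hedges hz
    rw [Walk.support_cons, List.mem_cons] at hv
    push_neg at hv
    have hb : b ∈ A := by
      rcases hedges s(u, b) (by simp [Walk.edges_cons]) with hA | hB
      · exact hA b (by simp)
      · exfalso
        have : u ∈ A ∩ B := ⟨hz, hB u (by simp)⟩
        rw [hAB] at this
        exact hv.1 this.symm
    exact ih hv.2 (fun e he => hedges e (by simp [Walk.edges_cons, he])) hb

end AuxLemmas

/-- If `C₀, …, Cₖ` are pairwise edge-disjoint rainbow cycles of a good colored graph
`G` such that deleting the edges of all of them leaves a good colored graph, then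
deleting only the edges of `C₀` also leaves a good colored graph. -/
theorem delete_first_of_good_family {V C : Type*} [Fintype V] [DecidableEq V]
    (G : SimpleGraph V) (c : Sym2 V → C) (hG : IsGood G c)
    (k : ℕ) (Cs : Fin (k + 1) → ((u : V) × G.Walk u u))
    (hcyc : ∀ i, (Cs i).2.IsCycle)
    (hrb : ∀ i, ((Cs i).2.edges.map c).Nodup)
    (hdisj : ∀ i j, i ≠ j → ∀ e ∈ (Cs i).2.edges, e ∉ (Cs j).2.edges)
    (hall : IsGood (G.deleteEdges {e | ∃ i, e ∈ (Cs i).2.edges}) c) :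
    IsGood (G.deleteEdges {e | e ∈ (Cs 0).2.edges}) c := by
  classical
  obtain ⟨⟨hev, hd4, htri, hcd, hspan⟩, _htx⟩ := hG
  set G₁ := G.deleteEdges {e | e ∈ (Cs 0).2.edges} with hG₁def
  set S : V → Set V := fun x => {y : V | s(x, y) ∈ (Cs 0).2.edges} with hS
  have hSsub : ∀ x, S x ⊆ G.neighborSet x := fun x y hy => (Cs 0).2.adj_of_mem_edges hy
  have hfinC : ∀ (G' : SimpleGraph V) (x : V), {α : C | ∃ y, G'.Adj x y ∧ c s(x, y) = α}.Finite := by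
    intro G' x
    have himg : {α : C | ∃ y, G'.Adj x y ∧ c s(x, y) = α}
        = (fun y => c s(x, y)) '' {y : V | G'.Adj x y} := by
      ext γ
      simp only [Set.mem_setOf_eq, Set.mem_image]
    rw [himg]
    exact (Set.toFinite _).image _
  have hadj1 : ∀ x y : V, G₁.Adj x y ↔ (G.Adj x y ∧ s(x, y) ∉ (Cs 0).2.edges) := by
    intro x y
    rw [hG₁def, SimpleGraph.deleteEdges_adj]
    rfl
  have hnbr : ∀ x, G₁.neighborSet x = G.neighborSet x \ S x := by
    intro x; ext y
    simp only [SimpleGraph.mem_neighborSet, hadj1, Set.mem_diff, hS, Set.mem_setOf_eq]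
  have hScard : ∀ x, S x = ∅ ∨ ∃ w z : V, w ≠ z ∧ S x = {w, z} := by
    intro x
    by_cases hx : x ∈ (Cs 0).2.support
    · right
      obtain ⟨w, z, r, hwz, hset, -, -⟩ := cycle_nbrs_s13 ((Cs 0).2.rotate x hx) ((hcyc 0).rotate hx)
      refine ⟨w, z, hwz, ?_⟩
      rw [hS, ← hset]
      ext y
      simp only [Set.mem_setOf_eq]
      exact ((SimpleGraph.Walk.rotate_edges _ x hx).mem_iff).symm
    · left
      ext y
      simp only [hS, Set.mem_setOf_eq, Set.mem_empty_iff_false, iff_false]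
      exact fun h => hx ((Cs 0).2.fst_mem_support_of_mem_edges h)
  have hvd : ∀ x, vdeg G₁ x = vdeg G x - (S x).ncard := by
    intro x
    rw [vdeg, vdeg, hnbr, Set.ncard_diff (hSsub x) (Set.toFinite _)]
  -- Property (1): even degrees
  have p1 : ∀ x, Even (vdeg G₁ x) := by
    intro x
    rw [hvd]
    rcases hScard x with h0 | ⟨w, z, hwz, h2⟩
    · rw [h0, Set.ncard_empty, Nat.sub_zero]; exact hev x
    · rw [h2, Set.ncard_pair hwz]
      obtain ⟨m, hm⟩ := hev x
      exact ⟨m - 1, by omega⟩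
  -- Property (2): max degree
  have p2 : ∀ x, vdeg G₁ x ≤ 4 := fun x => by
    rw [hvd]; exact le_trans (Nat.sub_le _ _) (hd4 x)
  -- Property (3)
  have p3 : TriCond G₁ c := fun x y z hxy hyz hxz =>
    htri x y z ((hadj1 _ _).mp hxy).1 ((hadj1 _ _).mp hyz).1 ((hadj1 _ _).mp hxz).1
  -- Property (5)
  have p5 : ∀ α : C, {x : V | ∃ y, G₁.Adj x y ∧ c s(x, y) = α}.ncard ≤ 3 := by
    intro α
    refine le_trans (Set.ncard_le_ncard ?_ (Set.toFinite _)) (hspan α)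
    rintro x ⟨y, hy, hc⟩
    exact ⟨y, ((hadj1 _ _).mp hy).1, hc⟩
  -- Property (4)
  have p4 : ∀ x, vdeg G₁ x ≠ 0 → colorDeg G₁ c x = 2 := by
    intro x hx0
    have hsubc : {α : C | ∃ y, G₁.Adj x y ∧ c s(x, y) = α}
        ⊆ {α : C | ∃ y, G.Adj x y ∧ c s(x, y) = α} := by
      rintro α ⟨y, hy, hc⟩; exact ⟨y, ((hadj1 x y).mp hy).1, hc⟩
    have hdG : vdeg G x ≠ 0 := by
      intro h; apply hx0; rw [hvd]; omega
    have hcdG := hcd x hdG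
    have hle : colorDeg G₁ c x ≤ 2 := by
      rw [← hcdG, colorDeg, colorDeg]
      exact Set.ncard_le_ncard hsubc (hfinC G x)
    rcases hScard x with h0 | ⟨w, z, hwz, h2⟩
    · have hceq : {α : C | ∃ y, G₁.Adj x y ∧ c s(x, y) = α}
          = {α : C | ∃ y, G.Adj x y ∧ c s(x, y) = α} := by
        refine Set.Subset.antisymm hsubc ?_
        rintro α ⟨y, hy, hc⟩
        refine ⟨y, (hadj1 x y).mpr ⟨hy, fun hmem => ?_⟩, hc⟩
        have : y ∈ S x := hmem
        rw [h0] at this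
        exact this
      rw [colorDeg, hceq, ← colorDeg]
      exact hcdG
    · -- two deleted neighbors w ≠ z
      have hwS : w ∈ S x := by rw [h2]; exact Or.inl rfl
      have hzS : z ∈ S x := by rw [h2]; exact Or.inr rfl
      have hwE : s(x, w) ∈ (Cs 0).2.edges := hwS
      have hzE : s(x, z) ∈ (Cs 0).2.edges := hzS
      have hαβ : c s(x, w) ≠ c s(x, z) := by
        intro hcc
        exact hwz (Sym2.congr_right.mp
          (List.inj_on_of_nodup_map (hrb 0) hwE hzE hcc))
      have h4 : vdeg G x = 4 := by
        rw [hvd, h2, Set.ncard_pair hwz] at hx0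
        obtain ⟨m, hm⟩ := hev x
        have := hd4 x
        omega
      -- fibers
      have hfib : ∀ γ : C, {y : V | y ∈ G.neighborSet x ∧ c s(x, y) = γ}.ncard ≤ 2 := by
        intro γ
        rcases Set.eq_empty_or_nonempty {y : V | y ∈ G.neighborSet x ∧ c s(x, y) = γ} with
          hem | ⟨y₀, hy₀⟩
        · rw [hem, Set.ncard_empty]; omega
        · have hsub2 : insert x {y : V | y ∈ G.neighborSet x ∧ c s(x, y) = γ}
              ⊆ {p : V | ∃ y, G.Adj p y ∧ c s(p, y) = γ} := by
            rintro p (rfl | ⟨hp1, hp2⟩)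
            · exact ⟨y₀, hy₀.1, hy₀.2⟩
            · refine ⟨x, ((SimpleGraph.mem_neighborSet _ _ _).mp hp1).symm, ?_⟩
              rw [Sym2.eq_swap]; exact hp2
          have hxni : x ∉ {y : V | y ∈ G.neighborSet x ∧ c s(x, y) = γ} := by
            rintro ⟨hx1, -⟩
            exact G.irrefl ((SimpleGraph.mem_neighborSet _ _ _).mp hx1)
          have hlec := Set.ncard_le_ncard hsub2 (Set.toFinite _)
          rw [Set.ncard_insert_of_notMem hxni (Set.toFinite _)] at hlec
          have h3 := hspan γ
          omega
      set α := c s(x, w) with hα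
      set β := c s(x, z) with hβ
      have hwN : w ∈ G.neighborSet x := hSsub x hwS
      have hzN : z ∈ G.neighborSet x := hSsub x hzS
      -- the color set of G at x is {α, β}
      have hPeq : ({α, β} : Set C) = {γ : C | ∃ y, G.Adj x y ∧ c s(x, y) = γ} := by
        apply Set.eq_of_subset_of_ncard_le
        · rintro γ (rfl | rfl)
          · exact ⟨w, (SimpleGraph.mem_neighborSet _ _ _).mp hwN, rfl⟩
          · exact ⟨z, (SimpleGraph.mem_neighborSet _ _ _).mp hzN, rfl⟩
        · have hcd2 := hcd x hdG
          rw [colorDeg] at hcd2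
          rw [hcd2, Set.ncard_pair hαβ]
        · exact hfinC G x
      -- neighbors split into the two fibers
      have hNsplit : G.neighborSet x
          = {y : V | y ∈ G.neighborSet x ∧ c s(x, y) = α}
            ∪ {y : V | y ∈ G.neighborSet x ∧ c s(x, y) = β} := by
        apply Set.Subset.antisymm
        · intro y hy
          have hyc : c s(x, y) ∈ {γ : C | ∃ y', G.Adj x y' ∧ c s(x, y') = γ} :=
            ⟨y, (SimpleGraph.mem_neighborSet _ _ _).mp hy, rfl⟩
          rw [← hPeq] at hyc
          rcases hyc with h | h
          · exact Or.inl ⟨hy, h⟩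
          · exact Or.inr ⟨hy, h⟩
        · rintro y (⟨h, -⟩ | ⟨h, -⟩) <;> exact h
      have hdisjf : Disjoint {y : V | y ∈ G.neighborSet x ∧ c s(x, y) = α}
          {y : V | y ∈ G.neighborSet x ∧ c s(x, y) = β} := by
        rw [Set.disjoint_left]
        rintro y ⟨-, h1⟩ ⟨-, h2⟩
        exact hαβ (h1 ▸ h2 ▸ rfl)
      have hcards : {y : V | y ∈ G.neighborSet x ∧ c s(x, y) = α}.ncard = 2 ∧
          {y : V | y ∈ G.neighborSet x ∧ c s(x, y) = β}.ncard = 2 := by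
        have hu := Set.ncard_union_eq hdisjf (Set.toFinite _) (Set.toFinite _)
        rw [← hNsplit] at hu
        rw [vdeg] at h4
        have hfa := hfib α
        have hfb := hfib β
        omega
      -- pick alternative representatives
      have hget : ∀ (γ : C) (y₀ : V), {y : V | y ∈ G.neighborSet x ∧ c s(x, y) = γ}.ncard = 2 →
          y₀ ∈ {y : V | y ∈ G.neighborSet x ∧ c s(x, y) = γ} →
          ∃ y₁, y₁ ≠ y₀ ∧ y₁ ∈ G.neighborSet x ∧ c s(x, y₁) = γ := by
        intro γ y₀ hc2 hy₀
        obtain ⟨p, q, hpq, hsetpq⟩ := Set.ncard_eq_two.mp hc2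
        rw [hsetpq] at hy₀
        rcases hy₀ with rfl | rfl
        · have hq : q ∈ {y : V | y ∈ G.neighborSet x ∧ c s(x, y) = γ} := by
            rw [hsetpq]; exact Or.inr rfl
          exact ⟨q, hpq.symm, hq.1, hq.2⟩
        · have hp : p ∈ {y : V | y ∈ G.neighborSet x ∧ c s(x, y) = γ} := by
            rw [hsetpq]; exact Or.inl rfl
          exact ⟨p, hpq, hp.1, hp.2⟩
      obtain ⟨w', hw'w, hw'N, hw'c⟩ := hget α w hcards.1 ⟨hwN, rfl⟩
      obtain ⟨z', hz'z, hz'N, hz'c⟩ := hget β z hcards.2 ⟨hzN, rfl⟩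
      have hw'G1 : G₁.Adj x w' := by
        rw [hadj1]
        refine ⟨(SimpleGraph.mem_neighborSet _ _ _).mp hw'N, fun hmem => ?_⟩
        have hmem' : w' ∈ S x := hmem
        rw [h2] at hmem'
        rcases hmem' with rfl | rfl
        · exact hw'w rfl
        · exact hαβ (hw'c ▸ rfl)
      have hz'G1 : G₁.Adj x z' := by
        rw [hadj1]
        refine ⟨(SimpleGraph.mem_neighborSet _ _ _).mp hz'N, fun hmem => ?_⟩
        have hmem' : z' ∈ S x := hmem
        rw [h2] at hmem'
        rcases hmem' with rfl | rfl
        · exact hαβ (hz'c ▸ rfl)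
        · exact hz'z rfl
      have hge : 2 ≤ colorDeg G₁ c x := by
        rw [colorDeg]
        have hsub2 : ({α, β} : Set C) ⊆ {γ : C | ∃ y, G₁.Adj x y ∧ c s(x, y) = γ} := by
          rintro γ (rfl | rfl)
          · exact ⟨w', hw'G1, hw'c⟩
          · exact ⟨z', hz'G1, hz'c⟩
        calc 2 = ({α, β} : Set C).ncard := (Set.ncard_pair hαβ).symm
          _ ≤ _ := Set.ncard_le_ncard hsub2 (hfinC G₁ x)
      omega
  -- Property (6)
  have p6 : ∀ v, ¬ IsTypeX G₁ c v := by
    intro v hv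
    obtain ⟨hvd4, A, B, hUn, hIn, hedgesAB, ⟨a₁, a₂, ha12, ha1A, ha2A, hva1, hva2, hca⟩,
      ⟨b₁, b₂, hb12, hb1B, hb2B, hvb1, hvb2, hcb⟩⟩ := hv
    have hsubN : G₁.neighborSet v ⊆ G.neighborSet v := by
      rw [hnbr]; exact Set.diff_subset
    have h4G : vdeg G v = 4 := by
      have h1 : vdeg G₁ v ≤ vdeg G v := Set.ncard_le_ncard hsubN (Set.toFinite _)
      have h2 := hd4 v
      omega
    have hNeq : G₁.neighborSet v = G.neighborSet v := by
      apply Set.eq_of_subset_of_ncard_le hsubN _ (Set.toFinite _)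
      rw [← vdeg, ← vdeg, h4G, hvd4]
    have hSv : ∀ y, s(v, y) ∉ (Cs 0).2.edges := by
      intro y hy
      have hyN : y ∈ G.neighborSet v := (Cs 0).2.adj_of_mem_edges hy
      rw [← hNeq] at hyN
      exact ((hadj1 v y).mp hyN).2 hy
    have hane : ∀ y, G₁.Adj v y → y ≠ v := fun y h => h.ne'
    have hab : ∀ y₁ y₂ : V, y₁ ∈ A → y₂ ∈ B → G₁.Adj v y₁ → G₁.Adj v y₂ → y₁ ≠ y₂ := by
      intro y₁ y₂ h1 h2 ha hb heq
      have hm : y₁ ∈ A ∩ B := ⟨h1, heq ▸ h2⟩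
      rw [hIn] at hm
      exact hane y₁ ha hm
    have hNset : G.neighborSet v = {a₁, a₂, b₁, b₂} := by
      symm
      apply Set.eq_of_subset_of_ncard_le
      · rintro y (rfl | rfl | rfl | rfl)
        · exact hsubN ((SimpleGraph.mem_neighborSet _ _ _).mpr hva1)
        · exact hsubN ((SimpleGraph.mem_neighborSet _ _ _).mpr hva2)
        · exact hsubN ((SimpleGraph.mem_neighborSet _ _ _).mpr hvb1)
        · exact hsubN ((SimpleGraph.mem_neighborSet _ _ _).mpr hvb2)
      · rw [← vdeg, h4G]
        have e1 : a₁ ≠ b₁ := hab a₁ b₁ ha1A hb1B hva1 hvb1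
        have e2 : a₁ ≠ b₂ := hab a₁ b₂ ha1A hb2B hva1 hvb2
        have e3 : a₂ ≠ b₁ := hab a₂ b₁ ha2A hb1B hva2 hvb1
        have e4 : a₂ ≠ b₂ := hab a₂ b₂ ha2A hb2B hva2 hvb2
        rw [Set.ncard_insert_of_notMem (by simp [ha12, e1, e2]) (Set.toFinite _),
          Set.ncard_insert_of_notMem (by simp [e3, e4]) (Set.toFinite _),
          Set.ncard_pair hb12]
      · exact Set.toFinite _
    have hsideA : ∀ y, G.Adj v y → y ∈ A → y = a₁ ∨ y = a₂ := by
      intro y hy hyA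
      have hyN : y ∈ G.neighborSet v := (SimpleGraph.mem_neighborSet _ _ _).mpr hy
      rw [hNset] at hyN
      rcases hyN with rfl | rfl | rfl | rfl
      · exact Or.inl rfl
      · exact Or.inr rfl
      · exfalso
        have hm : y ∈ A ∩ B := ⟨hyA, hb1B⟩
        rw [hIn] at hm
        exact hane y hvb1 hm
      · exfalso
        have hm : y ∈ A ∩ B := ⟨hyA, hb2B⟩
        rw [hIn] at hm
        exact hane y hvb2 hm
    have hsideB : ∀ y, G.Adj v y → y ∈ B → y = b₁ ∨ y = b₂ := by
      intro y hy hyB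
      have hyN : y ∈ G.neighborSet v := (SimpleGraph.mem_neighborSet _ _ _).mpr hy
      rw [hNset] at hyN
      rcases hyN with rfl | rfl | rfl | rfl
      · exfalso
        have hm : y ∈ A ∩ B := ⟨ha1A, hyB⟩
        rw [hIn] at hm
        exact hane y hva1 hm
      · exfalso
        have hm : y ∈ A ∩ B := ⟨ha2A, hyB⟩
        rw [hIn] at hm
        exact hane y hva2 hm
      · exact Or.inl rfl
      · exact Or.inr rfl
    by_cases hcycv : ∃ (i : Fin (k + 1)) (y : V), s(v, y) ∈ (Cs i).2.edges
    · obtain ⟨i, y, hy⟩ := hcycv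
      have hi0 : i ≠ 0 := by rintro rfl; exact hSv y hy
      have hvsup : v ∈ (Cs i).2.support := (Cs i).2.fst_mem_support_of_mem_edges hy
      obtain ⟨w, z, r, hwz, hset, hvr, hredges⟩ :=
        cycle_nbrs_s13 ((Cs i).2.rotate v hvsup) ((hcyc i).rotate hvsup)
      have hmemiff : ∀ e : Sym2 V, e ∈ ((Cs i).2.rotate v hvsup).edges ↔ e ∈ (Cs i).2.edges :=
        fun e => (SimpleGraph.Walk.rotate_edges _ v hvsup).mem_iff
      have hwE : s(v, w) ∈ (Cs i).2.edges := by
        rw [← hmemiff]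
        have hm : w ∈ ({w, z} : Set V) := Or.inl rfl
        rw [← hset] at hm
        exact hm
      have hzE : s(v, z) ∈ (Cs i).2.edges := by
        rw [← hmemiff]
        have hm : z ∈ ({w, z} : Set V) := Or.inr rfl
        rw [← hset] at hm
        exact hm
      have hG1e : ∀ e ∈ (Cs i).2.edges, e ∈ G₁.edgeSet := by
        intro e he
        rw [hG₁def, SimpleGraph.edgeSet_deleteEdges]
        exact ⟨(Cs i).2.edges_subset_edgeSet he, hdisj i 0 hi0 e he⟩
      have hrAB : ∀ e ∈ r.edges, (∀ x ∈ e, x ∈ A) ∨ (∀ x ∈ e, x ∈ B) :=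
        fun e he => hedgesAB e (hG1e e ((hmemiff e).mp (hredges e he)))
      have hwadj : G.Adj v w := (Cs i).2.adj_of_mem_edges hwE
      have hzadj : G.Adj v z := (Cs i).2.adj_of_mem_edges hzE
      have hcceq : c s(v, w) = c s(v, z) := by
        have hzAB : z ∈ A ∪ B := by rw [hUn]; trivial
        rcases hzAB with hzA | hzB
        · have hwA : w ∈ A := walk_same_side hIn r hvr hrAB hzA
          rcases hsideA z hzadj hzA with rfl | rfl <;>
            rcases hsideA w hwadj hwA with rfl | rfl
          · exact absurd rfl hwz
          · exact hca.symm
          · exact hca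
          · exact absurd rfl hwz
        · have hwB : w ∈ B := walk_same_side (by rw [Set.inter_comm]; exact hIn) r hvr
            (fun e he => (hrAB e he).symm) hzB
          rcases hsideB z hzadj hzB with rfl | rfl <;>
            rcases hsideB w hwadj hwB with rfl | rfl
          · exact absurd rfl hwz
          · exact hcb.symm
          · exact hcb
          · exact absurd rfl hwz
      exact hwz (Sym2.congr_right.mp (List.inj_on_of_nodup_map (hrb i) hwE hzE hcceq))
    · push_neg at hcycv
      apply hall.2 v
      have hHadj : ∀ y, (G.deleteEdges {e | ∃ i, e ∈ (Cs i).2.edges}).Adj v y ↔ G.Adj v y := by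
        intro y
        rw [SimpleGraph.deleteEdges_adj]
        constructor
        · exact fun h => h.1
        · exact fun h => ⟨h, fun hm => by obtain ⟨i, hi⟩ := hm; exact hcycv i y hi⟩
      refine ⟨?_, A, B, hUn, hIn, ?_, ⟨a₁, a₂, ha12, ha1A, ha2A, ?_, ?_, hca⟩,
        ⟨b₁, b₂, hb12, hb1B, hb2B, ?_, ?_, hcb⟩⟩
      · rw [vdeg]
        have hne : (G.deleteEdges {e | ∃ i, e ∈ (Cs i).2.edges}).neighborSet v
            = G.neighborSet v := by
          ext y
          simp only [SimpleGraph.mem_neighborSet]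
          exact hHadj y
        rw [hne, ← vdeg]
        exact h4G
      · intro e he
        apply hedgesAB
        rw [SimpleGraph.edgeSet_deleteEdges] at he
        rw [hG₁def, SimpleGraph.edgeSet_deleteEdges]
        exact ⟨he.1, fun h0 => he.2 ⟨0, h0⟩⟩
      · exact (hHadj a₁).mpr ((hadj1 v a₁).mp hva1).1
      · exact (hHadj a₂).mpr ((hadj1 v a₂).mp hva2).1
      · exact (hHadj b₁).mpr ((hadj1 v b₁).mp hvb1).1
      · exact (hHadj b₂).mpr ((hadj1 v b₂).mp hvb2).1
  exact ⟨⟨p1, p2, p3, p4, p5⟩, p6⟩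
end
end

section
/- Let G be a good colored graph (respectively, an almost-good colored graph) and let C be a rainbow triangle in G. Then the graph G \ C obtained by deleting the three edges of C is a good colored graph (respectively, an almost-good colored graph). -/
open scoped Classical

noncomputable section

/-- An almost-good colored graph: connected (up to isolated vertices), properties
(1), (2), (3), (5), (6) of a good colored graph, and instead of (4): exactly one
nonisolated vertex has color degree 1, this vertex has degree 2, and every other
nonisolated vertex has color degree 2. -/
def IsAlmostGood {V C : Type*} (G : SimpleGraph V) (c : Sym2 V → C) : Prop :=
  ConnUpToIso G ∧
  (∀ x, Even (vdeg G x)) ∧ (∀ x, vdeg G x ≤ 4) ∧ TriCond G c ∧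
  (∃! x : V, vdeg G x ≠ 0 ∧ colorDeg G c x = 1) ∧
  (∀ x, vdeg G x ≠ 0 → colorDeg G c x = 1 → vdeg G x = 2) ∧
  (∀ x, vdeg G x ≠ 0 → colorDeg G c x = 1 ∨ colorDeg G c x = 2) ∧
  (∀ α : C, {x : V | ∃ y, G.Adj x y ∧ c s(x, y) = α}.ncard ≤ 3) ∧
  (∀ v, ¬ IsTypeX G c v)

set_option linter.unusedSectionVars false

section Infra
variable {V C : Type*} [Fintype V] [DecidableEq V] {G : SimpleGraph V} {c : Sym2 V → C}
variable {p q r : V} {E₃ : Set (Sym2 V)}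

lemma vdeg_ne_zero {u : V} (h : G.Adj p u) : vdeg G p ≠ 0 := by
  have h' : 0 < vdeg G p := (Set.ncard_pos (Set.toFinite _)).mpr ⟨u, h⟩
  omega

lemma notMem_tripleE (hE : E₃ = {s(p,q), s(q,r), s(p,r)})
    {w u : V} (h1 : w ≠ p) (h2 : w ≠ q) (h3 : w ≠ r) : s(w,u) ∉ E₃ := by
  subst hE
  simp only [Set.mem_insert_iff, Set.mem_singleton_iff, Sym2.eq_iff]
  push_neg
  refine ⟨⟨fun h => absurd h h1, fun h => absurd h h2⟩,
    ⟨fun h => absurd h h2, fun h => absurd h h3⟩,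
    ⟨fun h => absurd h h1, fun h => absurd h h3⟩⟩

lemma mem_of_mem_tripleE (hE : E₃ = {s(p,q), s(q,r), s(p,r)})
    {e : Sym2 V} (he : e ∈ E₃) {u : V} (hu : u ∈ e) : u = p ∨ u = q ∨ u = r := by
  subst hE
  rcases he with h | h | h <;> subst h <;> rcases Sym2.mem_iff.mp hu with h | h <;> tauto

lemma adj_other (hE : E₃ = {s(p,q), s(q,r), s(p,r)})
    {w u : V} (h1 : w ≠ p) (h2 : w ≠ q) (h3 : w ≠ r) :
    (G.deleteEdges E₃).Adj w u ↔ G.Adj w u := by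
  rw [SimpleGraph.deleteEdges_adj]
  exact ⟨fun h => h.1, fun h => ⟨h, notMem_tripleE hE h1 h2 h3⟩⟩

lemma nbr_other (hE : E₃ = {s(p,q), s(q,r), s(p,r)})
    {w : V} (h1 : w ≠ p) (h2 : w ≠ q) (h3 : w ≠ r) :
    (G.deleteEdges E₃).neighborSet w = G.neighborSet w := by
  ext u
  simp only [SimpleGraph.mem_neighborSet]
  exact adj_other hE h1 h2 h3

lemma vdeg_other (hE : E₃ = {s(p,q), s(q,r), s(p,r)})
    {w : V} (h1 : w ≠ p) (h2 : w ≠ q) (h3 : w ≠ r) :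
    vdeg (G.deleteEdges E₃) w = vdeg G w := by
  rw [vdeg, vdeg, nbr_other hE h1 h2 h3]

lemma colorDeg_other (hE : E₃ = {s(p,q), s(q,r), s(p,r)})
    {w : V} (h1 : w ≠ p) (h2 : w ≠ q) (h3 : w ≠ r) :
    colorDeg (G.deleteEdges E₃) c w = colorDeg G c w := by
  rw [colorDeg, colorDeg]
  congr 1
  ext α
  simp only [Set.mem_setOf_eq]
  constructor
  · rintro ⟨u, hu, hc⟩; exact ⟨u, ((adj_other hE h1 h2 h3).mp hu), hc⟩
  · rintro ⟨u, hu, hc⟩; exact ⟨u, ((adj_other hE h1 h2 h3).mpr hu), hc⟩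

lemma nbr_p (hE : E₃ = {s(p,q), s(q,r), s(p,r)})
    (hpq : G.Adj p q) (hqr : G.Adj q r) (hpr : G.Adj p r) :
    (G.deleteEdges E₃).neighborSet p = G.neighborSet p \ {q, r} := by
  have hpq' := hpq.ne
  have hpr' := hpr.ne
  have hqr' := hqr.ne
  ext u
  simp only [SimpleGraph.mem_neighborSet, SimpleGraph.deleteEdges_adj, Set.mem_diff,
    Set.mem_insert_iff, Set.mem_singleton_iff, hE, Sym2.eq_iff]
  tauto

lemma vdeg_p (hE : E₃ = {s(p,q), s(q,r), s(p,r)})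
    (hpq : G.Adj p q) (hqr : G.Adj q r) (hpr : G.Adj p r) :
    vdeg (G.deleteEdges E₃) p = vdeg G p - 2 := by
  rw [vdeg, vdeg, nbr_p hE hpq hqr hpr, Set.ncard_diff (by
    intro u hu
    simp only [Set.mem_insert_iff, Set.mem_singleton_iff] at hu
    simp only [SimpleGraph.mem_neighborSet]
    rcases hu with rfl | rfl
    exacts [hpq, hpr])]
  rw [Set.ncard_pair hqr.ne]

lemma deg_tri (heven : ∀ w, Even (vdeg G w)) (hle : ∀ w, vdeg G w ≤ 4)
    (hadj : G.Adj p q) : vdeg G p = 2 ∨ vdeg G p = 4 := by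
  have h0 := vdeg_ne_zero hadj
  rcases heven p with ⟨k, hk⟩
  have := hle p
  omega

end Infra
section Part2
variable {V C : Type*} [Fintype V] [DecidableEq V] {G : SimpleGraph V} {c : Sym2 V → C}
variable {p q r : V} {E₃ : Set (Sym2 V)}

lemma nbr4 (hpq : G.Adj p q) (hpr : G.Adj p r) (hqr : q ≠ r) (h4 : vdeg G p = 4) :
    ∃ w₁ w₂ : V, w₁ ≠ w₂ ∧ w₁ ≠ q ∧ w₁ ≠ r ∧ w₂ ≠ q ∧ w₂ ≠ r ∧
      G.Adj p w₁ ∧ G.Adj p w₂ ∧ G.neighborSet p = {q, r, w₁, w₂} := by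
  have hsub : ({q, r} : Set V) ⊆ G.neighborSet p := by
    intro u hu
    simp only [Set.mem_insert_iff, Set.mem_singleton_iff] at hu
    simp only [SimpleGraph.mem_neighborSet]
    rcases hu with rfl | rfl
    exacts [hpq, hpr]
  have hd : (G.neighborSet p \ {q, r}).ncard = 2 := by
    rw [Set.ncard_diff hsub, Set.ncard_pair hqr]
    have : (G.neighborSet p).ncard = 4 := h4
    omega
  obtain ⟨w₁, w₂, hne, hset⟩ := Set.ncard_eq_two.mp hd
  have hw₁ : w₁ ∈ G.neighborSet p \ {q, r} := by rw [hset]; exact Set.mem_insert _ _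
  have hw₂ : w₂ ∈ G.neighborSet p \ {q, r} := by rw [hset]; exact Set.mem_insert_of_mem _ rfl
  simp only [Set.mem_diff, Set.mem_insert_iff, Set.mem_singleton_iff,
    SimpleGraph.mem_neighborSet] at hw₁ hw₂
  push_neg at hw₁ hw₂
  refine ⟨w₁, w₂, hne, hw₁.2.1, hw₁.2.2, hw₂.2.1, hw₂.2.2, hw₁.1, hw₂.1, ?_⟩
  ext u
  constructor
  · intro hu
    simp only [Set.mem_insert_iff, Set.mem_singleton_iff]
    by_cases h1 : u = q
    · tauto
    by_cases h2 : u = r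
    · tauto
    have hm : u ∈ G.neighborSet p \ {q, r} := by
      simp only [Set.mem_diff, Set.mem_insert_iff, Set.mem_singleton_iff]
      tauto
    rw [hset] at hm
    simp only [Set.mem_insert_iff, Set.mem_singleton_iff] at hm
    tauto
  · intro hu
    simp only [Set.mem_insert_iff, Set.mem_singleton_iff] at hu
    simp only [SimpleGraph.mem_neighborSet]
    rcases hu with rfl | rfl | rfl | rfl
    exacts [hpq, hpr, hw₁.1, hw₂.1]

lemma colorsAt_eq (hpq : G.Adj p q) (hpr : G.Adj p r)
    (hc3 : c s(p,q) ≠ c s(p,r)) (Hcd : colorDeg G c p = 2) :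
    {α : C | ∃ u, G.Adj p u ∧ c s(p,u) = α} = {c s(p,q), c s(p,r)} := by
  have hfin : {α : C | ∃ u, G.Adj p u ∧ c s(p,u) = α}.Finite := by
    have : {α : C | ∃ u, G.Adj p u ∧ c s(p,u) = α} =
        (fun u => c s(p,u)) '' (G.neighborSet p) := by
      ext α
      simp only [Set.mem_setOf_eq, Set.mem_image, SimpleGraph.mem_neighborSet]
    rw [this]
    exact (Set.toFinite _).image _
  have hsub : ({c s(p,q), c s(p,r)} : Set C) ⊆ {α : C | ∃ u, G.Adj p u ∧ c s(p,u) = α} := by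
    intro α hα
    rcases hα with rfl | hα
    · exact ⟨q, hpq, rfl⟩
    · rcases hα with rfl
      exact ⟨r, hpr, rfl⟩
  refine (Set.eq_of_subset_of_ncard_le hsub ?_ hfin).symm
  rw [Set.ncard_pair hc3]
  exact le_of_eq Hcd

lemma color_mem (hpq : G.Adj p q) (hpr : G.Adj p r)
    (hc3 : c s(p,q) ≠ c s(p,r)) (Hcd : colorDeg G c p = 2)
    {u : V} (h : G.Adj p u) : c s(p,u) = c s(p,q) ∨ c s(p,u) = c s(p,r) := by
  have := colorsAt_eq hpq hpr hc3 Hcd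
  have hmem : c s(p,u) ∈ {α : C | ∃ w, G.Adj p w ∧ c s(p,w) = α} := ⟨u, h, rfl⟩
  rw [this] at hmem
  exact hmem

lemma four_le_span {s : Set V} (h3 : s.ncard ≤ 3) {a b d e : V}
    (ha : a ∈ s) (hb : b ∈ s) (hd : d ∈ s) (he : e ∈ s)
    (hab : a ≠ b) (had : a ≠ d) (hae : a ≠ e) (hbd : b ≠ d) (hbe : b ≠ e) (hde : d ≠ e) :
    False := by
  have hsub : ({a, b, d, e} : Set V) ⊆ s := by
    intro u hu
    simp only [Set.mem_insert_iff, Set.mem_singleton_iff] at hu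
    rcases hu with rfl | rfl | rfl | rfl
    exacts [ha, hb, hd, he]
  have h4 : ({a, b, d, e} : Set V).ncard = 4 := by
    have hm1 : a ∉ ({b, d, e} : Set V) := by
      simp only [Set.mem_insert_iff, Set.mem_singleton_iff]
      push_neg
      exact ⟨hab, had, hae⟩
    have hm2 : b ∉ ({d, e} : Set V) := by
      simp only [Set.mem_insert_iff, Set.mem_singleton_iff]
      push_neg
      exact ⟨hbd, hbe⟩
    rw [Set.ncard_insert_of_notMem hm1, Set.ncard_insert_of_notMem hm2, Set.ncard_pair hde]
  have := Set.ncard_le_ncard hsub (Set.toFinite s)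
  omega

end Part2
section Part3
variable {V C : Type*} [Fintype V] [DecidableEq V] {G : SimpleGraph V} {c : Sym2 V → C}
variable {p q r : V} {E₃ : Set (Sym2 V)}

lemma cswap (c : Sym2 V → C) (a b : V) : c s(a,b) = c s(b,a) := by rw [Sym2.eq_swap]

/-- The span of a color contains both endpoints of any edge of that color. -/
lemma mem_span_left {α : C} {a b : V} (h : G.Adj a b) (hc : c s(a,b) = α) :
    a ∈ {w : V | ∃ u, G.Adj w u ∧ c s(w,u) = α} := ⟨b, h, hc⟩

lemma mem_span_right {α : C} {a b : V} (h : G.Adj a b) (hc : c s(a,b) = α) :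
    b ∈ {w : V | ∃ u, G.Adj w u ∧ c s(w,u) = α} :=
  ⟨a, h.symm, by rw [cswap c b a]; exact hc⟩

lemma exists_extra
    (H5 : ∀ α : C, {w : V | ∃ u, G.Adj w u ∧ c s(w,u) = α}.ncard ≤ 3)
    (hpq : G.Adj p q) (hpr : G.Adj p r) (hqr : q ≠ r)
    (hc3 : c s(p,q) ≠ c s(p,r)) (h4 : vdeg G p = 4) (Hcd : colorDeg G c p = 2) :
    ∃ w, G.Adj p w ∧ w ≠ q ∧ w ≠ r ∧ c s(p,w) = c s(p,q) := by
  obtain ⟨w₁, w₂, hw12, h1q, h1r, h2q, h2r, ha1, ha2, -⟩ := nbr4 hpq hpr hqr h4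
  have hcol1 := color_mem hpq hpr hc3 Hcd ha1
  have hcol2 := color_mem hpq hpr hc3 Hcd ha2
  have hne : c s(p,w₁) ≠ c s(p,w₂) := by
    intro heq
    rcases hcol1 with h | h
    · -- both have color c(pq) : span of c(pq) contains p,q,w₁,w₂
      exact four_le_span (H5 (c s(p,q)))
        (mem_span_left hpq rfl) (mem_span_right hpq rfl)
        (mem_span_right ha1 h) (mem_span_right ha2 (heq ▸ h))
        hpq.ne ha1.ne ha2.ne (fun e => h1q e.symm) (fun e => h2q e.symm) hw12
    · exact four_le_span (H5 (c s(p,r)))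
        (mem_span_left hpr rfl) (mem_span_right hpr rfl)
        (mem_span_right ha1 h) (mem_span_right ha2 (heq ▸ h))
        hpr.ne ha1.ne ha2.ne (fun e => h1r e.symm) (fun e => h2r e.symm) hw12
  rcases hcol1 with h | h
  · exact ⟨w₁, ha1, h1q, h1r, h⟩
  · rcases hcol2 with h' | h'
    · exact ⟨w₂, ha2, h2q, h2r, h'⟩
    · exact absurd (h.trans h'.symm) hne

lemma shared
    (H5 : ∀ α : C, {w : V | ∃ u, G.Adj w u ∧ c s(w,u) = α}.ncard ≤ 3)
    (hpq : G.Adj p q) (hqr : G.Adj q r) (hpr : G.Adj p r)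
    (hc1 : c s(p,q) ≠ c s(q,r)) (hc3 : c s(p,q) ≠ c s(p,r))
    (h4p : vdeg G p = 4) (h4q : vdeg G q = 4)
    (Hcdp : colorDeg G c p = 2) (Hcdq : colorDeg G c q = 2) :
    ∃ w, G.Adj p w ∧ G.Adj q w ∧ w ≠ p ∧ w ≠ q ∧ w ≠ r ∧
      c s(p,w) = c s(p,q) ∧ c s(q,w) = c s(p,q) := by
  obtain ⟨w, hpw, hwq, hwr, hcw⟩ := exists_extra H5 hpq hpr hqr.ne hc3 h4p Hcdp
  have hc1' : c s(q,p) ≠ c s(q,r) := by rw [cswap c q p]; exact hc1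
  obtain ⟨w', hqw', hw'p, hw'r, hcw'⟩ :=
    exists_extra H5 hpq.symm hqr hpr.ne hc1' h4q Hcdq
  have hcc : c s(q,w') = c s(p,q) := by rw [hcw']; exact cswap c q p
  by_cases hww : w = w'
  · subst hww
    exact ⟨w, hpw, hqw', hpw.ne', hwq, hwr, hcw, hcc⟩
  · exact (four_le_span (H5 (c s(p,q)))
        (mem_span_left hpq rfl) (mem_span_right hpq rfl)
        (mem_span_right hpw hcw) (mem_span_right hqw' hcc)
        hpq.ne hpw.ne (fun e => hw'p e.symm) (fun e => hwq e.symm) hqw'.ne hww).elim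
end Part3
section Part4
variable {V C : Type*} [Fintype V] [DecidableEq V] {G : SimpleGraph V} {c : Sym2 V → C}
variable {p q r : V} {E₃ : Set (Sym2 V)}

lemma cross44
    (H5 : ∀ α : C, {w : V | ∃ u, G.Adj w u ∧ c s(w,u) = α}.ncard ≤ 3)
    (Hcd4 : ∀ w, vdeg G w = 4 → colorDeg G c w = 2)
    (hle : ∀ w, vdeg G w ≤ 4)
    (hpq : G.Adj p q) (hqr : G.Adj q r) (hpr : G.Adj p r)
    (hc1 : c s(p,q) ≠ c s(q,r)) (hc3 : c s(p,q) ≠ c s(p,r))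
    (hE : E₃ = {s(p,q), s(q,r), s(p,r)})
    (h4p : vdeg G p = 4) (h4q : vdeg G q = 4)
    {v : V} {A B : Set V}
    (hI : A ∩ B = {v})
    (hEdges : ∀ e ∈ (G.deleteEdges E₃).edgeSet, (∀ x ∈ e, x ∈ A) ∨ (∀ x ∈ e, x ∈ B))
    (hpA : p ∈ A) (hqB : q ∈ B) (hpv : p ≠ v) (hqv : q ≠ v) (hrv : r ≠ v)
    {a₁ a₂ b₁ b₂ : V}
    (ha12 : a₁ ≠ a₂) (ha1A : a₁ ∈ A) (ha2A : a₂ ∈ A)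
    (hva1 : (G.deleteEdges E₃).Adj v a₁) (hva2 : (G.deleteEdges E₃).Adj v a₂)
    (hca : c s(v,a₁) = c s(v,a₂))
    (hb12 : b₁ ≠ b₂) (hb1B : b₁ ∈ B) (hb2B : b₂ ∈ B)
    (hvb1 : (G.deleteEdges E₃).Adj v b₁) (hvb2 : (G.deleteEdges E₃).Adj v b₂)
    (hcb : c s(v,b₁) = c s(v,b₂)) : False := by
  have hvp : v ≠ p := hpv.symm
  have hvq : v ≠ q := hqv.symm
  have hvr : v ≠ r := hrv.symm
  have hva1' : G.Adj v a₁ := ((SimpleGraph.deleteEdges_adj ..).mp hva1).1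
  have hva2' : G.Adj v a₂ := ((SimpleGraph.deleteEdges_adj ..).mp hva2).1
  have hvb1' : G.Adj v b₁ := ((SimpleGraph.deleteEdges_adj ..).mp hvb1).1
  have hvb2' : G.Adj v b₂ := ((SimpleGraph.deleteEdges_adj ..).mp hvb2).1
  have hmemv : ∀ {i : V}, i ∈ A → i ∈ B → i = v := by
    intro i hiA hiB
    have : i ∈ A ∩ B := ⟨hiA, hiB⟩
    rw [hI] at this
    exact this
  have hab : ∀ i, (i = a₁ ∨ i = a₂) → ∀ j, (j = b₁ ∨ j = b₂) → i ≠ j := by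
    rintro i hi j hj rfl
    have hiA : i ∈ A := by rcases hi with rfl | rfl; exacts [ha1A, ha2A]
    have hiB : i ∈ B := by rcases hj with rfl | rfl; exacts [hb1B, hb2B]
    have := hmemv hiA hiB
    subst this
    rcases hi with rfl | rfl
    · exact hva1'.ne rfl
    · exact hva2'.ne rfl
  have hsub : ({a₁, a₂, b₁, b₂} : Set V) ⊆ G.neighborSet v := by
    intro u hu
    simp only [Set.mem_insert_iff, Set.mem_singleton_iff] at hu
    simp only [SimpleGraph.mem_neighborSet]
    rcases hu with rfl | rfl | rfl | rfl
    exacts [hva1', hva2', hvb1', hvb2']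
  have hc4 : ({a₁, a₂, b₁, b₂} : Set V).ncard = 4 := by
    have m1 : a₁ ∉ ({a₂, b₁, b₂} : Set V) := by
      simp only [Set.mem_insert_iff, Set.mem_singleton_iff]
      push_neg
      exact ⟨ha12, hab a₁ (Or.inl rfl) b₁ (Or.inl rfl), hab a₁ (Or.inl rfl) b₂ (Or.inr rfl)⟩
    have m2 : a₂ ∉ ({b₁, b₂} : Set V) := by
      simp only [Set.mem_insert_iff, Set.mem_singleton_iff]
      push_neg
      exact ⟨hab a₂ (Or.inr rfl) b₁ (Or.inl rfl), hab a₂ (Or.inr rfl) b₂ (Or.inr rfl)⟩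
    rw [Set.ncard_insert_of_notMem m1, Set.ncard_insert_of_notMem m2, Set.ncard_pair hb12]
  have hnbrv : G.neighborSet v = {a₁, a₂, b₁, b₂} :=
    (Set.eq_of_subset_of_ncard_le hsub (by rw [hc4]; exact hle v) (Set.toFinite _)).symm
  have h4v : vdeg G v = 4 := by rw [vdeg, hnbrv, hc4]
  have hcdv := Hcd4 v h4v
  have hαβ : c s(v,a₁) ≠ c s(v,b₁) := by
    intro heq
    have hset : {γ : C | ∃ u, G.Adj v u ∧ c s(v,u) = γ} = {c s(v,a₁)} := by
      ext γ
      simp only [Set.mem_setOf_eq, Set.mem_singleton_iff]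
      constructor
      · rintro ⟨u, hu, rfl⟩
        have hu' : u ∈ G.neighborSet v := hu
        rw [hnbrv] at hu'
        simp only [Set.mem_insert_iff, Set.mem_singleton_iff] at hu'
        rcases hu' with rfl | rfl | rfl | rfl
        · rfl
        · exact hca.symm
        · exact heq.symm
        · rw [← hcb]; exact heq.symm
      · rintro rfl
        exact ⟨a₁, hva1', rfl⟩
    rw [colorDeg, hset, Set.ncard_singleton] at hcdv
    exact absurd hcdv (by norm_num)
  obtain ⟨w, hpw, hqw, hwp, hwq, hwr, hcwp, hcwq⟩ :=
    shared H5 hpq hqr hpr hc1 hc3 h4p h4q (Hcd4 p h4p) (Hcd4 q h4q)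
  have hpw' : (G.deleteEdges E₃).Adj p w := by
    rw [SimpleGraph.deleteEdges_adj]
    exact ⟨hpw, by rw [Sym2.eq_swap]; exact notMem_tripleE hE hwp hwq hwr⟩
  have hqw' : (G.deleteEdges E₃).Adj q w := by
    rw [SimpleGraph.deleteEdges_adj]
    exact ⟨hqw, by rw [Sym2.eq_swap]; exact notMem_tripleE hE hwp hwq hwr⟩
  have hwA : w ∈ A := by
    rcases hEdges s(p,w) ((SimpleGraph.mem_edgeSet _).mpr hpw') with h | h
    · exact h w (Sym2.mem_mk_right p w)
    · exact absurd (hmemv hpA (h p (Sym2.mem_mk_left p w))) hpv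
  have hwB : w ∈ B := by
    rcases hEdges s(q,w) ((SimpleGraph.mem_edgeSet _).mpr hqw') with h | h
    · exact absurd (hmemv (h q (Sym2.mem_mk_left q w)) hqB) hqv
    · exact h w (Sym2.mem_mk_right q w)
  have hwv : w = v := hmemv hwA hwB
  have hpv' : G.Adj p v := hwv ▸ hpw
  have hpmem : p ∈ G.neighborSet v := hpv'.symm
  rw [hnbrv] at hpmem
  simp only [Set.mem_insert_iff, Set.mem_singleton_iff] at hpmem
  have hpa : p = a₁ ∨ p = a₂ := by
    rcases hpmem with h | h | h | h
    · exact Or.inl h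
    · exact Or.inr h
    · exact absurd (hmemv hpA (h ▸ hb1B)) hpv
    · exact absurd (hmemv hpA (h ▸ hb2B)) hpv
  have hαp : c s(v,p) = c s(v,a₁) := by
    rcases hpa with rfl | rfl
    · rfl
    · exact hca.symm
  have hpqα : c s(p,q) = c s(v,a₁) := by
    rw [← hcwp, hwv, cswap c p v]
    exact hαp
  have hqa : ∀ i, (i = a₁ ∨ i = a₂) → q ≠ i := by
    intro i hi he
    apply hqv
    apply hmemv _ hqB
    rw [he]
    rcases hi with rfl | rfl
    exacts [ha1A, ha2A]
  exact four_le_span (H5 (c s(v,a₁)))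
    (mem_span_left hva1' rfl) (mem_span_right hva1' rfl)
    (mem_span_right hva2' hca.symm)
    (mem_span_right hpq hpqα)
    hva1'.ne hva2'.ne hvq (ha12) (fun e => hqa a₁ (Or.inl rfl) e.symm)
    (fun e => hqa a₂ (Or.inr rfl) e.symm)
end Part4
section Part5
variable {V C : Type*} [Fintype V] [DecidableEq V] {G : SimpleGraph V} {c : Sym2 V → C}
variable {p q r : V} {E₃ : Set (Sym2 V)}

lemma nbr2 (hpq : G.Adj p q) (hpr : G.Adj p r) (hqr : q ≠ r) (h2 : vdeg G p = 2) :
    G.neighborSet p = {q, r} := by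
  have hsub : ({q, r} : Set V) ⊆ G.neighborSet p := by
    intro u hu
    simp only [Set.mem_insert_iff, Set.mem_singleton_iff] at hu
    simp only [SimpleGraph.mem_neighborSet]
    rcases hu with rfl | rfl
    exacts [hpq, hpr]
  exact (Set.eq_of_subset_of_ncard_le hsub
    (by rw [Set.ncard_pair hqr]; exact le_of_eq h2) (Set.toFinite _)).symm

lemma tripleE_perm (hE : E₃ = {s(p,q), s(q,r), s(p,r)}) :
    E₃ = {s(q,p), s(p,r), s(q,r)} ∧ E₃ = {s(r,p), s(p,q), s(r,q)} ∧
    E₃ = {s(p,r), s(r,q), s(p,q)} ∧ E₃ = {s(q,r), s(r,p), s(q,p)} ∧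
    E₃ = {s(r,q), s(q,p), s(r,p)} := by
  refine ⟨?_, ?_, ?_, ?_, ?_⟩ <;>
    · rw [hE]
      ext e
      simp only [Set.mem_insert_iff, Set.mem_singleton_iff]
      constructor <;>
        · rintro (rfl | rfl | rfl) <;> simp [Sym2.eq_iff] <;> tauto

lemma typeX_free
    (H5 : ∀ α : C, {w : V | ∃ u, G.Adj w u ∧ c s(w,u) = α}.ncard ≤ 3)
    (Hcd4 : ∀ w, vdeg G w = 4 → colorDeg G c w = 2)
    (heven : ∀ w, Even (vdeg G w)) (hle : ∀ w, vdeg G w ≤ 4)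
    (HnoX : ∀ u, ¬ IsTypeX G c u)
    (hpq : G.Adj p q) (hqr : G.Adj q r) (hpr : G.Adj p r)
    (hc1 : c s(p,q) ≠ c s(q,r)) (hc2 : c s(q,r) ≠ c s(p,r)) (hc3 : c s(p,q) ≠ c s(p,r))
    (hE : E₃ = {s(p,q), s(q,r), s(p,r)})
    {v : V} {A B : Set V}
    (hdeg4' : vdeg (G.deleteEdges E₃) v = 4)
    (hU : A ∪ B = Set.univ) (hI : A ∩ B = {v})
    (hEdges : ∀ e ∈ (G.deleteEdges E₃).edgeSet, (∀ x ∈ e, x ∈ A) ∨ (∀ x ∈ e, x ∈ B))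
    (hA : ∃ a₁ a₂ : V, a₁ ≠ a₂ ∧ a₁ ∈ A ∧ a₂ ∈ A ∧ (G.deleteEdges E₃).Adj v a₁ ∧
      (G.deleteEdges E₃).Adj v a₂ ∧ c s(v,a₁) = c s(v,a₂))
    (hB : ∃ b₁ b₂ : V, b₁ ≠ b₂ ∧ b₁ ∈ B ∧ b₂ ∈ B ∧ (G.deleteEdges E₃).Adj v b₁ ∧
      (G.deleteEdges E₃).Adj v b₂ ∧ c s(v,b₁) = c s(v,b₂))
    (hpA : p ∈ A) (hqB : q ∈ B) (hrB : r ∈ B) : False := by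
  obtain ⟨hEq, hEr, hEprq, hEqrp, hErq⟩ := tripleE_perm hE
  obtain ⟨a₁, a₂, ha12, ha1A, ha2A, hva1, hva2, hca⟩ := hA
  obtain ⟨b₁, b₂, hb12, hb1B, hb2B, hvb1, hvb2, hcb⟩ := hB
  have adjG : ∀ {i j : V}, (G.deleteEdges E₃).Adj i j → G.Adj i j :=
    fun h => ((SimpleGraph.deleteEdges_adj ..).mp h).1
  have hdp := vdeg_p hE hpq hqr hpr
  have hdq := vdeg_p hEq hpq.symm hpr hqr
  have hdr := vdeg_p hEr hpr.symm hpq hqr.symm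
  have hpv : p ≠ v := by intro h; rw [← h] at hdeg4'; have := hle p; omega
  have hqv : q ≠ v := by intro h; rw [← h] at hdeg4'; have := hle q; omega
  have hrv : r ≠ v := by intro h; rw [← h] at hdeg4'; have := hle r; omega
  have hvp : v ≠ p := hpv.symm
  have hvq : v ≠ q := hqv.symm
  have hvr : v ≠ r := hrv.symm
  have hmemv : ∀ {i : V}, i ∈ A → i ∈ B → i = v := by
    intro i hiA hiB
    have : i ∈ A ∩ B := ⟨hiA, hiB⟩
    rw [hI] at this
    exact this
  have hUm : ∀ u : V, u ∈ A ∨ u ∈ B := by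
    intro u
    have : u ∈ A ∪ B := by rw [hU]; trivial
    exact this
  have hvdegv : vdeg G v = 4 := by rw [← vdeg_other hE hvp hvq hvr]; exact hdeg4'
  have hvAB : v ∈ A ∧ v ∈ B := by
    have : v ∈ A ∩ B := by rw [hI]; rfl
    exact ⟨this.1, this.2⟩
  rcases deg_tri heven hle hpq with hp2 | hp4
  · -- p has degree 2 : move p to the B side
    have hnbp : G.neighborSet p = {q, r} := nbr2 hpq hpr hqr.ne hp2
    have hdp0 : vdeg (G.deleteEdges E₃) p = 0 := by rw [hdp, hp2]
    refine HnoX v ⟨hvdegv, A \ {p}, B ∪ {p}, ?_, ?_, ?_, ?_, ?_⟩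
    · rw [Set.eq_univ_iff_forall]
      intro u
      simp only [Set.mem_union, Set.mem_diff, Set.mem_singleton_iff]
      rcases hUm u with h | h <;> by_cases hup : u = p <;> tauto
    · ext u
      simp only [Set.mem_inter_iff, Set.mem_union, Set.mem_diff, Set.mem_singleton_iff]
      constructor
      · rintro ⟨⟨huA, hup⟩, h | h⟩
        · exact hmemv huA h
        · exact absurd h hup
      · rintro rfl
        exact ⟨⟨hvAB.1, hvp⟩, Or.inl hvAB.2⟩
    · intro e he
      induction e using Sym2.ind with
      | _ u w =>
        by_cases hmem : s(u,w) ∈ E₃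
        · right
          intro t ht
          rcases mem_of_mem_tripleE hE hmem ht with rfl | rfl | rfl
          · exact Or.inr rfl
          · exact Or.inl hqB
          · exact Or.inl hrB
        · have he' : s(u,w) ∈ (G.deleteEdges E₃).edgeSet := by
            rw [SimpleGraph.mem_edgeSet] at he ⊢
            rw [SimpleGraph.deleteEdges_adj]
            exact ⟨he, hmem⟩
          rcases hEdges _ he' with h | h
          · left
            intro t ht
            refine ⟨h t ht, ?_⟩
            simp only [Set.mem_singleton_iff]
            rintro rfl
            rw [SimpleGraph.mem_edgeSet] at he
            rcases Sym2.mem_iff.mp ht with rfl | rfl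
            · have hw : w ∈ G.neighborSet t := he
              rw [hnbp] at hw
              rcases hw with rfl | hw
              · exact hmem (by rw [hE]; exact Set.mem_insert _ _)
              · rcases hw with rfl
                exact hmem (by rw [hE]; right; right; exact rfl)
            · have hw : u ∈ G.neighborSet t := he.symm
              rw [hnbp] at hw
              rcases hw with rfl | hw
              · exact hmem (by rw [Sym2.eq_swap, hE]; exact Set.mem_insert _ _)
              · rcases hw with rfl
                exact hmem (by rw [Sym2.eq_swap, hE]; right; right; exact rfl)
          · right
            intro t ht
            exact Or.inl (h t ht)
    · refine ⟨a₁, a₂, ha12, ⟨ha1A, ?_⟩, ⟨ha2A, ?_⟩, adjG hva1, adjG hva2, hca⟩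
      · simp only [Set.mem_singleton_iff]
        rintro rfl
        exact vdeg_ne_zero hva1.symm hdp0
      · simp only [Set.mem_singleton_iff]
        rintro rfl
        exact vdeg_ne_zero hva2.symm hdp0
    · exact ⟨b₁, b₂, hb12, Or.inl hb1B, Or.inl hb2B, adjG hvb1, adjG hvb2, hcb⟩
  · rcases deg_tri heven hle hqr with hq2 | hq4
    · rcases deg_tri heven hle hpr.symm with hr2 | hr4
      · -- q and r have degree 2 : move them to the A side
        have hnbq : G.neighborSet q = {p, r} := nbr2 hpq.symm hqr hpr.ne hq2
        have hnbr : G.neighborSet r = {p, q} := nbr2 hpr.symm hqr.symm hpq.ne hr2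
        have hdq0 : vdeg (G.deleteEdges E₃) q = 0 := by rw [hdq, hq2]
        have hdr0 : vdeg (G.deleteEdges E₃) r = 0 := by rw [hdr, hr2]
        refine HnoX v ⟨hvdegv, A ∪ {q, r}, B \ {q, r}, ?_, ?_, ?_, ?_, ?_⟩
        · rw [Set.eq_univ_iff_forall]
          intro u
          simp only [Set.mem_union, Set.mem_diff, Set.mem_insert_iff, Set.mem_singleton_iff]
          rcases hUm u with h | h <;> by_cases huq : u = q <;> by_cases hur : u = r <;> tauto
        · ext u
          simp only [Set.mem_inter_iff, Set.mem_union, Set.mem_diff, Set.mem_insert_iff,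
            Set.mem_singleton_iff]
          constructor
          · rintro ⟨h | h, huB, hn⟩
            · exact hmemv h huB
            · exact absurd h hn
          · rintro rfl
            push_neg
            exact ⟨Or.inl hvAB.1, hvAB.2, hvq, hvr⟩
        · intro e he
          induction e using Sym2.ind with
          | _ u w =>
            by_cases hmem : s(u,w) ∈ E₃
            · left
              intro t ht
              rcases mem_of_mem_tripleE hE hmem ht with rfl | rfl | rfl
              · exact Or.inl hpA
              · exact Or.inr (Or.inl rfl)
              · exact Or.inr (Or.inr rfl)
            · have he' : s(u,w) ∈ (G.deleteEdges E₃).edgeSet := by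
                rw [SimpleGraph.mem_edgeSet] at he ⊢
                rw [SimpleGraph.deleteEdges_adj]
                exact ⟨he, hmem⟩
              rcases hEdges _ he' with h | h
              · left
                intro t ht
                exact Or.inl (h t ht)
              · right
                intro t ht
                refine ⟨h t ht, ?_⟩
                simp only [Set.mem_insert_iff, Set.mem_singleton_iff]
                push_neg
                rw [SimpleGraph.mem_edgeSet] at he
                constructor
                · rintro rfl
                  rcases Sym2.mem_iff.mp ht with rfl | rfl
                  · have hw : w ∈ G.neighborSet t := he
                    rw [hnbq] at hw
                    rcases hw with rfl | hw
                    · exact hmem (by rw [Sym2.eq_swap, hE]; exact Set.mem_insert _ _)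
                    · rcases hw with rfl
                      exact hmem (by rw [hE]; right; left; exact rfl)
                  · have hw : u ∈ G.neighborSet t := he.symm
                    rw [hnbq] at hw
                    rcases hw with rfl | hw
                    · exact hmem (by rw [hE]; exact Set.mem_insert _ _)
                    · rcases hw with rfl
                      exact hmem (by rw [Sym2.eq_swap, hE]; right; left; exact rfl)
                · rintro rfl
                  rcases Sym2.mem_iff.mp ht with rfl | rfl
                  · have hw : w ∈ G.neighborSet t := he
                    rw [hnbr] at hw
                    rcases hw with rfl | hw
                    · exact hmem (by rw [Sym2.eq_swap, hE]; right; right; exact rfl)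
                    · rcases hw with rfl
                      exact hmem (by rw [Sym2.eq_swap, hE]; right; left; exact rfl)
                  · have hw : u ∈ G.neighborSet t := he.symm
                    rw [hnbr] at hw
                    rcases hw with rfl | hw
                    · exact hmem (by rw [hE]; right; right; exact rfl)
                    · rcases hw with rfl
                      exact hmem (by rw [hE]; right; left; exact rfl)
        · exact ⟨a₁, a₂, ha12, Or.inl ha1A, Or.inl ha2A, adjG hva1, adjG hva2, hca⟩
        · refine ⟨b₁, b₂, hb12, ⟨hb1B, ?_⟩, ⟨hb2B, ?_⟩, adjG hvb1, adjG hvb2, hcb⟩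
          · simp only [Set.mem_insert_iff, Set.mem_singleton_iff]
            push_neg
            constructor
            · rintro rfl; exact vdeg_ne_zero hvb1.symm hdq0
            · rintro rfl; exact vdeg_ne_zero hvb1.symm hdr0
          · simp only [Set.mem_insert_iff, Set.mem_singleton_iff]
            push_neg
            constructor
            · rintro rfl; exact vdeg_ne_zero hvb2.symm hdq0
            · rintro rfl; exact vdeg_ne_zero hvb2.symm hdr0
      · -- p and r have degree 4 : contradiction via cross44 with triangle (p, r, q)
        exact cross44 H5 Hcd4 hle hpr hqr.symm hpq
          (by rw [cswap c r q]; exact hc2.symm) hc3.symm hEprq hp4 hr4 hI hEdges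
          hpA hrB hpv hrv hqv ha12 ha1A ha2A hva1 hva2 hca hb12 hb1B hb2B hvb1 hvb2 hcb
    · -- p and q have degree 4 : contradiction via cross44
      exact cross44 H5 Hcd4 hle hpq hqr hpr hc1 hc3 hE hp4 hq4 hI hEdges
        hpA hqB hpv hqv hrv ha12 ha1A ha2A hva1 hva2 hca hb12 hb1B hb2B hvb1 hvb2 hcb
end Part5
section Part6
variable {V C : Type*} [Fintype V] [DecidableEq V] {G : SimpleGraph V} {c : Sym2 V → C}
variable {p q r : V} {E₃ : Set (Sym2 V)}

lemma two_colors
    (H5 : ∀ α : C, {w : V | ∃ u, G.Adj w u ∧ c s(w,u) = α}.ncard ≤ 3)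
    (hpq : G.Adj p q) (hpr : G.Adj p r)
    (hc3 : c s(p,q) ≠ c s(p,r)) (Hcd : colorDeg G c p = 2)
    {w₁ w₂ : V} (hw12 : w₁ ≠ w₂) (h1q : w₁ ≠ q) (h1r : w₁ ≠ r) (h2q : w₂ ≠ q) (h2r : w₂ ≠ r)
    (ha1 : G.Adj p w₁) (ha2 : G.Adj p w₂) : c s(p,w₁) ≠ c s(p,w₂) := by
  intro heq
  rcases color_mem hpq hpr hc3 Hcd ha1 with h | h
  · exact four_le_span (H5 (c s(p,q)))
      (mem_span_left hpq rfl) (mem_span_right hpq rfl)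
      (mem_span_right ha1 h) (mem_span_right ha2 (heq ▸ h))
      hpq.ne ha1.ne ha2.ne (fun e => h1q e.symm) (fun e => h2q e.symm) hw12
  · exact four_le_span (H5 (c s(p,r)))
      (mem_span_left hpr rfl) (mem_span_right hpr rfl)
      (mem_span_right ha1 h) (mem_span_right ha2 (heq ▸ h))
      hpr.ne ha1.ne ha2.ne (fun e => h1r e.symm) (fun e => h2r e.symm) hw12

lemma colorDeg_p
    (H5 : ∀ α : C, {w : V | ∃ u, G.Adj w u ∧ c s(w,u) = α}.ncard ≤ 3)
    (heven : ∀ w, Even (vdeg G w)) (hle : ∀ w, vdeg G w ≤ 4)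
    (Hcd : colorDeg G c p = 2)
    (hpq : G.Adj p q) (hqr : G.Adj q r) (hpr : G.Adj p r)
    (hc3 : c s(p,q) ≠ c s(p,r))
    (hE : E₃ = {s(p,q), s(q,r), s(p,r)})
    (h0 : vdeg (G.deleteEdges E₃) p ≠ 0) :
    colorDeg (G.deleteEdges E₃) c p = 2 := by
  have hdp := vdeg_p hE hpq hqr hpr
  have h4 : vdeg G p = 4 := by
    rcases deg_tri heven hle hpq with h | h
    · rw [hdp, h] at h0; omega
    · exact h
  obtain ⟨w₁, w₂, hw12, h1q, h1r, h2q, h2r, ha1, ha2, hset⟩ := nbr4 hpq hpr hqr.ne h4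
  have hset' : (G.deleteEdges E₃).neighborSet p = {w₁, w₂} := by
    rw [nbr_p hE hpq hqr hpr, hset]
    ext u
    simp only [Set.mem_diff, Set.mem_insert_iff, Set.mem_singleton_iff]
    constructor
    · rintro ⟨h | h | h | h, hn⟩ <;> tauto
    · rintro (rfl | rfl) <;> exact ⟨by tauto, by tauto⟩
  have hadj1 : (G.deleteEdges E₃).Adj p w₁ := by
    have : w₁ ∈ (G.deleteEdges E₃).neighborSet p := by rw [hset']; exact Or.inl rfl
    exact this
  have hadj2 : (G.deleteEdges E₃).Adj p w₂ := by
    have : w₂ ∈ (G.deleteEdges E₃).neighborSet p := by rw [hset']; exact Or.inr rfl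
    exact this
  have htc := two_colors H5 hpq hpr hc3 Hcd hw12 h1q h1r h2q h2r ha1 ha2
  have hcset : {α : C | ∃ u, (G.deleteEdges E₃).Adj p u ∧ c s(p,u) = α} =
      {c s(p,w₁), c s(p,w₂)} := by
    ext α
    simp only [Set.mem_setOf_eq, Set.mem_insert_iff, Set.mem_singleton_iff]
    constructor
    · rintro ⟨u, hu, rfl⟩
      have : u ∈ (G.deleteEdges E₃).neighborSet p := hu
      rw [hset'] at this
      rcases this with rfl | this
      · exact Or.inl rfl
      · rcases this with rfl
        exact Or.inr rfl
    · rintro (rfl | rfl)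
      · exact ⟨w₁, hadj1, rfl⟩
      · exact ⟨w₂, hadj2, rfl⟩
  rw [colorDeg, hcset, Set.ncard_pair htc]

lemma typeX_pure
    (HnoX : ∀ u, ¬ IsTypeX G c u)
    (hpq : G.Adj p q) (hqr : G.Adj q r) (hpr : G.Adj p r)
    (hle : ∀ w, vdeg G w ≤ 4)
    (hE : E₃ = {s(p,q), s(q,r), s(p,r)})
    {v : V} {A B : Set V}
    (hdeg4' : vdeg (G.deleteEdges E₃) v = 4)
    (hU : A ∪ B = Set.univ) (hI : A ∩ B = {v})
    (hEdges : ∀ e ∈ (G.deleteEdges E₃).edgeSet, (∀ x ∈ e, x ∈ A) ∨ (∀ x ∈ e, x ∈ B))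
    (hA : ∃ a₁ a₂ : V, a₁ ≠ a₂ ∧ a₁ ∈ A ∧ a₂ ∈ A ∧ (G.deleteEdges E₃).Adj v a₁ ∧
      (G.deleteEdges E₃).Adj v a₂ ∧ c s(v,a₁) = c s(v,a₂))
    (hB : ∃ b₁ b₂ : V, b₁ ≠ b₂ ∧ b₁ ∈ B ∧ b₂ ∈ B ∧ (G.deleteEdges E₃).Adj v b₁ ∧
      (G.deleteEdges E₃).Adj v b₂ ∧ c s(v,b₁) = c s(v,b₂))
    (hside : (p ∈ A ∧ q ∈ A ∧ r ∈ A) ∨ (p ∈ B ∧ q ∈ B ∧ r ∈ B)) : False := by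
  obtain ⟨hEq, hEr, -, -, -⟩ := tripleE_perm hE
  obtain ⟨a₁, a₂, ha12, ha1A, ha2A, hva1, hva2, hca⟩ := hA
  obtain ⟨b₁, b₂, hb12, hb1B, hb2B, hvb1, hvb2, hcb⟩ := hB
  have adjG : ∀ {i j : V}, (G.deleteEdges E₃).Adj i j → G.Adj i j :=
    fun h => ((SimpleGraph.deleteEdges_adj ..).mp h).1
  have hdp := vdeg_p hE hpq hqr hpr
  have hdq := vdeg_p hEq hpq.symm hpr hqr
  have hdr := vdeg_p hEr hpr.symm hpq hqr.symm
  have hpv : p ≠ v := by intro h; rw [← h] at hdeg4'; have := hle p; omega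
  have hqv : q ≠ v := by intro h; rw [← h] at hdeg4'; have := hle q; omega
  have hrv : r ≠ v := by intro h; rw [← h] at hdeg4'; have := hle r; omega
  have hvdegv : vdeg G v = 4 := by
    rw [← vdeg_other hE hpv.symm hqv.symm hrv.symm]; exact hdeg4'
  refine HnoX v ⟨hvdegv, A, B, hU, hI, ?_,
    ⟨a₁, a₂, ha12, ha1A, ha2A, adjG hva1, adjG hva2, hca⟩,
    ⟨b₁, b₂, hb12, hb1B, hb2B, adjG hvb1, adjG hvb2, hcb⟩⟩
  intro e he
  induction e using Sym2.ind with
  | _ u w =>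
    by_cases hmem : s(u,w) ∈ E₃
    · rcases hside with ⟨h1, h2, h3⟩ | ⟨h1, h2, h3⟩
      · left
        intro t ht
        rcases mem_of_mem_tripleE hE hmem ht with rfl | rfl | rfl <;> assumption
      · right
        intro t ht
        rcases mem_of_mem_tripleE hE hmem ht with rfl | rfl | rfl <;> assumption
    · exact hEdges s(u,w) (by
        rw [SimpleGraph.mem_edgeSet] at he ⊢
        rw [SimpleGraph.deleteEdges_adj]
        exact ⟨he, hmem⟩)
end Part6
section Part7
variable {V C : Type*} [Fintype V] [DecidableEq V] {G : SimpleGraph V} {c : Sym2 V → C}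
variable {p q r : V} {E₃ : Set (Sym2 V)}

lemma reach_tri
    (H5 : ∀ α : C, {w : V | ∃ u, G.Adj w u ∧ c s(w,u) = α}.ncard ≤ 3)
    (Hcd4 : ∀ w, vdeg G w = 4 → colorDeg G c w = 2)
    (hpq : G.Adj p q) (hqr : G.Adj q r) (hpr : G.Adj p r)
    (hc1 : c s(p,q) ≠ c s(q,r)) (hc3 : c s(p,q) ≠ c s(p,r))
    (hE : E₃ = {s(p,q), s(q,r), s(p,r)})
    (h4p : vdeg G p = 4) (h4q : vdeg G q = 4) :
    (G.deleteEdges E₃).Reachable p q := by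
  obtain ⟨w, hpw, hqw, hwp, hwq, hwr, -, -⟩ :=
    shared H5 hpq hqr hpr hc1 hc3 h4p h4q (Hcd4 p h4p) (Hcd4 q h4q)
  have h1 : (G.deleteEdges E₃).Adj p w := by
    rw [SimpleGraph.deleteEdges_adj]
    exact ⟨hpw, by rw [Sym2.eq_swap]; exact notMem_tripleE hE hwp hwq hwr⟩
  have h2 : (G.deleteEdges E₃).Adj q w := by
    rw [SimpleGraph.deleteEdges_adj]
    exact ⟨hqw, by rw [Sym2.eq_swap]; exact notMem_tripleE hE hwp hwq hwr⟩
  exact h1.reachable.trans h2.reachable.symm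

lemma walk_transfer
    (H5 : ∀ α : C, {w : V | ∃ u, G.Adj w u ∧ c s(w,u) = α}.ncard ≤ 3)
    (Hcd4 : ∀ w, vdeg G w = 4 → colorDeg G c w = 2)
    (heven : ∀ w, Even (vdeg G w)) (hle : ∀ w, vdeg G w ≤ 4)
    (hpq : G.Adj p q) (hqr : G.Adj q r) (hpr : G.Adj p r)
    (hc1 : c s(p,q) ≠ c s(q,r)) (hc2 : c s(q,r) ≠ c s(p,r)) (hc3 : c s(p,q) ≠ c s(p,r))
    (hE : E₃ = {s(p,q), s(q,r), s(p,r)}) :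
    ∀ n (a b : V) (w : G.Walk a b), w.length ≤ n →
      vdeg (G.deleteEdges E₃) a ≠ 0 → vdeg (G.deleteEdges E₃) b ≠ 0 →
      (G.deleteEdges E₃).Reachable a b := by
  obtain ⟨hEq, hEr, hEprq, hEqrp, hErq⟩ := tripleE_perm hE
  have h4 : ∀ s, (s = p ∨ s = q ∨ s = r) → vdeg (G.deleteEdges E₃) s ≠ 0 → vdeg G s = 4 := by
    rintro s (rfl | rfl | rfl) h0
    · have hd := vdeg_p hE hpq hqr hpr
      rcases deg_tri heven hle hpq with h | h
      · rw [hd, h] at h0; omega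
      · exact h
    · have hd := vdeg_p hEq hpq.symm hpr hqr
      rcases deg_tri heven hle hqr with h | h
      · rw [hd, h] at h0; omega
      · exact h
    · have hd := vdeg_p hEr hpr.symm hpq hqr.symm
      rcases deg_tri heven hle hpr.symm with h | h
      · rw [hd, h] at h0; omega
      · exact h
  have T : ∀ s t : V, (s = p ∨ s = q ∨ s = r) → (t = p ∨ t = q ∨ t = r) →
      vdeg (G.deleteEdges E₃) s ≠ 0 → vdeg (G.deleteEdges E₃) t ≠ 0 →
      (G.deleteEdges E₃).Reachable s t := by
    have hpq' : (G.deleteEdges E₃).Reachable p q → True := fun _ => trivial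
    intro s t hs ht hs0 ht0
    have h4s := h4 s hs hs0
    have h4t := h4 t ht ht0
    rcases hs with h | h | h <;> rcases ht with h' | h' | h' <;>
      rw [h] at h4s <;> rw [h'] at h4t <;> rw [h, h']
    · exact reach_tri H5 Hcd4 hpq hqr hpr hc1 hc3 hE h4s h4t
    · exact reach_tri H5 Hcd4 hpr hqr.symm hpq
        (by rw [cswap c r q]; exact hc2.symm) hc3.symm hEprq h4s h4t
    · exact (reach_tri H5 Hcd4 hpq hqr hpr hc1 hc3 hE h4t h4s).symm
    · exact reach_tri H5 Hcd4 hqr hpr.symm hpq.symm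
        (by rw [cswap c r p]; exact hc2) (by rw [cswap c q p]; exact hc1.symm) hEqrp h4s h4t
    · exact (reach_tri H5 Hcd4 hpr hqr.symm hpq
        (by rw [cswap c r q]; exact hc2.symm) hc3.symm hEprq h4t h4s).symm
    · exact (reach_tri H5 Hcd4 hqr hpr.symm hpq.symm
        (by rw [cswap c r p]; exact hc2) (by rw [cswap c q p]; exact hc1.symm) hEqrp h4t h4s).symm
  have tadj : ∀ s t : V, (s = p ∨ s = q ∨ s = r) → (t = p ∨ t = q ∨ t = r) → s ≠ t →
      G.Adj s t := by
    intro s t hs ht hst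
    rcases hs with h | h | h <;> rcases ht with h' | h' | h' <;> rw [h, h'] at hst ⊢
    exacts [absurd rfl hst, hpq, hpr, hpq.symm, absurd rfl hst, hqr, hpr.symm, hqr.symm,
      absurd rfl hst]
  have hnbtri : ∀ s, (s = p ∨ s = q ∨ s = r) → vdeg (G.deleteEdges E₃) s = 0 →
      ∀ t, G.Adj s t → (t = p ∨ t = q ∨ t = r) := by
    intro s hs h0 t hadj
    rcases hs with h | h | h <;> rw [h] at h0 hadj
    · have hd := vdeg_p hE hpq hqr hpr
      have hdeg : vdeg G p = 2 := by
        rcases deg_tri heven hle hpq with h | h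
        · exact h
        · rw [hd, h] at h0; omega
      have hm : t ∈ G.neighborSet p := hadj
      rw [nbr2 hpq hpr hqr.ne hdeg] at hm
      rcases hm with rfl | hm
      · exact Or.inr (Or.inl rfl)
      · rcases hm with rfl
        exact Or.inr (Or.inr rfl)
    · have hd := vdeg_p hEq hpq.symm hpr hqr
      have hdeg : vdeg G q = 2 := by
        rcases deg_tri heven hle hqr with h | h
        · exact h
        · rw [hd, h] at h0; omega
      have hm : t ∈ G.neighborSet q := hadj
      rw [nbr2 hpq.symm hqr hpr.ne hdeg] at hm
      rcases hm with rfl | hm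
      · exact Or.inl rfl
      · rcases hm with rfl
        exact Or.inr (Or.inr rfl)
    · have hd := vdeg_p hEr hpr.symm hpq hqr.symm
      have hdeg : vdeg G r = 2 := by
        rcases deg_tri heven hle hpr.symm with h | h
        · exact h
        · rw [hd, h] at h0; omega
      have hm : t ∈ G.neighborSet r := hadj
      rw [nbr2 hpr.symm hqr.symm hpq.ne hdeg] at hm
      rcases hm with rfl | hm
      · exact Or.inl rfl
      · rcases hm with rfl
        exact Or.inr (Or.inl rfl)
  intro n
  induction n with
  | zero =>
    intro a b w hlen ha hb
    cases w with
    | nil => exact SimpleGraph.Reachable.refl _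
    | cons h w' => simp [SimpleGraph.Walk.length_cons] at hlen
  | succ n IH =>
    intro a b w hlen ha hb
    cases w with
    | nil => exact SimpleGraph.Reachable.refl _
    | @cons _ u _ h w' =>
      rw [SimpleGraph.Walk.length_cons] at hlen
      by_cases hmem : s(a, u) ∈ E₃
      · have hatri : a = p ∨ a = q ∨ a = r :=
          mem_of_mem_tripleE hE hmem (Sym2.mem_mk_left a u)
        have hutri : u = p ∨ u = q ∨ u = r :=
          mem_of_mem_tripleE hE hmem (Sym2.mem_mk_right a u)
        by_cases hu0 : vdeg (G.deleteEdges E₃) u = 0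
        · cases w' with
          | nil => exact absurd hu0 hb
          | @cons _ u₂ _ h2 w'' =>
            rw [SimpleGraph.Walk.length_cons] at hlen
            have hu2tri : u₂ = p ∨ u₂ = q ∨ u₂ = r := hnbtri u hutri hu0 u₂ h2
            by_cases hau2 : a = u₂
            · subst hau2
              exact IH a b w'' (by omega) ha hb
            · exact IH a b (SimpleGraph.Walk.cons (tadj a u₂ hatri hu2tri hau2) w'')
                (by rw [SimpleGraph.Walk.length_cons]; omega) ha hb
        · exact (T a u hatri hutri ha hu0).trans (IH u b w' (by omega) hu0 hb)
      · have hadj' : (G.deleteEdges E₃).Adj a u := by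
          rw [SimpleGraph.deleteEdges_adj]
          exact ⟨h, hmem⟩
        exact hadj'.reachable.trans
          (IH u b w' (by omega) (vdeg_ne_zero hadj'.symm) hb)

lemma conn_transfer
    (H5 : ∀ α : C, {w : V | ∃ u, G.Adj w u ∧ c s(w,u) = α}.ncard ≤ 3)
    (Hcd4 : ∀ w, vdeg G w = 4 → colorDeg G c w = 2)
    (heven : ∀ w, Even (vdeg G w)) (hle : ∀ w, vdeg G w ≤ 4)
    (hpq : G.Adj p q) (hqr : G.Adj q r) (hpr : G.Adj p r)
    (hc1 : c s(p,q) ≠ c s(q,r)) (hc2 : c s(q,r) ≠ c s(p,r)) (hc3 : c s(p,q) ≠ c s(p,r))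
    (hE : E₃ = {s(p,q), s(q,r), s(p,r)})
    (Hconn : ConnUpToIso G) : ConnUpToIso (G.deleteEdges E₃) := by
  intro a b ha hb
  have hsub : ∀ t : V, (G.deleteEdges E₃).neighborSet t ⊆ G.neighborSet t :=
    fun t u h => ((SimpleGraph.deleteEdges_adj ..).mp h).1
  have hG : ∀ t : V, vdeg (G.deleteEdges E₃) t ≠ 0 → vdeg G t ≠ 0 := by
    intro t ht h0
    apply ht
    have : (G.deleteEdges E₃).neighborSet t = ∅ :=
      Set.subset_eq_empty (hsub t) ((Set.ncard_eq_zero (Set.toFinite _)).mp h0)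
    rw [vdeg, this, Set.ncard_empty]
  obtain ⟨wk⟩ := Hconn a b (hG a ha) (hG b hb)
  exact walk_transfer H5 Hcd4 heven hle hpq hqr hpr hc1 hc2 hc3 hE
    wk.length a b wk le_rfl ha hb
end Part7
section Part8
variable {V C : Type*} [Fintype V] [DecidableEq V] {G : SimpleGraph V} {c : Sym2 V → C}
variable {p q r : V} {E₃ : Set (Sym2 V)}

lemma two_le_colorDeg (hpq : G.Adj p q) (hpr : G.Adj p r)
    (hc3 : c s(p,q) ≠ c s(p,r)) : 2 ≤ colorDeg G c p := by
  have hfin : {α : C | ∃ u, G.Adj p u ∧ c s(p,u) = α}.Finite := by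
    have h : {α : C | ∃ u, G.Adj p u ∧ c s(p,u) = α} =
        (fun u => c s(p,u)) '' (G.neighborSet p) := by
      ext α
      simp only [Set.mem_setOf_eq, Set.mem_image, SimpleGraph.mem_neighborSet]
    rw [h]
    exact (Set.toFinite _).image _
  have hsub : ({c s(p,q), c s(p,r)} : Set C) ⊆ {α : C | ∃ u, G.Adj p u ∧ c s(p,u) = α} := by
    intro α hα
    rcases hα with rfl | hα
    · exact ⟨q, hpq, rfl⟩
    · rcases hα with rfl
      exact ⟨r, hpr, rfl⟩
  calc 2 = ({c s(p,q), c s(p,r)} : Set C).ncard := (Set.ncard_pair hc3).symm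
    _ ≤ _ := Set.ncard_le_ncard hsub hfin
end Part8

/-- If `G` is a good (respectively almost-good) colored graph and `x y z` is a rainbow
triangle in `G`, then the graph obtained by deleting the three edges of the triangle is
good (respectively almost-good). -/
theorem deleteRainbowTriangle_good_or_almostGood {V C : Type*} [Fintype V] [DecidableEq V]
    (G : SimpleGraph V) (c : Sym2 V → C)
    (x y z : V) (hxy : G.Adj x y) (hyz : G.Adj y z) (hxz : G.Adj x z)
    (h1 : c s(x, y) ≠ c s(y, z)) (h2 : c s(y, z) ≠ c s(x, z)) (h3 : c s(x, y) ≠ c s(x, z)) :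
    (IsGood G c → IsGood (G.deleteEdges {s(x, y), s(y, z), s(x, z)}) c) ∧
      (IsAlmostGood G c → IsAlmostGood (G.deleteEdges {s(x, y), s(y, z), s(x, z)}) c) := by
  set E : Set (Sym2 V) := {s(x, y), s(y, z), s(x, z)} with hEdef
  have hE : E = {s(x, y), s(y, z), s(x, z)} := rfl
  obtain ⟨hEq, hEr, -, -, -⟩ := tripleE_perm hE
  have hdx := vdeg_p hE hxy hyz hxz
  have hdy := vdeg_p hEq hxy.symm hxz hyz
  have hdz := vdeg_p hEr hxz.symm hxy hyz.symm
  have adjG : ∀ {i j : V}, (G.deleteEdges E).Adj i j → G.Adj i j :=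
    fun h => ((SimpleGraph.deleteEdges_adj ..).mp h).1
  have hmono : ∀ w, vdeg (G.deleteEdges E) w ≤ vdeg G w := fun w =>
    Set.ncard_le_ncard (fun u h => adjG h) (Set.toFinite _)
  -- color inequalities for the permuted triangles
  have cyx1 : c s(y,x) ≠ c s(x,z) := by rw [cswap c y x]; exact h3
  have cyx2 : c s(x,z) ≠ c s(y,z) := h2.symm
  have cyx3 : c s(y,x) ≠ c s(y,z) := by rw [cswap c y x]; exact h1
  have czx1 : c s(z,x) ≠ c s(x,y) := by rw [cswap c z x]; exact h3.symm
  have czx2 : c s(x,y) ≠ c s(z,y) := by rw [cswap c z y]; exact h1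
  have czx3 : c s(z,x) ≠ c s(z,y) := by rw [cswap c z x, cswap c z y]; exact h2.symm
  -- parts depending on hypotheses
  have partEven : (∀ w, Even (vdeg G w)) → (∀ w, vdeg G w ≤ 4) →
      ∀ w, Even (vdeg (G.deleteEdges E) w) := by
    intro heven hle w
    by_cases hwx : w = x
    · subst hwx
      rw [hdx]
      rcases deg_tri heven hle hxy with h | h <;> rw [h] <;> norm_num
    by_cases hwy : w = y
    · subst hwy
      rw [hdy]
      rcases deg_tri heven hle hxy.symm with h | h <;> rw [h] <;> norm_num
    by_cases hwz : w = z
    · subst hwz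
      rw [hdz]
      rcases deg_tri heven hle hxz.symm with h | h <;> rw [h] <;> norm_num
    rw [vdeg_other hE hwx hwy hwz]
    exact heven w
  have partTri : TriCond G c → TriCond (G.deleteEdges E) c := by
    intro htri a b d hab hbd had
    exact htri a b d (adjG hab) (adjG hbd) (adjG had)
  have part5 : (∀ α : C, {w : V | ∃ u, G.Adj w u ∧ c s(w,u) = α}.ncard ≤ 3) →
      ∀ α : C, {w : V | ∃ u, (G.deleteEdges E).Adj w u ∧ c s(w,u) = α}.ncard ≤ 3 := by
    intro H5 α
    refine le_trans (Set.ncard_le_ncard ?_ (Set.toFinite _)) (H5 α)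
    rintro w ⟨u, hu, hc⟩
    exact ⟨u, adjG hu, hc⟩
  have partNoX : (∀ α : C, {w : V | ∃ u, G.Adj w u ∧ c s(w,u) = α}.ncard ≤ 3) →
      (∀ w, vdeg G w = 4 → colorDeg G c w = 2) →
      (∀ w, Even (vdeg G w)) → (∀ w, vdeg G w ≤ 4) →
      (∀ v, ¬ IsTypeX G c v) → ∀ v, ¬ IsTypeX (G.deleteEdges E) c v := by
    rintro H5 Hcd4 heven hle HnoX v ⟨hdeg4', A, B, hU, hI, hEdges, hA, hB⟩
    have hmemx : x ∈ A ∨ x ∈ B := by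
      have : x ∈ A ∪ B := by rw [hU]; trivial
      exact this
    have hmemy : y ∈ A ∨ y ∈ B := by
      have : y ∈ A ∪ B := by rw [hU]; trivial
      exact this
    have hmemz : z ∈ A ∨ z ∈ B := by
      have : z ∈ A ∪ B := by rw [hU]; trivial
      exact this
    have hU' : B ∪ A = Set.univ := by rw [Set.union_comm]; exact hU
    have hI' : B ∩ A = {v} := by rw [Set.inter_comm]; exact hI
    have hEdges' : ∀ e ∈ (G.deleteEdges E).edgeSet, (∀ t ∈ e, t ∈ B) ∨ (∀ t ∈ e, t ∈ A) :=
      fun e he => (hEdges e he).symm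
    rcases hmemx with hx | hx <;> rcases hmemy with hy | hy <;> rcases hmemz with hz | hz
    · exact typeX_pure HnoX hxy hyz hxz hle hE hdeg4' hU hI hEdges hA hB (Or.inl ⟨hx, hy, hz⟩)
    · exact typeX_free H5 Hcd4 heven hle HnoX hxz.symm hxy hyz.symm czx1 czx2 czx3 hEr
        hdeg4' hU' hI' hEdges' hB hA hz hx hy
    · exact typeX_free H5 Hcd4 heven hle HnoX hxy.symm hxz hyz cyx1 cyx2 cyx3 hEq
        hdeg4' hU' hI' hEdges' hB hA hy hx hz
    · exact typeX_free H5 Hcd4 heven hle HnoX hxy hyz hxz h1 h2 h3 hE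
        hdeg4' hU hI hEdges hA hB hx hy hz
    · exact typeX_free H5 Hcd4 heven hle HnoX hxy hyz hxz h1 h2 h3 hE
        hdeg4' hU' hI' hEdges' hB hA hx hy hz
    · exact typeX_free H5 Hcd4 heven hle HnoX hxy.symm hxz hyz cyx1 cyx2 cyx3 hEq
        hdeg4' hU hI hEdges hA hB hy hx hz
    · exact typeX_free H5 Hcd4 heven hle HnoX hxz.symm hxy hyz.symm czx1 czx2 czx3 hEr
        hdeg4' hU hI hEdges hA hB hz hx hy
    · exact typeX_pure HnoX hxy hyz hxz hle hE hdeg4' hU hI hEdges hA hB (Or.inr ⟨hx, hy, hz⟩)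
  have partCdTri : (∀ α : C, {w : V | ∃ u, G.Adj w u ∧ c s(w,u) = α}.ncard ≤ 3) →
      (∀ w, Even (vdeg G w)) → (∀ w, vdeg G w ≤ 4) →
      (colorDeg G c x = 2) → (colorDeg G c y = 2) → (colorDeg G c z = 2) →
      ∀ w, (w = x ∨ w = y ∨ w = z) → vdeg (G.deleteEdges E) w ≠ 0 →
        colorDeg (G.deleteEdges E) c w = 2 := by
    intro H5 heven hle hcx hcy hcz w hw h0
    rcases hw with h | h | h <;> rw [h] at h0 ⊢
    · exact colorDeg_p H5 heven hle hcx hxy hyz hxz h3 hE h0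
    · exact colorDeg_p H5 heven hle hcy hxy.symm hxz hyz cyx3 hEq h0
    · exact colorDeg_p H5 heven hle hcz hxz.symm hxy hyz.symm czx3 hEr h0
  constructor
  · -- good case
    rintro ⟨⟨heven, hle, htri, hcd, H5⟩, HnoX⟩
    have Hcd4 : ∀ w, vdeg G w = 4 → colorDeg G c w = 2 := fun w h4 => hcd w (by omega)
    refine ⟨⟨partEven heven hle, fun w => le_trans (hmono w) (hle w), partTri htri, ?_,
      part5 H5⟩, partNoX H5 Hcd4 heven hle HnoX⟩
    intro w h0
    by_cases hwx : w = x
    · exact partCdTri H5 heven hle (hcd x (vdeg_ne_zero hxy)) (hcd y (vdeg_ne_zero hxy.symm))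
        (hcd z (vdeg_ne_zero hyz.symm)) w (Or.inl hwx) h0
    by_cases hwy : w = y
    · exact partCdTri H5 heven hle (hcd x (vdeg_ne_zero hxy)) (hcd y (vdeg_ne_zero hxy.symm))
        (hcd z (vdeg_ne_zero hyz.symm)) w (Or.inr (Or.inl hwy)) h0
    by_cases hwz : w = z
    · exact partCdTri H5 heven hle (hcd x (vdeg_ne_zero hxy)) (hcd y (vdeg_ne_zero hxy.symm))
        (hcd z (vdeg_ne_zero hyz.symm)) w (Or.inr (Or.inr hwz)) h0
    rw [colorDeg_other hE hwx hwy hwz]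
    apply hcd
    rw [← vdeg_other hE hwx hwy hwz]
    exact h0
  · -- almost-good case
    rintro ⟨hconn, heven, hle, htri, hex, hcd1deg, hcd12, H5, HnoX⟩
    have Hcd4 : ∀ w, vdeg G w = 4 → colorDeg G c w = 2 := by
      intro w h4
      rcases hcd12 w (by omega) with h | h
      · have := hcd1deg w (by omega) h
        omega
      · exact h
    have hcx : colorDeg G c x = 2 := by
      have h2le := two_le_colorDeg hxy hxz h3
      rcases hcd12 x (vdeg_ne_zero hxy) with h | h
      · omega
      · exact h
    have hcy : colorDeg G c y = 2 := by
      have h2le := two_le_colorDeg hxy.symm hyz cyx3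
      rcases hcd12 y (vdeg_ne_zero hxy.symm) with h | h
      · omega
      · exact h
    have hcz : colorDeg G c z = 2 := by
      have h2le := two_le_colorDeg hxz.symm hyz.symm czx3
      rcases hcd12 z (vdeg_ne_zero hyz.symm) with h | h
      · omega
      · exact h
    obtain ⟨s, ⟨hs0, hs1⟩, huniq⟩ := hex
    have hsx : s ≠ x := by intro h; rw [h, hcx] at hs1; omega
    have hsy : s ≠ y := by intro h; rw [h, hcy] at hs1; omega
    have hsz : s ≠ z := by intro h; rw [h, hcz] at hs1; omega
    have hs0' : vdeg (G.deleteEdges E) s ≠ 0 := by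
      rw [vdeg_other hE hsx hsy hsz]; exact hs0
    have hs1' : colorDeg (G.deleteEdges E) c s = 1 := by
      rw [colorDeg_other hE hsx hsy hsz]; exact hs1
    refine ⟨conn_transfer H5 Hcd4 heven hle hxy hyz hxz h1 h2 h3 hE hconn,
      partEven heven hle, fun w => le_trans (hmono w) (hle w), partTri htri,
      ⟨s, ⟨hs0', hs1'⟩, ?_⟩, ?_, ?_, part5 H5, partNoX H5 Hcd4 heven hle HnoX⟩
    · rintro w ⟨hw0, hw1⟩
      by_cases hwtri : w = x ∨ w = y ∨ w = z
      · have := partCdTri H5 heven hle hcx hcy hcz w hwtri hw0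
        omega
      · push_neg at hwtri
        apply huniq
        rw [← vdeg_other hE hwtri.1 hwtri.2.1 hwtri.2.2,
          ← colorDeg_other hE hwtri.1 hwtri.2.1 hwtri.2.2]
        exact ⟨hw0, hw1⟩
    · intro w hw0 hw1
      by_cases hwtri : w = x ∨ w = y ∨ w = z
      · have := partCdTri H5 heven hle hcx hcy hcz w hwtri hw0
        omega
      · push_neg at hwtri
        have hww : w = s := by
          apply huniq
          rw [← vdeg_other hE hwtri.1 hwtri.2.1 hwtri.2.2,
            ← colorDeg_other hE hwtri.1 hwtri.2.1 hwtri.2.2]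
          exact ⟨hw0, hw1⟩
        rw [vdeg_other hE hwtri.1 hwtri.2.1 hwtri.2.2]
        apply hcd1deg w
        · rw [← vdeg_other hE hwtri.1 hwtri.2.1 hwtri.2.2]; exact hw0
        · rw [← colorDeg_other hE hwtri.1 hwtri.2.1 hwtri.2.2]; exact hw1
    · intro w hw0
      by_cases hwtri : w = x ∨ w = y ∨ w = z
      · exact Or.inr (partCdTri H5 heven hle hcx hcy hcz w hwtri hw0)
      · push_neg at hwtri
        rw [colorDeg_other hE hwtri.1 hwtri.2.1 hwtri.2.2]
        apply hcd12 w
        rw [← vdeg_other hE hwtri.1 hwtri.2.1 hwtri.2.2]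
        exact hw0
end
end
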